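/- arXiv:1308.6497 — 12 statements merged into one kernel-verified Lean document; each statement's English description precedes it below -/
import Mathlib

section
/- Let π be a group and ε : π → ℤ a surjective homomorphism whose kernel is finitely generated. Suppose f : π ≅ HNN(A,B,B',φ) is a splitting of (π, ε) over B with base A. Then B = A and B' = A (that is, both associated subgroups equal the whole base group); in particular φ is an automorphism of A, and f⁻¹ maps the image of the base group A in the HNN extension onto ker ε. -/
/-- The canonical epimorphism `ε₀ : HNN(A,B,B',φ) → ℤ` sending each element of the base
group to `0` and the stable letter `t` to `1`. -/
def canonicalEps {A : Type} [Group A] (B B' : Subgroup A) (φ : B ≃* B') :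
    HNNExtension A B B' φ →* Multiplicative ℤ :=
  HNNExtension.lift 1 (Multiplicative.ofAdd 1) (fun _ => by simp)

namespace HNNAux

/-- prefix sums of a list of units of ℤ, always starting with 0. -/
def sums : List ℤˣ → List ℤ
  | [] => [0]
  | u :: l => 0 :: (sums l).map (fun s => (u : ℤ) + s)

def tsum (l : List ℤˣ) : ℤ := (l.map (fun u => (u : ℤ))).sum

@[simp] lemma tsum_nil : tsum [] = 0 := rfl
@[simp] lemma tsum_cons (u : ℤˣ) (l : List ℤˣ) : tsum (u :: l) = u + tsum l := by
  simp [tsum]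

lemma tsum_append (l₁ l₂ : List ℤˣ) : tsum (l₁ ++ l₂) = tsum l₁ + tsum l₂ := by
  simp [tsum]

lemma zero_mem_sums (l : List ℤˣ) : (0 : ℤ) ∈ sums l := by
  cases l <;> simp [sums]

lemma tsum_mem_sums (l : List ℤˣ) : tsum l ∈ sums l := by
  induction l with
  | nil => simp [sums, tsum]
  | cons u l ih => simp only [sums, tsum_cons, List.mem_cons, List.mem_map]
                   exact Or.inr ⟨tsum l, ih, rfl⟩

lemma mem_sums_append {l₁ l₂ : List ℤˣ} {s : ℤ} (h : s ∈ sums (l₁ ++ l₂)) :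
    s ∈ sums l₁ ∨ ∃ s' ∈ sums l₂, s = tsum l₁ + s' := by
  induction l₁ generalizing s with
  | nil => exact Or.inr ⟨s, h, by simp⟩
  | cons u l ih =>
    simp only [List.cons_append, sums, List.mem_cons, List.mem_map] at h ⊢
    rcases h with rfl | ⟨s', hs', rfl⟩
    · exact Or.inl (Or.inl rfl)
    · rcases ih hs' with h | ⟨s'', hs'', rfl⟩
      · exact Or.inl (Or.inr ⟨s', h, rfl⟩)
      · exact Or.inr ⟨s'', hs'', by rw [tsum_cons]; ring⟩

lemma mem_sums_append_left {l₁ l₂ : List ℤˣ} {s : ℤ} (h : s ∈ sums l₁) :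
    s ∈ sums (l₁ ++ l₂) := by
  induction l₁ generalizing s with
  | nil => simp only [sums, List.mem_singleton] at h; subst h; exact zero_mem_sums _
  | cons u l ih =>
    simp only [List.cons_append, sums, List.mem_cons, List.mem_map] at h ⊢
    rcases h with rfl | ⟨s', hs', rfl⟩
    · exact Or.inl rfl
    · exact Or.inr ⟨s', ih hs', rfl⟩

lemma tsum_reverse (l : List ℤˣ) : tsum l.reverse = tsum l := by
  induction l with
  | nil => rfl
  | cons u l ih => rw [List.reverse_cons, tsum_append, ih, tsum_cons]; simp [tsum]; ring

lemma tsum_map_neg (l : List ℤˣ) : tsum (l.map (fun u => -u)) = -tsum l := by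
  induction l with
  | nil => rfl
  | cons u l ih => rw [List.map_cons, tsum_cons, ih, tsum_cons]; push_cast; ring

lemma mem_sums_reverse_neg {l : List ℤˣ} {s : ℤ}
    (h : s ∈ sums (l.reverse.map (fun u => -u))) :
    ∃ s' ∈ sums l, s = s' - tsum l := by
  induction l generalizing s with
  | nil => exact ⟨s, h, by simp⟩
  | cons u l ih =>
    rw [List.reverse_cons, List.map_append] at h
    rcases mem_sums_append h with h' | ⟨s', hs', rfl⟩
    · rcases ih h' with ⟨s'', hs'', rfl⟩
      refine ⟨(u : ℤ) + s'', ?_, by rw [tsum_cons]; ring⟩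
      simp only [sums, List.mem_cons, List.mem_map]
      exact Or.inr ⟨s'', hs'', rfl⟩
    · have hrev : tsum (l.reverse.map (fun u => -u)) = -tsum l := by
        rw [tsum_map_neg, tsum_reverse]
      rcases (by simpa [sums] using hs' : s' = 0 ∨ s' = -(u:ℤ)) with rfl | rfl
      · refine ⟨(u : ℤ), ?_, by rw [hrev, tsum_cons]; ring⟩
        simp only [sums, List.mem_cons, List.mem_map]
        exact Or.inr ⟨0, zero_mem_sums _, by ring⟩
      · exact ⟨0, zero_mem_sums _, by rw [hrev, tsum_cons]; ring⟩

lemma sums_replicate_one {n : ℕ} {s : ℤ} (h : s ∈ sums (List.replicate n 1)) :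
    0 ≤ s ∧ s ≤ n := by
  induction n generalizing s with
  | zero => simp only [List.replicate, sums, List.mem_singleton] at h; omega
  | succ n ih =>
    simp only [List.replicate, sums, List.mem_cons, List.mem_map] at h
    rcases h with rfl | ⟨s', hs', rfl⟩
    · omega
    · have := ih hs'; push_cast; omega

lemma sums_replicate_neg_one {n : ℕ} {s : ℤ} (h : s ∈ sums (List.replicate n (-1))) :
    -(n : ℤ) ≤ s ∧ s ≤ 0 := by
  induction n generalizing s with
  | zero => simp only [List.replicate, sums, List.mem_singleton] at h; omega
  | succ n ih =>
    simp only [List.replicate, sums, List.mem_cons, List.mem_map] at h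
    rcases h with rfl | ⟨s', hs', rfl⟩
    · omega
    · have := ih hs'; push_cast at *; omega

lemma tsum_map_neg'' (l : List ℤˣ) : tsum (l.reverse.map (fun u => -u)) = -tsum l := by
  rw [tsum_map_neg, tsum_reverse]

set_option linter.unusedSectionVars false

open HNNExtension HNNExtension.NormalWord

variable {G : Type} [Group G] {A B : Subgroup G} (φ : A ≃* B)

def elem : ℤˣ ⊕ G → HNNExtension G A B φ
  | .inl u => t ^ (u : ℤ)
  | .inr g => of g

def wprod (L : List (ℤˣ ⊕ G)) : HNNExtension G A B φ := (L.map (elem φ)).prod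

def units : List (ℤˣ ⊕ G) → List ℤˣ
  | [] => []
  | .inl u :: L => u :: units L
  | .inr _ :: L => units L

@[simp] lemma wprod_nil : wprod φ [] = 1 := rfl
@[simp] lemma wprod_cons (x : ℤˣ ⊕ G) (L : List (ℤˣ ⊕ G)) :
    wprod φ (x :: L) = elem φ x * wprod φ L := by simp [wprod]
lemma wprod_append (L₁ L₂ : List (ℤˣ ⊕ G)) :
    wprod φ (L₁ ++ L₂) = wprod φ L₁ * wprod φ L₂ := by simp [wprod]

@[simp] lemma units_nil : units ([] : List (ℤˣ ⊕ G)) = [] := rfl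
@[simp] lemma units_cons_inl (u : ℤˣ) (L : List (ℤˣ ⊕ G)) :
    units (.inl u :: L) = u :: units L := rfl
@[simp] lemma units_cons_inr (g : G) (L : List (ℤˣ ⊕ G)) :
    units (.inr g :: L) = units L := rfl

lemma units_append (L₁ L₂ : List (ℤˣ ⊕ G)) :
    units (L₁ ++ L₂) = units L₁ ++ units L₂ := by
  induction L₁ with
  | nil => rfl
  | cons x L ih => cases x <;> simp [ih]

def winv (L : List (ℤˣ ⊕ G)) : List (ℤˣ ⊕ G) :=
  (L.map (fun x => match x with | .inl u => .inl (-u) | .inr g => .inr g⁻¹)).reverse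

lemma wprod_winv (L : List (ℤˣ ⊕ G)) : wprod φ (winv L) = (wprod φ L)⁻¹ := by
  induction L with
  | nil => simp [winv]
  | cons x L ih =>
    have : winv (x :: L) = winv L ++
        [(match x with | .inl u => Sum.inl (-u) | .inr g => Sum.inr g⁻¹ : ℤˣ ⊕ G)] := by
      simp [winv]
    rw [this, wprod_append, ih]
    simp only [wprod_cons, wprod_nil, mul_one, mul_inv_rev]
    congr 1
    cases x with
    | inl u => simp [elem, zpow_neg]
    | inr g => simp [elem]

lemma units_winv (L : List (ℤˣ ⊕ G)) :
    units (winv L) = (units L).reverse.map (fun u => -u) := by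
  induction L with
  | nil => rfl
  | cons x L ih =>
    have : winv (x :: L) = winv L ++
        [(match x with | .inl u => Sum.inl (-u) | .inr g => Sum.inr g⁻¹ : ℤˣ ⊕ G)] := by
      simp [winv]
    rw [this, units_append, ih]
    cases x <;> simp

def bddWords (N : ℕ) : Subgroup (HNNExtension G A B φ) where
  carrier := {g | ∃ L : List (ℤˣ ⊕ G), g = wprod φ L ∧ tsum (units L) = 0 ∧
    ∀ s ∈ sums (units L), |s| ≤ N}
  one_mem' := ⟨[], by simp [sums, tsum]⟩
  mul_mem' := by
    rintro a b ⟨L₁, rfl, h₁, hb₁⟩ ⟨L₂, rfl, h₂, hb₂⟩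
    refine ⟨L₁ ++ L₂, (wprod_append φ L₁ L₂).symm, ?_, ?_⟩
    · rw [units_append, tsum_append, h₁, h₂, add_zero]
    · intro s hs
      rw [units_append] at hs
      rcases mem_sums_append hs with h | ⟨s', hs', rfl⟩
      · exact hb₁ s h
      · rw [h₁, zero_add]; exact hb₂ s' hs'
  inv_mem' := by
    rintro a ⟨L, rfl, h, hb⟩
    refine ⟨winv L, (wprod_winv φ L).symm, ?_, ?_⟩
    · rw [units_winv, tsum_map_neg'', h, neg_zero]
    · intro s hs
      rw [units_winv] at hs
      rcases mem_sums_reverse_neg hs with ⟨s', hs', rfl⟩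
      rw [h, sub_zero]
      exact hb s' hs'


lemma tpow_of_tpow (u : ℤˣ) (a : toSubgroup A B u) :
    (t : HNNExtension G A B φ) ^ (u : ℤ) * of (a : G) * t ^ (-(u : ℤ)) =
      of (toSubgroupEquiv φ u a : G) := by
  rcases Int.units_eq_one_or u with rfl | rfl
  · simp
    exact (equiv_eq_conj a).symm
  · simp
    exact (equiv_symm_eq_conj a).symm

lemma exists_reduced (L : List (ℤˣ ⊕ G)) :
    ∃ w : ReducedWord G A B, w.prod φ = wprod φ L ∧
      ∀ s ∈ sums (w.toList.map Prod.fst), s ∈ sums (units L) := by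
  induction L with
  | nil =>
    exact ⟨ReducedWord.empty G A B, by simp [ReducedWord.prod], by simp [sums]⟩
  | cons x L ih =>
    rcases ih with ⟨w', hp, hs⟩
    cases x with
    | inr g =>
      refine ⟨⟨g * w'.head, w'.toList, w'.chain⟩, ?_, hs⟩
      simp only [ReducedWord.prod] at hp ⊢
      rw [wprod_cons, ← hp, map_mul, mul_assoc]
      rfl
    | inl u =>
      rcases hw : w'.toList with _ | ⟨p, rest⟩
      · refine ⟨⟨1, [(u, w'.head)], List.isChain_singleton _⟩, ?_, ?_⟩
        · simp only [ReducedWord.prod, hw] at hp ⊢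
          rw [wprod_cons, ← hp]
          simp [elem, mul_assoc]
        · intro s hsm
          rcases (show s = 0 ∨ s = (u : ℤ) by simpa [sums] using hsm) with rfl | rfl
          · exact zero_mem_sums _
          · simp only [units_cons_inl, sums, List.mem_cons, List.mem_map]
            exact Or.inr ⟨0, zero_mem_sums _, add_zero _⟩
      · by_cases hc : w'.head ∈ toSubgroup A B u ∧ p.1 = -u
        · -- cancellation
          have hchain : (w'.toList).Chain' _ := w'.chain
          rw [hw] at hchain
          refine ⟨⟨(toSubgroupEquiv φ u ⟨w'.head, hc.1⟩ : G) * p.2, rest, hchain.tail⟩, ?_, ?_⟩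
          · simp only [ReducedWord.prod, hw] at hp ⊢
            rw [wprod_cons, ← hp]
            simp only [List.map_cons, List.prod_cons, map_mul, elem]
            rw [← mul_assoc, ← mul_assoc, ← mul_assoc]
            congr 2
            have hp1 : ((p.1 : ℤˣ) : ℤ) = -(u : ℤ) := by rw [hc.2]; push_cast; ring
            rw [hp1]
            exact (tpow_of_tpow φ u ⟨w'.head, hc.1⟩).symm
          · intro s hsm
            have : (p.1 : ℤ) + s ∈ sums (w'.toList.map Prod.fst) := by
              rw [hw]
              simp only [List.map_cons, sums, List.mem_cons, List.mem_map]
              exact Or.inr ⟨s, hsm, rfl⟩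
            have h2 := hs _ this
            simp only [units_cons_inl, sums, List.mem_cons, List.mem_map]
            refine Or.inr ⟨(p.1 : ℤ) + s, h2, ?_⟩
            rw [hc.2]
            push_cast
            ring
        · -- no cancellation
          have hcond : w'.head ∈ toSubgroup A B u → u = p.1 := by
            intro hmem
            rcases Int.units_eq_one_or u with rfl | rfl <;>
              rcases Int.units_eq_one_or p.1 with h1 | h1 <;>
              simp_all
          refine ⟨⟨1, (u, w'.head) :: w'.toList, ?_⟩, ?_, ?_⟩
          · rw [hw]
            refine List.isChain_cons_cons.2 ⟨fun hmem => hcond hmem, ?_⟩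
            rw [← hw]
            exact w'.chain
          · simp only [ReducedWord.prod] at hp ⊢
            rw [wprod_cons, ← hp]
            simp [elem, mul_assoc]
          · intro s hsm
            simp only [List.map_cons, sums, List.mem_cons, List.mem_map] at hsm
            rcases hsm with rfl | ⟨s', hs', rfl⟩
            · exact zero_mem_sums _
            · simp only [units_cons_inl, sums, List.mem_cons, List.mem_map]
              exact Or.inr ⟨s', hs _ hs', rfl⟩


@[simp] lemma eps_of (g : G) : canonicalEps A B φ (of g) = 1 := by
  simp [canonicalEps, lift_of]

@[simp] lemma eps_t : canonicalEps A B φ (t : HNNExtension G A B φ) = Multiplicative.ofAdd 1 :=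
  lift_t _ _ _

@[simp] lemma eps_tpow (n : ℤ) :
    canonicalEps A B φ ((t : HNNExtension G A B φ) ^ n) = Multiplicative.ofAdd n := by
  rw [map_zpow, eps_t, ← ofAdd_zsmul]
  norm_num

/-- The conjugate `t^n (of G) t^(-n)`. -/
def C (n : ℤ) : Subgroup (HNNExtension G A B φ) :=
  Subgroup.map (MulAut.conj ((t : HNNExtension G A B φ) ^ n)).toMonoidHom
    (of : G →* HNNExtension G A B φ).range

lemma mem_C {n : ℤ} {x : HNNExtension G A B φ} :
    x ∈ C φ n ↔ ∃ g : G, t ^ n * of g * t ^ (-n) = x := by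
  simp only [C, Subgroup.mem_map, MonoidHom.mem_range, MulEquiv.coe_toMonoidHom,
    MulAut.conj_apply]
  constructor
  · rintro ⟨y, ⟨g, rfl⟩, rfl⟩
    exact ⟨g, by rw [zpow_neg]⟩
  · rintro ⟨g, rfl⟩
    exact ⟨of g, ⟨g, rfl⟩, by rw [zpow_neg]⟩

lemma C_le_ker (n : ℤ) : C φ n ≤ (canonicalEps A B φ).ker := by
  intro x hx
  rcases (mem_C φ).1 hx with ⟨g, rfl⟩
  simp only [MonoidHom.mem_ker, map_mul, eps_tpow, eps_of]
  simp [← ofAdd_add]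

lemma conj_C (m n : ℤ) :
    Subgroup.map (MulAut.conj ((t : HNNExtension G A B φ) ^ m)).toMonoidHom (C φ n) =
      C φ (m + n) := by
  rw [C, C, Subgroup.map_map]
  congr 1
  refine MonoidHom.ext fun x => ?_
  simp only [MonoidHom.coe_comp, MulEquiv.coe_toMonoidHom, Function.comp_apply,
    MulAut.conj_apply, zpow_add]
  group

lemma conj_mem_iSup_C {m : ℤ} {x : HNNExtension G A B φ} (hx : x ∈ ⨆ n : ℤ, C φ n) :
    t ^ m * x * t ^ (-m) ∈ ⨆ n : ℤ, C φ n := by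
  have h1 : Subgroup.map (MulAut.conj ((t : HNNExtension G A B φ) ^ m)).toMonoidHom
      (⨆ n : ℤ, C φ n) ≤ ⨆ n : ℤ, C φ n := by
    rw [Subgroup.map_iSup]
    exact iSup_le fun n => by rw [conj_C]; exact le_iSup (C φ) (m + n)
  refine h1 ⟨x, hx, ?_⟩
  simp only [MulEquiv.coe_toMonoidHom, MulAut.conj_apply, zpow_neg]

lemma ker_eq_iSup_C : (canonicalEps A B φ).ker = ⨆ n : ℤ, C φ n := by
  refine le_antisymm ?_ (iSup_le fun n => C_le_ker φ n)
  have key : ∀ x : HNNExtension G A B φ,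
      x * t ^ (-(Multiplicative.toAdd (canonicalEps A B φ x))) ∈ ⨆ n : ℤ, C φ n := by
    intro x
    induction x using induction_on with
    | of g =>
      simp only [eps_of, toAdd_one, neg_zero, zpow_zero, mul_one]
      exact le_iSup (C φ) 0 ((mem_C φ).2 ⟨g, by simp⟩)
    | t => simpa using one_mem (⨆ n : ℤ, C φ n)
    | mul x y hx hy =>
      have hxy : x * y * t ^ (-(Multiplicative.toAdd (canonicalEps A B φ (x * y)))) =
          (x * t ^ (-(Multiplicative.toAdd (canonicalEps A B φ x)))) *
          (t ^ (Multiplicative.toAdd (canonicalEps A B φ x)) *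
            (y * t ^ (-(Multiplicative.toAdd (canonicalEps A B φ y)))) *
            t ^ (-(Multiplicative.toAdd (canonicalEps A B φ x)))) := by
        rw [map_mul, toAdd_mul]
        group
      rw [hxy]
      exact mul_mem hx (conj_mem_iSup_C φ hy)
    | inv x hx =>
      have hx' : x⁻¹ * t ^ (-(Multiplicative.toAdd (canonicalEps A B φ x⁻¹))) =
          t ^ (-(Multiplicative.toAdd (canonicalEps A B φ x))) *
            (x * t ^ (-(Multiplicative.toAdd (canonicalEps A B φ x))))⁻¹ *
            t ^ (-(-(Multiplicative.toAdd (canonicalEps A B φ x)))) := by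
        rw [map_inv, toAdd_inv, neg_neg]
        group
      rw [hx']
      exact conj_mem_iSup_C φ (inv_mem hx)
  intro x hx
  have h0 : Multiplicative.toAdd (canonicalEps A B φ x) = 0 := by
    rw [MonoidHom.mem_ker] at hx
    rw [hx, toAdd_one]
  have := key x
  rw [h0] at this
  simpa using this


/-- A word representing `t ^ n`. -/
def tword (n : ℤ) : List (ℤˣ ⊕ G) :=
  if 0 ≤ n then List.replicate n.toNat (.inl 1) else List.replicate (-n).toNat (.inl (-1))

lemma wprod_replicate_inl (k : ℕ) (u : ℤˣ) :
    wprod φ (List.replicate k (.inl u) : List (ℤˣ ⊕ G)) = t ^ ((k : ℤ) * (u : ℤ)) := by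
  induction k with
  | zero => simp
  | succ k ih =>
    rw [List.replicate_succ, wprod_cons, ih]
    simp only [elem]
    rw [← zpow_add]
    congr 1
    push_cast
    ring

lemma wprod_tword (n : ℤ) : wprod φ (tword n : List (ℤˣ ⊕ G)) = t ^ n := by
  unfold tword
  split_ifs with h
  · rw [wprod_replicate_inl]; congr 1; simp; omega
  · rw [wprod_replicate_inl]; congr 1; simp; omega

lemma units_tword (n : ℤ) :
    units (tword n : List (ℤˣ ⊕ G)) =
      if 0 ≤ n then List.replicate n.toNat 1 else List.replicate (-n).toNat (-1) := by
  unfold tword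
  have : ∀ (k : ℕ) (u : ℤˣ), units (List.replicate k (.inl u) : List (ℤˣ ⊕ G)) =
      List.replicate k u := by
    intro k u
    induction k with
    | zero => rfl
    | succ k ih => rw [List.replicate_succ, List.replicate_succ, units_cons_inl, ih]
  split_ifs <;> rw [this]

lemma tsum_replicate (k : ℕ) (u : ℤˣ) : tsum (List.replicate k u) = (k : ℤ) * u := by
  induction k with
  | zero => simp
  | succ k ih => rw [List.replicate_succ, tsum_cons, ih]; push_cast; ring

lemma tsum_units_tword (n : ℤ) : tsum (units (tword n : List (ℤˣ ⊕ G))) = n := by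
  rw [units_tword]
  split_ifs with h <;> rw [tsum_replicate] <;> simp <;> omega

lemma mem_sums_units_tword {n : ℤ} {s : ℤ}
    (hs : s ∈ sums (units (tword n : List (ℤˣ ⊕ G)))) :
    (0 ≤ s ∧ s ≤ n) ∨ (n ≤ s ∧ s ≤ 0) := by
  rw [units_tword] at hs
  split_ifs at hs with h
  · have := sums_replicate_one hs
    left; omega
  · have := sums_replicate_neg_one hs
    right; omega

lemma C_le_bddWords {n : ℤ} {N : ℕ} (hn : |n| ≤ (N : ℤ)) : C φ n ≤ bddWords φ N := by
  intro x hx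
  rcases (mem_C φ).1 hx with ⟨g, rfl⟩
  refine ⟨tword n ++ .inr g :: tword (-n), ?_, ?_, ?_⟩
  · rw [wprod_append, wprod_cons, wprod_tword, wprod_tword]
    simp [elem, mul_assoc]
  · rw [units_append, units_cons_inr, tsum_append, tsum_units_tword, tsum_units_tword]
    ring
  · intro s hs
    have hn' := abs_le.1 hn
    rw [units_append, units_cons_inr] at hs
    rcases mem_sums_append hs with h | ⟨s', hs', rfl⟩
    · refine abs_le.2 ?_
      rcases mem_sums_units_tword h with h' | h' <;> omega
    · rw [tsum_units_tword]
      refine abs_le.2 ?_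
      rcases mem_sums_units_tword hs' with h' | h' <;> omega

/-- The subgroup generated by the conjugates `t^k (of G) t^(-k)` for `|k| ≤ N`. -/
def D (N : ℕ) : Subgroup (HNNExtension G A B φ) :=
  ⨆ n ∈ Set.Icc (-(N : ℤ)) (N : ℤ), C φ n

lemma D_mono : Monotone (D φ (G := G) (A := A) (B := B)) := by
  intro N M hNM
  refine iSup₂_le fun n hn => ?_
  simp only [Set.mem_Icc] at hn
  refine le_iSup₂_of_le n ?_ le_rfl
  simp only [Set.mem_Icc]
  omega

lemma iSup_D_eq : (⨆ N : ℕ, D φ N) = ⨆ n : ℤ, C φ n := by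
  refine le_antisymm (iSup_le fun N => iSup₂_le fun n _ => le_iSup (C φ) n)
    (iSup_le fun n => le_iSup_of_le n.natAbs (le_iSup₂_of_le n ?_ le_rfl))
  simp only [Set.mem_Icc]
  omega

lemma D_le_bddWords (N : ℕ) : D φ N ≤ bddWords φ N := by
  refine iSup₂_le fun n hn => C_le_bddWords φ ?_
  simp only [Set.mem_Icc] at hn
  refine abs_le.2 ?_
  omega

lemma exists_ker_eq_D (hfg : Group.FG (canonicalEps A B φ).ker) :
    ∃ N : ℕ, (canonicalEps A B φ).ker = D φ N := by
  rw [Group.fg_iff_subgroup_fg] at hfg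
  rcases hfg with ⟨S, hS⟩
  have hdir : Directed (· ≤ ·) (D φ (G := G) (A := A) (B := B)) := (D_mono φ).directed_le
  have hmem : ∀ s ∈ S, ∃ N : ℕ, s ∈ D φ N := by
    intro s hs
    have : s ∈ (canonicalEps A B φ).ker := hS ▸ Subgroup.subset_closure hs
    rw [ker_eq_iSup_C, ← iSup_D_eq] at this
    exact (Subgroup.mem_iSup_of_directed hdir).1 this
  choose! f hfmem using hmem
  refine ⟨S.sup f, le_antisymm ?_ ?_⟩
  · rw [← hS]
    rw [Subgroup.closure_le]
    intro s hs
    exact D_mono φ (Finset.le_sup hs) (hfmem s hs)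
  · rw [ker_eq_iSup_C, ← iSup_D_eq]
    exact le_iSup (D φ) (S.sup f)


/-- Convert a list of pairs (as in `ReducedWord`) to a word. -/
def toWord (l : List (ℤˣ × G)) : List (ℤˣ ⊕ G) :=
  l.flatMap fun p => [.inl p.1, .inr p.2]

@[simp] lemma toWord_nil : toWord ([] : List (ℤˣ × G)) = [] := rfl
@[simp] lemma toWord_cons (p : ℤˣ × G) (l : List (ℤˣ × G)) :
    toWord (p :: l) = .inl p.1 :: .inr p.2 :: toWord l := rfl
lemma toWord_append (l₁ l₂ : List (ℤˣ × G)) :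
    toWord (l₁ ++ l₂) = toWord l₁ ++ toWord l₂ := by simp [toWord]

lemma units_toWord (l : List (ℤˣ × G)) : units (toWord l) = l.map Prod.fst := by
  induction l with
  | nil => rfl
  | cons p l ih => simp [ih]

lemma prod_eq_wprod_toWord (l : List (ℤˣ × G)) :
    (l.map (fun x => t ^ (x.1 : ℤ) * of x.2)).prod = wprod φ (toWord l) := by
  induction l with
  | nil => rfl
  | cons p l ih => simp [ih, elem, mul_assoc]

lemma reducedWord_prod_eq (w : ReducedWord G A B) :
    w.prod φ = of w.head * wprod φ (toWord w.toList) := by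
  rw [ReducedWord.prod, prod_eq_wprod_toWord]

lemma wprod_toWord_replicate (k : ℕ) (v : ℤˣ) :
    wprod φ (toWord (List.replicate k (v, (1 : G)))) = t ^ ((k : ℤ) * (v : ℤ)) := by
  induction k with
  | zero => simp
  | succ k ih =>
    rw [List.replicate_succ, toWord_cons, wprod_cons, wprod_cons, ih]
    simp only [elem, map_one, one_mul]
    rw [← zpow_add]
    congr 1
    push_cast
    ring

lemma toSubgroup_eq_top_of_fg (hfg : Group.FG (canonicalEps A B φ).ker) (u : ℤˣ) :
    toSubgroup A B u = ⊤ := by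
  obtain ⟨N, hN⟩ := exists_ker_eq_D φ hfg
  refine (Subgroup.eq_top_iff' _).2 fun a => ?_
  by_contra ha
  set m : ℤ := ((N : ℤ) + 1) * (u : ℤ) with hm_def
  have hmabs : |m| = (N : ℤ) + 1 := by
    rcases Int.units_eq_one_or u with rfl | rfl
    · have : m = (N : ℤ) + 1 := by rw [hm_def]; simp
      rw [this, abs_of_nonneg (by positivity)]
    · have : m = -((N : ℤ) + 1) := by rw [hm_def]; simp
      rw [this, abs_neg, abs_of_nonneg (by positivity)]
  -- the element t^m (of a) t^(-m) lies in the kernel, hence in D N, hence in bddWords N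
  have hg_mem : (t : HNNExtension G A B φ) ^ m * of a * t ^ (-m) ∈ bddWords φ N := by
    refine D_le_bddWords φ N ?_
    rw [← hN]
    exact C_le_ker φ m ((mem_C φ).2 ⟨a, rfl⟩)
  rcases hg_mem with ⟨L, hL, _, hbound⟩
  rcases exists_reduced φ L with ⟨w, hw, hws⟩
  -- the explicit reduced word for t^m (of a) t^(-m)
  set l₂ : List (ℤˣ × G) :=
    List.replicate N (u, (1 : G)) ++ (u, a) :: List.replicate (N + 1) (-u, (1 : G)) with hl₂
  have hchain : l₂.Chain' (fun a b => a.2 ∈ toSubgroup A B a.1 → a.1 = b.1) := by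
    rw [hl₂]
    refine List.isChain_append.2 ⟨List.isChain_replicate_of_rel _ (fun _ => rfl), ?_, ?_⟩
    · refine List.isChain_cons.2 ⟨fun y _ hmem => absurd hmem ha, ?_⟩
      exact List.isChain_replicate_of_rel _ (fun _ => rfl)
    · intro x hx y hy
      have hx' : x = (u, (1 : G)) :=
        List.eq_of_mem_replicate (List.mem_of_mem_getLast? hx)
      subst hx'
      intro _
      simp only [List.head?_cons, Option.mem_def, Option.some_inj] at hy
      subst hy
      rfl
  set w₂ : ReducedWord G A B := ⟨1, l₂, hchain⟩ with hw₂
  have hw₂prod : w₂.prod φ = t ^ m * of a * t ^ (-m) := by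
    rw [reducedWord_prod_eq]
    show of 1 * wprod φ (toWord l₂) = _
    rw [hl₂, map_one, one_mul, toWord_append, wprod_append, toWord_cons, wprod_cons,
      wprod_cons, wprod_toWord_replicate, wprod_toWord_replicate]
    simp only [elem]
    have h1 : ((N : ℤ)) * (u : ℤ) + (u : ℤ) = m := by rw [hm_def]; ring
    have h2 : (((N : ℕ) + 1 : ℕ) : ℤ) * ((-u : ℤˣ) : ℤ) = -m := by
      rw [hm_def]; push_cast; ring
    rw [h2, ← mul_assoc, ← mul_assoc, ← zpow_add, h1]
  have hpat : List.map Prod.fst w.toList = List.map Prod.fst w₂.toList :=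
    (ReducedWord.map_fst_eq_and_of_prod_eq φ (by rw [hw, hw₂prod, ← hL])).1
  -- m is a prefix sum of the pattern of w₂
  have hmem : m ∈ sums (List.map Prod.fst w₂.toList) := by
    show m ∈ sums (List.map Prod.fst l₂)
    rw [hl₂, List.map_append, List.map_cons, List.map_replicate, List.map_replicate]
    have : (List.replicate N (u : ℤˣ) ++ (u : ℤˣ) :: List.replicate (N + 1) (-u)) =
        List.replicate (N + 1) (u : ℤˣ) ++ List.replicate (N + 1) (-u) := by
      rw [List.append_cons, ← List.replicate_succ']
    rw [this]
    have := tsum_mem_sums (List.replicate (N + 1) (u : ℤˣ))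
    rw [tsum_replicate] at this
    have hm' : ((N + 1 : ℕ) : ℤ) * (u : ℤ) = m := by rw [hm_def]; push_cast; ring
    rw [hm'] at this
    exact mem_sums_append_left this
  rw [← hpat] at hmem
  have := hbound m (hws m hmem)
  rw [hmabs] at this
  omega


lemma of_range_eq_ker (hA : A = ⊤) (hB : B = ⊤) :
    (of : G →* HNNExtension G A B φ).range = (canonicalEps A B φ).ker := by
  subst hA
  subst hB
  set σ : MulAut G := Subgroup.topEquiv.symm.trans (φ.trans Subgroup.topEquiv) with hσ
  have hstep : ∀ g : G, (t : HNNExtension G ⊤ ⊤ φ) * of g = of (σ g) * t := fun g =>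
    t_mul_of (φ := φ) ⟨g, trivial⟩
  have hstepinv : ∀ g : G, (t : HNNExtension G ⊤ ⊤ φ)⁻¹ * of g = of (σ⁻¹ g) * t⁻¹ := fun g =>
    inv_t_mul_of (φ := φ) ⟨g, trivial⟩
  have hzpow : ∀ (n : ℤ) (g : G),
      (t : HNNExtension G ⊤ ⊤ φ) ^ n * of g = of ((σ ^ n) g) * t ^ n := by
    intro n
    induction n using Int.induction_on with
    | zero => intro g; simp
    | succ n ih =>
      intro g
      have : (t : HNNExtension G ⊤ ⊤ φ) ^ ((n : ℤ) + 1) = t ^ (n : ℤ) * t := by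
        rw [zpow_add, zpow_one]
      rw [this, mul_assoc, hstep, ← mul_assoc, ih, mul_assoc]
      have h2 : (σ ^ (n : ℤ)) (σ g) = (σ ^ ((n : ℤ) + 1)) g := by
        rw [zpow_add, zpow_one, MulAut.mul_apply]
      rw [h2]
    | pred n ih =>
      intro g
      have : (t : HNNExtension G ⊤ ⊤ φ) ^ (-(n : ℤ) - 1) = t ^ (-(n : ℤ)) * t⁻¹ := by
        rw [← zpow_sub_one]
      rw [this, mul_assoc, hstepinv, ← mul_assoc, ih, mul_assoc]
      have h2 : (σ ^ (-(n : ℤ))) (σ⁻¹ g) = (σ ^ (-(n : ℤ) - 1)) g := by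
        rw [sub_eq_add_neg, zpow_add, MulAut.mul_apply, zpow_neg_one]
      rw [h2]
  have decomp : ∀ x : HNNExtension G ⊤ ⊤ φ, ∃ (g : G) (n : ℤ), x = of g * t ^ n := by
    intro x
    induction x using induction_on with
    | of g => exact ⟨g, 0, by simp⟩
    | t => exact ⟨1, 1, by simp⟩
    | mul x y hx hy =>
      rcases hx with ⟨g, m, rfl⟩
      rcases hy with ⟨h, n, rfl⟩
      refine ⟨g * (σ ^ m) h, m + n, ?_⟩
      rw [map_mul, mul_assoc, ← mul_assoc (t ^ m), hzpow m h, zpow_add]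
      group
    | inv x hx =>
      rcases hx with ⟨g, n, rfl⟩
      refine ⟨(σ ^ (-n)) g⁻¹, -n, ?_⟩
      rw [mul_inv_rev, ← hzpow, ← zpow_neg, map_inv]
  refine le_antisymm ?_ ?_
  · rintro x ⟨g, rfl⟩
    simp [MonoidHom.mem_ker]
  · intro x hx
    rcases decomp x with ⟨g, n, rfl⟩
    rw [MonoidHom.mem_ker, map_mul, eps_of, eps_tpow, one_mul] at hx
    have hn : n = 0 := by simpa using hx
    subst hn
    exact ⟨g, by simp⟩

end HNNAux

/-- If `ε : π → ℤ` is surjective with finitely generated kernel and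
`f : π ≅ HNN(A,B,B',φ)` is a splitting of `(π, ε)` (i.e. `ε = ε₀ ∘ f`), then `B = A`
and `B' = A`, and `f⁻¹` maps the image of the base group `A` onto `ker ε`. -/
theorem splitting_of_fg_kernel_is_ascending
    {π : Type} [Group π] (ε : π →* Multiplicative ℤ)
    (hsurj : Function.Surjective ε) (hfg : Group.FG ε.ker)
    {A : Type} [Group A] (B B' : Subgroup A) (φ : B ≃* B')
    (f : π ≃* HNNExtension A B B' φ)
    (hf : ∀ x : π, ε x = canonicalEps B B' φ (f x)) :
    B = ⊤ ∧ B' = ⊤ ∧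
      Subgroup.map f.symm.toMonoidHom
        (HNNExtension.of : A →* HNNExtension A B B' φ).range = ε.ker := by
  have hker : ε.ker = Subgroup.comap f.toMonoidHom (canonicalEps B B' φ).ker := by
    ext x
    simp [MonoidHom.mem_ker, hf x]
  have hmap : Subgroup.map f.toMonoidHom ε.ker = (canonicalEps B B' φ).ker := by
    rw [hker, Subgroup.map_comap_eq_self_of_surjective f.surjective]
  have hfg0 : Group.FG (canonicalEps B B' φ).ker := by
    haveI := hfg
    have h1 : Group.FG (Subgroup.map f.toMonoidHom ε.ker) :=
      Group.fg_of_surjective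
        (f := (Subgroup.equivMapOfInjective ε.ker f.toMonoidHom f.injective).toMonoidHom)
        (Subgroup.equivMapOfInjective ε.ker f.toMonoidHom f.injective).surjective
    rwa [hmap] at h1
  have hB : B = ⊤ := HNNAux.toSubgroup_eq_top_of_fg φ hfg0 1
  have hB' : B' = ⊤ := by
    have h := HNNAux.toSubgroup_eq_top_of_fg φ hfg0 (-1)
    rwa [HNNExtension.toSubgroup_neg_one] at h
  refine ⟨hB, hB', ?_⟩
  rw [HNNAux.of_range_eq_ker φ hB hB']
  ext x
  rw [Subgroup.mem_map_equiv]
  simp [MonoidHom.mem_ker, hf x]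
end

section
/- Let π be a finitely presented group and ε : π → ℤ a surjective homomorphism. Then there exist a group A, subgroups B, B' ≤ A, an isomorphism φ : B ≃ B', and a splitting f : π ≅ HNN(A,B,B',φ) of (π, ε), such that both A and B are finitely generated. -/
/-- A splitting of `(π, ε)` : an HNN decomposition of `π` with base group `A` and
amalgamating subgroups `B ≃ B'`, compatible with `ε` (i.e. `ε = ε₀ ∘ f`). -/
structure HNNSplitting (π : Type) [Group π] (ε : π →* Multiplicative ℤ) where
  A : Type
  [instGroupA : Group A]
  B : Subgroup A
  B' : Subgroup A
  φ : B ≃* B'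
  f : π ≃* HNNExtension A B B' φ
  compat : ∀ x : π, ε x = canonicalEps B B' φ (f x)

attribute [instance] HNNSplitting.instGroupA

open Subgroup Multiplicative

namespace FGSplitAux

variable {G : Type} [Group G]

theorem conj_mem_of_forall {S : Set G} {T : Subgroup G} {u : G}
    (h : ∀ s ∈ S, u * s * u⁻¹ ∈ T) {m : G} (hm : m ∈ closure S) :
    u * m * u⁻¹ ∈ T := by
  induction hm using closure_induction with
  | mem x hx => exact h x hx
  | one => simpa using one_mem T
  | mul x y hx hy ihx ihy =>
      have hxy : u * (x * y) * u⁻¹ = (u * x * u⁻¹) * (u * y * u⁻¹) := by group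
      rw [hxy]; exact mul_mem ihx ihy
  | inv x hx ih =>
      have hx' : u * x⁻¹ * u⁻¹ = (u * x * u⁻¹)⁻¹ := by group
      rw [hx']; exact inv_mem ih

variable {n : ℕ}

abbrev F (n : ℕ) := FreeGroup (Option (Fin n))

def tF : F n := FreeGroup.of none
def xF (i : Fin n) : F n := FreeGroup.of (some i)

def z (i : Fin n) (j : ℤ) : F n := tF ^ j * xF i * tF ^ (-j)

def M (n : ℕ) : Subgroup (F n) := closure {w | ∃ i j, w = z i j}

theorem z_conj (i : Fin n) (a j : ℤ) : tF ^ a * z i j * (tF ^ a)⁻¹ = z i (a + j) := by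
  simp only [z]; group

theorem z_zero (i : Fin n) : z i 0 = xF i := by simp [z]

theorem z_mem_M (i : Fin n) (j : ℤ) : z i j ∈ M n := subset_closure ⟨i, j, rfl⟩

theorem conj_zpow_M (a : ℤ) {m : F n} (hm : m ∈ M n) :
    tF ^ a * m * (tF ^ a)⁻¹ ∈ M n := by
  refine conj_mem_of_forall (fun s hs => ?_) hm
  obtain ⟨i, j, rfl⟩ := hs
  rw [z_conj]
  exact z_mem_M i (a + j)

def eZ : F n →* Multiplicative ℤ :=
  FreeGroup.lift (fun o => Option.elim o (ofAdd 1) (fun _ => 1))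

theorem eZ_tF : eZ (tF : F n) = ofAdd 1 := FreeGroup.lift_apply_of
theorem eZ_xF (i : Fin n) : eZ (xF i) = 1 := FreeGroup.lift_apply_of

theorem mem_M_aux (w : F n) : w * tF ^ (-(toAdd (eZ w))) ∈ M n := by
  induction w using FreeGroup.induction_on with
  | C1 => simpa using one_mem (M n)
  | of a =>
    cases a with
    | none =>
        show tF * tF ^ (-(toAdd (eZ (tF : F n)))) ∈ M n
        rw [eZ_tF]
        simpa using one_mem (M n)
    | some i =>
        show xF i * tF ^ (-(toAdd (eZ (xF i)))) ∈ M n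
        rw [eZ_xF]
        simpa using (z_zero i ▸ z_mem_M i 0)
  | inv_of a _ =>
    cases a with
    | none =>
        show (tF : F n)⁻¹ * tF ^ (-(toAdd (eZ (tF : F n)⁻¹))) ∈ M n
        rw [map_inv, eZ_tF]
        simpa using one_mem (M n)
    | some i =>
        show (xF i)⁻¹ * tF ^ (-(toAdd (eZ (xF i)⁻¹))) ∈ M n
        rw [map_inv, eZ_xF]
        simpa using (z_zero i ▸ z_mem_M i 0)
  | mul x y hx hy =>
    have key : x * y * tF ^ (-(toAdd (eZ (x * y)))) =
        (x * tF ^ (-(toAdd (eZ x)))) *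
          (tF ^ (toAdd (eZ x)) * (y * tF ^ (-(toAdd (eZ y)))) * (tF ^ (toAdd (eZ x)))⁻¹) := by
      rw [map_mul, toAdd_mul]; group
    rw [key]
    exact mul_mem hx (conj_zpow_M _ hy)

def W (n : ℕ) (N : ℕ) : Subgroup (F n) :=
  closure {w | ∃ i, ∃ j : ℤ, -(N : ℤ) ≤ j ∧ j ≤ (N : ℤ) ∧ w = z i j}

theorem W_mono : Monotone (W n) := by
  intro N N' h
  apply Subgroup.closure_mono
  rintro w ⟨i, j, h1, h2, rfl⟩
  exact ⟨i, j, by omega, by omega, rfl⟩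

theorem exists_W {w : F n} (hw : w ∈ M n) : ∃ N, w ∈ W n N := by
  have hle : M n ≤ ⨆ N, W n N := by
    rw [M, closure_le]
    rintro w ⟨i, j, rfl⟩
    have : z i j ∈ W n j.natAbs :=
      subset_closure ⟨i, j, by omega, by omega, rfl⟩
    exact SetLike.mem_coe.2 (le_iSup (W n) j.natAbs this)
  exact (mem_iSup_of_directed (W_mono.directed_le)).1 (hle hw)

theorem exists_uniform_W {s : Set (F n)} (hs : s.Finite) (h : ∀ q ∈ s, q ∈ M n) :
    ∃ N, ∀ q ∈ s, q ∈ W n N := by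
  revert h
  refine Set.Finite.induction_on
    (motive := fun s _ => (∀ q ∈ s, q ∈ M n) → ∃ N, ∀ q ∈ s, q ∈ W n N) s hs ?_ ?_
  · exact fun _ => ⟨0, by simp⟩
  · rintro a s - - ih h
    obtain ⟨N₁, hN₁⟩ := exists_W (h a (Set.mem_insert a s))
    obtain ⟨N₂, hN₂⟩ := ih (fun q hq => h q (Set.mem_insert_of_mem a hq))
    refine ⟨max N₁ N₂, ?_⟩
    rintro q (rfl | hq)
    · exact W_mono (le_max_left _ _) hN₁
    · exact W_mono (le_max_right _ _) (hN₂ q hq)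

theorem shift_W (N : ℕ) {q : F n} (hq : q ∈ W n N) :
    tF ^ (N : ℤ) * q * (tF ^ (N : ℤ))⁻¹ ∈
      closure {v : F n | ∃ i, ∃ j : ℤ, 0 ≤ j ∧ j ≤ ((2 * N : ℕ) : ℤ) ∧ v = z i j} := by
  refine conj_mem_of_forall (fun s hs => ?_) hq
  obtain ⟨i, j, h1, h2, rfl⟩ := hs
  rw [z_conj]
  exact subset_closure ⟨i, (N : ℤ) + j, by omega, by push_cast; omega, rfl⟩

section PiSide

variable {π : Type} [Group π] {n : ℕ}

def Y (t₀ : π) (ξ : Fin n → π) (i : Fin n) (j : ℤ) : π := t₀ ^ j * ξ i * (t₀ ^ j)⁻¹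

variable (t₀ : π) (ξ : Fin n → π) (L : ℕ)

def AA : Subgroup π := closure {w | ∃ i, ∃ j : ℤ, 0 ≤ j ∧ j ≤ (L : ℤ) ∧ w = Y t₀ ξ i j}
def BB : Subgroup π := closure {w | ∃ i, ∃ j : ℤ, 0 ≤ j ∧ j + 1 ≤ (L : ℤ) ∧ w = Y t₀ ξ i j}
def BB' : Subgroup π := closure {w | ∃ i, ∃ j : ℤ, 1 ≤ j ∧ j ≤ (L : ℤ) ∧ w = Y t₀ ξ i j}

theorem Y_succ (i : Fin n) (j : ℤ) : t₀ * Y t₀ ξ i j * t₀⁻¹ = Y t₀ ξ i (j + 1) := by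
  simp only [Y]; group

theorem Y_zero (i : Fin n) : Y t₀ ξ i 0 = ξ i := by simp [Y]

theorem Y_mem_AA (i : Fin n) (j : ℤ) (h0 : 0 ≤ j) (hL : j ≤ (L : ℤ)) :
    Y t₀ ξ i j ∈ AA t₀ ξ L := subset_closure ⟨i, j, h0, hL, rfl⟩

theorem xi_mem_AA (i : Fin n) : ξ i ∈ AA t₀ ξ L :=
  Y_zero t₀ ξ i ▸ Y_mem_AA t₀ ξ L i 0 le_rfl (by positivity)

theorem BB_le_AA : BB t₀ ξ L ≤ AA t₀ ξ L := by
  apply Subgroup.closure_mono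
  rintro w ⟨i, j, h0, h1, rfl⟩
  exact ⟨i, j, h0, by omega, rfl⟩

theorem BB'_le_AA : BB' t₀ ξ L ≤ AA t₀ ξ L := by
  apply Subgroup.closure_mono
  rintro w ⟨i, j, h0, h1, rfl⟩
  exact ⟨i, j, by omega, h1, rfl⟩

theorem map_BB : (BB t₀ ξ L).map (MulAut.conj t₀ : π →* π) = BB' t₀ ξ L := by
  rw [BB, MonoidHom.map_closure]
  apply congrArg Subgroup.closure
  ext w
  constructor
  · rintro ⟨v, ⟨i, j, h0, h1, rfl⟩, rfl⟩
    refine ⟨i, j + 1, by omega, by omega, ?_⟩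
    rw [← Y_succ]
    simp [MulAut.conj_apply]
  · rintro ⟨i, j, h0, h1, rfl⟩
    refine ⟨Y t₀ ξ i (j - 1), ⟨i, j - 1, by omega, by omega, rfl⟩, ?_⟩
    have := Y_succ t₀ ξ i (j - 1)
    rw [sub_add_cancel] at this
    simpa [MulAut.conj_apply] using this

def φB : BB t₀ ξ L ≃* BB' t₀ ξ L :=
  ((MulAut.conj t₀ : π ≃* π).subgroupMap (BB t₀ ξ L)).trans
    (MulEquiv.subgroupCongr (map_BB t₀ ξ L))

theorem coe_φB (b : BB t₀ ξ L) : (φB t₀ ξ L b : π) = t₀ * (b : π) * t₀⁻¹ := by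
  simp [φB, MulEquiv.subgroupCongr_apply, MulEquiv.coe_subgroupMap_apply, MulAut.conj_apply]

def φA : (BB t₀ ξ L).subgroupOf (AA t₀ ξ L) ≃* (BB' t₀ ξ L).subgroupOf (AA t₀ ξ L) :=
  (Subgroup.subgroupOfEquivOfLe (BB_le_AA t₀ ξ L)).trans
    ((φB t₀ ξ L).trans (Subgroup.subgroupOfEquivOfLe (BB'_le_AA t₀ ξ L)).symm)

theorem coe_φA (b : (BB t₀ ξ L).subgroupOf (AA t₀ ξ L)) :
    ((φA t₀ ξ L b : ↥(AA t₀ ξ L)) : π) = t₀ * ((b : ↥(AA t₀ ξ L)) : π) * t₀⁻¹ := by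
  have : ((φA t₀ ξ L b : ↥(AA t₀ ξ L)) : π)
      = (φB t₀ ξ L ((Subgroup.subgroupOfEquivOfLe (BB_le_AA t₀ ξ L)) b) : π) := rfl
  rw [this, coe_φB]
  rfl

abbrev HNN : Type :=
  HNNExtension ↥(AA t₀ ξ L) ((BB t₀ ξ L).subgroupOf (AA t₀ ξ L))
    ((BB' t₀ ξ L).subgroupOf (AA t₀ ξ L)) (φA t₀ ξ L)

def Φ : HNN t₀ ξ L →* π :=
  HNNExtension.lift (AA t₀ ξ L).subtype t₀ (fun b => by
    have h := coe_φA t₀ ξ L b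
    simp only [Subgroup.coe_subtype]
    rw [h]; group)

theorem Φ_t : Φ t₀ ξ L (HNNExtension.t) = t₀ := by
  simp [Φ]

theorem Φ_of (a : ↥(AA t₀ ξ L)) : Φ t₀ ξ L (HNNExtension.of a) = (a : π) := by
  simp [Φ]

def Λ : F n →* HNN t₀ ξ L :=
  FreeGroup.lift (fun o => Option.elim o HNNExtension.t
    (fun i => HNNExtension.of ⟨ξ i, xi_mem_AA t₀ ξ L i⟩))

theorem Λ_tF : Λ t₀ ξ L (tF : F n) = HNNExtension.t := FreeGroup.lift_apply_of

theorem Λ_xF (i : Fin n) :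
    Λ t₀ ξ L (xF i) = HNNExtension.of ⟨ξ i, xi_mem_AA t₀ ξ L i⟩ := FreeGroup.lift_apply_of

theorem t_zpow_conj (i : Fin n) (j : ℤ) (h0 : 0 ≤ j) (hL : j ≤ (L : ℤ)) :
    (HNNExtension.t ^ j * HNNExtension.of ⟨ξ i, xi_mem_AA t₀ ξ L i⟩ * (HNNExtension.t ^ j)⁻¹ :
        HNN t₀ ξ L)
      = HNNExtension.of ⟨Y t₀ ξ i j, Y_mem_AA t₀ ξ L i j h0 hL⟩ := by
  refine Int.le_induction (m := 0) (motive := fun j _ => ∀ (h0 : 0 ≤ j) (hL : j ≤ (L : ℤ)),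
      (HNNExtension.t ^ j * HNNExtension.of ⟨ξ i, xi_mem_AA t₀ ξ L i⟩ * (HNNExtension.t ^ j)⁻¹ :
        HNN t₀ ξ L) = HNNExtension.of ⟨Y t₀ ξ i j, Y_mem_AA t₀ ξ L i j h0 hL⟩)
    ?_ ?_ j h0 h0 hL
  · intro h0 hL
    have h1 : (⟨ξ i, xi_mem_AA t₀ ξ L i⟩ : ↥(AA t₀ ξ L))
        = ⟨Y t₀ ξ i 0, Y_mem_AA t₀ ξ L i 0 le_rfl hL⟩ := Subtype.ext (Y_zero t₀ ξ i).symm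
    simp [h1]
  · intro k hk ih h0 hL
    have hkL : k ≤ (L : ℤ) := by omega
    set a : HNN t₀ ξ L := HNNExtension.of ⟨ξ i, xi_mem_AA t₀ ξ L i⟩ with ha
    have key : (HNNExtension.t ^ (k + 1) * a * (HNNExtension.t ^ (k + 1))⁻¹ : HNN t₀ ξ L)
        = HNNExtension.t * (HNNExtension.t ^ k * a * (HNNExtension.t ^ k)⁻¹) *
          HNNExtension.t⁻¹ := by group
    rw [key, ih hk hkL]
    have hmem : (⟨Y t₀ ξ i k, Y_mem_AA t₀ ξ L i k hk hkL⟩ : ↥(AA t₀ ξ L)) ∈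
        (BB t₀ ξ L).subgroupOf (AA t₀ ξ L) := by
      rw [Subgroup.mem_subgroupOf]
      exact subset_closure ⟨i, k, hk, by omega, rfl⟩
    set b : ((BB t₀ ξ L).subgroupOf (AA t₀ ξ L)) :=
      ⟨⟨Y t₀ ξ i k, Y_mem_AA t₀ ξ L i k hk hkL⟩, hmem⟩ with hb
    have hrel := HNNExtension.t_mul_of (φ := φA t₀ ξ L) b
    have hconj : (HNNExtension.t * HNNExtension.of (b : ↥(AA t₀ ξ L)) * HNNExtension.t⁻¹ :
        HNN t₀ ξ L) = HNNExtension.of ((φA t₀ ξ L b : ↥(AA t₀ ξ L))) := by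
      rw [hrel]; group
    have hcoe : ((φA t₀ ξ L b : ↥(AA t₀ ξ L))) =
        (⟨Y t₀ ξ i (k + 1), Y_mem_AA t₀ ξ L i (k + 1) (by omega) hL⟩ : ↥(AA t₀ ξ L)) := by
      apply Subtype.ext
      rw [coe_φA]
      exact Y_succ t₀ ξ i k
    rw [show (b : ↥(AA t₀ ξ L)) = ⟨Y t₀ ξ i k, Y_mem_AA t₀ ξ L i k hk hkL⟩ from rfl] at hconj
    rw [hconj, hcoe]

theorem bridge (projF : F n →* π) (hprojt : projF tF = t₀)
    (hprojx : ∀ i, projF (xF i) = ξ i) {w : F n}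
    (hw : w ∈ Subgroup.closure {v : F n | ∃ i, ∃ j : ℤ, 0 ≤ j ∧ j ≤ (L : ℤ) ∧ v = z i j}) :
    ∃ ha : projF w ∈ AA t₀ ξ L, Λ t₀ ξ L w = HNNExtension.of ⟨projF w, ha⟩ := by
  induction hw using Subgroup.closure_induction with
  | mem v hv =>
      obtain ⟨i, j, h0, hL, rfl⟩ := hv
      have hp : projF (z i j) = Y t₀ ξ i j := by
        simp [z, Y, map_mul, map_zpow, hprojt, hprojx, zpow_neg]
      have hΛ : Λ t₀ ξ L (z i j) = HNNExtension.of ⟨Y t₀ ξ i j, Y_mem_AA t₀ ξ L i j h0 hL⟩ := by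
        rw [z, map_mul, map_mul, map_zpow, map_zpow, Λ_tF, Λ_xF, zpow_neg]
        exact t_zpow_conj t₀ ξ L i j h0 hL
      rw [hp]
      exact ⟨Y_mem_AA t₀ ξ L i j h0 hL, hΛ⟩
  | one =>
      refine ⟨by rw [map_one]; exact one_mem _, ?_⟩
      rw [map_one]
      have : (⟨projF 1, by rw [map_one]; exact one_mem _⟩ : ↥(AA t₀ ξ L)) = 1 :=
        Subtype.ext (map_one projF)
      rw [this, map_one]
  | mul x y hx hy ihx ihy =>
      obtain ⟨hax, ex⟩ := ihx
      obtain ⟨hay, ey⟩ := ihy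
      refine ⟨by rw [map_mul]; exact mul_mem hax hay, ?_⟩
      rw [map_mul, ex, ey, ← map_mul]
      apply congrArg
      exact Subtype.ext (map_mul projF x y).symm
  | inv x hx ih =>
      obtain ⟨hax, e⟩ := ih
      refine ⟨by rw [map_inv]; exact inv_mem hax, ?_⟩
      rw [map_inv, e, ← map_inv]
      apply congrArg
      exact Subtype.ext (map_inv projF x).symm

end PiSide


theorem ofAdd_one_zpow (k : ℤ) :
    (Multiplicative.ofAdd (1 : ℤ)) ^ k = Multiplicative.ofAdd k := by
  apply Multiplicative.toAdd.injective
  simp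

end FGSplitAux


open FGSplitAux

/-- a finitely presented group `π` with a surjective homomorphism
`ε : π → ℤ` admits a splitting over a finitely generated group `B` with finitely
generated base group `A`. -/
theorem exists_fg_splitting (π : Type) [Group π]
    (hfp : ∃ (n : ℕ) (rels : Set (FreeGroup (Fin n))),
      rels.Finite ∧ Nonempty (π ≃* PresentedGroup rels))
    (ε : π →* Multiplicative ℤ) (hsurj : Function.Surjective ε) :
    ∃ s : HNNSplitting π ε, Group.FG s.A ∧ Group.FG s.B := by
  classical
  obtain ⟨n, rels, hfin, ⟨θ⟩⟩ := hfp
  obtain ⟨t₀, ht₀⟩ := hsurj (Multiplicative.ofAdd 1)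
  set g : Fin n → π := fun i => θ.symm (PresentedGroup.mk rels (FreeGroup.of i)) with hg
  set e : Fin n → ℤ := fun i => Multiplicative.toAdd (ε (g i)) with he
  set ξ : Fin n → π := fun i => g i * (t₀ ^ (e i))⁻¹ with hξ
  set projF : FGSplitAux.F n →* π :=
    FreeGroup.lift (fun o => Option.elim o t₀ (fun i => ξ i)) with hprojF
  have hprojt : projF tF = t₀ := FreeGroup.lift_apply_of
  have hprojx : ∀ i, projF (xF i) = ξ i := fun i => FreeGroup.lift_apply_of
  set ρ : FreeGroup (Fin n) →* FGSplitAux.F n :=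
    FreeGroup.lift (fun i => xF i * tF ^ (e i)) with hρ
  have hρof : ∀ i, ρ (FreeGroup.of i) = xF i * tF ^ (e i) := fun i => FreeGroup.lift_apply_of
  set proj₀ : FreeGroup (Fin n) →* π :=
    θ.symm.toMonoidHom.comp (PresentedGroup.mk rels) with hproj₀
  have hproj₀of : ∀ i, proj₀ (FreeGroup.of i) = g i := fun i => rfl
  have hεg : ∀ i, ε (g i) = Multiplicative.ofAdd (e i) := fun i => by
    rw [he]; exact (ofAdd_toAdd _).symm
  have hεξ : ∀ i, ε (ξ i) = 1 := by
    intro i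
    rw [hξ]
    simp only [map_mul, map_inv, map_zpow, ht₀, ofAdd_one_zpow, hεg]
    simp
  have hprojρ : ∀ w, projF (ρ w) = proj₀ w := by
    have hcomm : projF.comp ρ = proj₀ := by
      apply FreeGroup.ext_hom
      intro i
      show projF (ρ (FreeGroup.of i)) = proj₀ (FreeGroup.of i)
      rw [hρof, hproj₀of, map_mul, map_zpow, hprojx, hprojt, hξ]
      group
    exact fun w => DFunLike.congr_fun hcomm w
  have hεF : ∀ w, ε (projF w) = eZ w := by
    have hcomm : ε.comp projF = eZ := by
      apply FreeGroup.ext_hom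
      intro o
      cases o with
      | none =>
          show ε (projF tF) = eZ (tF : FGSplitAux.F n)
          rw [hprojt, eZ_tF, ht₀]
      | some i =>
          show ε (projF (xF i)) = eZ (xF i)
          rw [hprojx, eZ_xF, hεξ]
    exact fun w => DFunLike.congr_fun hcomm w
  have hrel1 : ∀ r ∈ rels, proj₀ r = 1 := by
    intro r hr
    have h1 : PresentedGroup.mk rels r = 1 :=
      (QuotientGroup.eq_one_iff r).2 (Subgroup.subset_normalClosure hr)
    show θ.symm (PresentedGroup.mk rels r) = 1
    rw [h1, map_one]
  have hmemM : ∀ q : FGSplitAux.F n, eZ q = 1 → q ∈ FGSplitAux.M n := by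
    intro q hq
    have := FGSplitAux.mem_M_aux q
    rw [hq] at this
    simpa using this
  obtain ⟨w₀, hw₀⟩ : ∃ w, proj₀ w = t₀ := by
    obtain ⟨p, hp⟩ := PresentedGroup.mk_surjective rels (θ t₀)
    exact ⟨p, by show θ.symm _ = t₀; rw [hp, MulEquiv.symm_apply_apply]⟩
  set q₀ : FGSplitAux.F n := ρ w₀ * (tF)⁻¹ with hq₀def
  have hq₀M : q₀ ∈ FGSplitAux.M n := by
    apply hmemM
    rw [hq₀def, map_mul, map_inv, ← hεF, ← hεF, hprojρ, hw₀, hprojt, ht₀]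
    simp
  have hrM : ∀ r ∈ rels, ρ r ∈ FGSplitAux.M n := by
    intro r hr
    apply hmemM
    rw [← hεF, hprojρ, hrel1 r hr, map_one]
  have hQfin : (insert q₀ (ρ '' rels)).Finite := (hfin.image ρ).insert q₀
  obtain ⟨N, hN⟩ := FGSplitAux.exists_uniform_W hQfin (by
    rintro q (rfl | ⟨r, hr, rfl⟩)
    · exact hq₀M
    · exact hrM r hr)
  set L : ℕ := 2 * N with hLdef
  -- the key killing lemma
  have Λkill : ∀ q ∈ FGSplitAux.W n N, projF q = 1 → Λ t₀ ξ L q = 1 := by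
    intro q hq hpq
    have hs := FGSplitAux.shift_W N hq
    rw [← hLdef] at hs
    obtain ⟨ha, heq⟩ := FGSplitAux.bridge t₀ ξ L projF hprojt hprojx hs
    have hp1 : projF (tF ^ (N : ℤ) * q * (tF ^ (N : ℤ))⁻¹) = 1 := by
      rw [map_mul, map_mul, map_inv, map_zpow, hprojt, hpq]
      group
    have h1 : (⟨projF (tF ^ (N : ℤ) * q * (tF ^ (N : ℤ))⁻¹), ha⟩ : ↥(AA t₀ ξ L)) = 1 :=
      Subtype.ext hp1
    rw [h1, map_one] at heq
    have hq' : q = (tF ^ (N : ℤ))⁻¹ *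
        (tF ^ (N : ℤ) * q * (tF ^ (N : ℤ))⁻¹) * tF ^ (N : ℤ) := by group
    calc Λ t₀ ξ L q
        = Λ t₀ ξ L ((tF ^ (N : ℤ))⁻¹ * (tF ^ (N : ℤ) * q * (tF ^ (N : ℤ))⁻¹) * tF ^ (N : ℤ)) := by
          rw [← hq']
      _ = 1 := by rw [map_mul, map_mul, heq, map_inv]; simp
  set f₀ : Fin n → HNN t₀ ξ L := fun i => Λ t₀ ξ L (ρ (FreeGroup.of i)) with hf₀
  have hliftf : FreeGroup.lift f₀ = (Λ t₀ ξ L).comp ρ := by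
    apply FreeGroup.ext_hom
    intro i
    rw [FreeGroup.lift_apply_of]
    rfl
  have hkill : ∀ r ∈ rels, FreeGroup.lift f₀ r = 1 := by
    intro r hr
    rw [hliftf]
    exact Λkill (ρ r) (hN _ (Set.mem_insert_of_mem _ ⟨r, hr, rfl⟩))
      (by rw [hprojρ, hrel1 r hr])
  set Ψ : π →* HNN t₀ ξ L := (PresentedGroup.toGroup hkill).comp θ.toMonoidHom with hΨdef
  have hΨproj : ∀ w, Ψ (proj₀ w) = Λ t₀ ξ L (ρ w) := by
    intro w
    have h1 : Ψ (proj₀ w) = PresentedGroup.toGroup hkill (PresentedGroup.mk rels w) := by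
      show PresentedGroup.toGroup hkill (θ (θ.symm (PresentedGroup.mk rels w))) = _
      rw [MulEquiv.apply_symm_apply]
    have h2 : (PresentedGroup.toGroup hkill).comp (PresentedGroup.mk rels) =
        FreeGroup.lift f₀ := by
      apply FreeGroup.ext_hom
      intro i
      rw [FreeGroup.lift_apply_of]
      exact PresentedGroup.toGroup.of hkill
    rw [h1]
    exact (DFunLike.congr_fun h2 w).trans (DFunLike.congr_fun hliftf w)
  have hΛq₀ : Λ t₀ ξ L q₀ = 1 := by
    apply Λkill q₀ (hN q₀ (Set.mem_insert _ _))
    rw [hq₀def, map_mul, map_inv, hprojρ, hw₀, hprojt]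
    simp
  have hΨt : Ψ t₀ = HNNExtension.t := by
    have h0 := hΨproj w₀
    rw [hw₀] at h0
    have h1 : ρ w₀ = q₀ * tF := by rw [hq₀def]; group
    rw [h0, h1, map_mul, hΛq₀, one_mul, Λ_tF]
  have hΦΛ : ∀ w, (Φ t₀ ξ L) (Λ t₀ ξ L w) = projF w := by
    have hcomm : (Φ t₀ ξ L).comp (Λ t₀ ξ L) = projF := by
      apply FreeGroup.ext_hom
      intro o
      cases o with
      | none =>
          show Φ t₀ ξ L (Λ t₀ ξ L tF) = projF tF
          rw [Λ_tF, Φ_t, hprojt]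
      | some i =>
          show Φ t₀ ξ L (Λ t₀ ξ L (xF i)) = projF (xF i)
          rw [Λ_xF, Φ_of, hprojx]
    exact fun w => DFunLike.congr_fun hcomm w
  have hsurj₀ : Function.Surjective proj₀ := by
    intro x
    obtain ⟨p, hp⟩ := PresentedGroup.mk_surjective rels (θ x)
    exact ⟨p, by show θ.symm _ = x; rw [hp, MulEquiv.symm_apply_apply]⟩
  have hleft : ∀ x : π, Φ t₀ ξ L (Ψ x) = x := by
    intro x
    obtain ⟨w, rfl⟩ := hsurj₀ x
    rw [hΨproj, hΦΛ, hprojρ]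
  have hΨξ : ∀ i, Ψ (ξ i) = HNNExtension.of ⟨ξ i, xi_mem_AA t₀ ξ L i⟩ := by
    intro i
    have h1 : Ψ (g i) = Λ t₀ ξ L (ρ (FreeGroup.of i)) := by
      rw [← hproj₀of, hΨproj]
    have h2 : Λ t₀ ξ L (ρ (FreeGroup.of i)) =
        HNNExtension.of ⟨ξ i, xi_mem_AA t₀ ξ L i⟩ * HNNExtension.t ^ (e i) := by
      rw [hρof, map_mul, map_zpow, Λ_xF, Λ_tF]
    have h3 : Ψ (ξ i) = Ψ (g i) * (Ψ t₀ ^ (e i))⁻¹ := by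
      show Ψ (g i * (t₀ ^ (e i))⁻¹) = Ψ (g i) * (Ψ t₀ ^ (e i))⁻¹
      rw [map_mul, map_inv, map_zpow]
    calc Ψ (ξ i) = Ψ (g i) * (Ψ t₀ ^ (e i))⁻¹ := h3
      _ = (HNNExtension.of ⟨ξ i, xi_mem_AA t₀ ξ L i⟩ * HNNExtension.t ^ (e i)) *
          ((HNNExtension.t : HNN t₀ ξ L) ^ (e i))⁻¹ := by rw [h1, h2, hΨt]
      _ = HNNExtension.of ⟨ξ i, xi_mem_AA t₀ ξ L i⟩ := by group
  have hΨA : ∀ x, ∀ hx : x ∈ AA t₀ ξ L, Ψ x = HNNExtension.of ⟨x, hx⟩ := by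
    intro x hx
    induction hx using Subgroup.closure_induction with
    | mem v hv =>
        obtain ⟨i, j, h0, hL', rfl⟩ := hv
        have h1 : Ψ (Y t₀ ξ i j) = HNNExtension.t ^ j *
            HNNExtension.of ⟨ξ i, xi_mem_AA t₀ ξ L i⟩ * (HNNExtension.t ^ j)⁻¹ := by
          show Ψ (t₀ ^ j * ξ i * (t₀ ^ j)⁻¹) = _
          rw [map_mul, map_mul, map_inv, map_zpow, hΨt, hΨξ]
        rw [h1, t_zpow_conj t₀ ξ L i j h0 hL']
    | one =>
        have h1 : (⟨(1 : π), Subgroup.one_mem _⟩ : ↥(AA t₀ ξ L)) = 1 := rfl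
        rw [map_one, h1, map_one]
    | mul x y hx hy ihx ihy =>
        rw [map_mul, ihx, ihy, ← map_mul]
        rfl
    | inv x hx ih =>
        rw [map_inv, ih, ← map_inv]
        rfl
  have hright : ∀ y, Ψ (Φ t₀ ξ L y) = y := by
    have hcomm : Ψ.comp (Φ t₀ ξ L) = MonoidHom.id _ := by
      refine HNNExtension.hom_ext ?_ ?_
      · apply MonoidHom.ext
        intro a
        show Ψ (Φ t₀ ξ L (HNNExtension.of a)) = HNNExtension.of a
        rw [Φ_of, hΨA (a : π) a.2]
      · show Ψ (Φ t₀ ξ L HNNExtension.t) = HNNExtension.t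
        rw [Φ_t, hΨt]
    exact fun y => DFunLike.congr_fun hcomm y
  have hε₀Λ : ∀ w, canonicalEps ((BB t₀ ξ L).subgroupOf (AA t₀ ξ L))
      ((BB' t₀ ξ L).subgroupOf (AA t₀ ξ L)) (φA t₀ ξ L) (Λ t₀ ξ L w) = eZ w := by
    have hcomm : (canonicalEps ((BB t₀ ξ L).subgroupOf (AA t₀ ξ L))
        ((BB' t₀ ξ L).subgroupOf (AA t₀ ξ L)) (φA t₀ ξ L)).comp (Λ t₀ ξ L) = eZ := by
      apply FreeGroup.ext_hom
      intro o
      cases o with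
      | none =>
          show canonicalEps _ _ _ (Λ t₀ ξ L tF) = eZ (tF : FGSplitAux.F n)
          rw [Λ_tF, eZ_tF]
          simp [canonicalEps]
      | some i =>
          show canonicalEps _ _ _ (Λ t₀ ξ L (xF i)) = eZ (xF i)
          rw [Λ_xF, eZ_xF]
          simp [canonicalEps]
    exact fun w => DFunLike.congr_fun hcomm w
  have hcompat : ∀ x : π, ε x = canonicalEps ((BB t₀ ξ L).subgroupOf (AA t₀ ξ L))
      ((BB' t₀ ξ L).subgroupOf (AA t₀ ξ L)) (φA t₀ ξ L) (Ψ x) := by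
    intro x
    obtain ⟨w, rfl⟩ := hsurj₀ x
    rw [hΨproj, hε₀Λ, ← hεF, hprojρ]
  have hfgA : Group.FG ↥(AA t₀ ξ L) := by
    rw [Group.fg_iff_subgroup_fg, Subgroup.fg_iff]
    refine ⟨_, rfl, ?_⟩
    apply Set.Finite.subset (Set.Finite.image (fun p : Fin n × ℤ => Y t₀ ξ p.1 p.2)
      ((Set.finite_univ (α := Fin n)).prod (Set.finite_Icc (0 : ℤ) (L : ℤ))))
    rintro w ⟨i, j, h0, h1, rfl⟩
    exact ⟨(i, j), ⟨Set.mem_univ _, Set.mem_Icc.2 ⟨h0, h1⟩⟩, rfl⟩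
  have hfgB : Group.FG ↥(BB t₀ ξ L) := by
    rw [Group.fg_iff_subgroup_fg, Subgroup.fg_iff]
    refine ⟨_, rfl, ?_⟩
    apply Set.Finite.subset (Set.Finite.image (fun p : Fin n × ℤ => Y t₀ ξ p.1 p.2)
      ((Set.finite_univ (α := Fin n)).prod (Set.finite_Icc (0 : ℤ) (L : ℤ))))
    rintro w ⟨i, j, h0, h1, rfl⟩
    exact ⟨(i, j), ⟨Set.mem_univ _, Set.mem_Icc.2 ⟨h0, by omega⟩⟩, rfl⟩
  have hfgBsub : Group.FG ↥((BB t₀ ξ L).subgroupOf (AA t₀ ξ L)) := by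
    haveI := hfgB
    exact Group.fg_of_surjective
      (f := ((Subgroup.subgroupOfEquivOfLe (BB_le_AA t₀ ξ L)).symm.toMonoidHom))
      (MulEquiv.surjective _)
  refine ⟨{ A := ↥(AA t₀ ξ L)
            B := (BB t₀ ξ L).subgroupOf (AA t₀ ξ L)
            B' := (BB' t₀ ξ L).subgroupOf (AA t₀ ξ L)
            φ := φA t₀ ξ L
            f := { toFun := Ψ, invFun := Φ t₀ ξ L, left_inv := hleft, right_inv := hright,
                   map_mul' := map_mul Ψ }
            compat := hcompat }, hfgA, hfgBsub⟩
end

section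
/- Let A be a group with subgroups B, B' ≤ A and φ : B ≃ B' an isomorphism, let π = HNN(A,B,B',φ) with canonical epimorphism ε₀ : π → ℤ. Assume B is a free group of rank n (i.e., B ≅ FreeGroup (Fin n)), and assume there exists g ∈ A such that the homomorphism from the free product B ∗ ℤ to A induced by the inclusion B ↪ A and by sending the generator of ℤ to g is injective. Then for every integer k > n there exist a group A₁, subgroups B₁, B₁' ≤ A₁ with B₁ ≅ FreeGroup (Fin k), an isomorphism φ₁ : B₁ ≃ B₁', and a splitting f : π ≅ HNN(A₁,B₁,B₁',φ₁) of (π, ε₀); that is, (π, ε₀) splits over free groups of every rank greater than n. -/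
open Monoid Coprod

/-- A splitting of `(π, ε)` over a free group of rank `k`: an HNN decomposition of `π`
with base group `A₁` and amalgamating subgroup `B₁ ≅ FreeGroup (Fin k)`, compatible
with `ε`. -/
structure FreeSplitting (π : Type) [Group π] (ε : π →* Multiplicative ℤ) (k : ℕ) where
  A₁ : Type
  [instGroupA₁ : Group A₁]
  B₁ : Subgroup A₁
  B₁' : Subgroup A₁
  freeB₁ : B₁ ≃* FreeGroup (Fin k)
  φ₁ : B₁ ≃* B₁'
  f : π ≃* HNNExtension A₁ B₁ B₁' φ₁
  compat : ∀ x : π, ε x = canonicalEps B₁ B₁' φ₁ (f x)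

attribute [instance] FreeSplitting.instGroupA₁

namespace SplitAux

open Function

/-- Free product of injective maps (in `CoprodI` form) is injective. -/
theorem coprodI_map_injective {ι : Type} {M N : ι → Type} [∀ i, Group (M i)]
    [∀ i, Group (N i)] (f : ∀ i, M i →* N i) (hf : ∀ i, Function.Injective (f i)) :
    Function.Injective (CoprodI.lift (fun i => (CoprodI.of (M := N)).comp (f i))) := by
  classical
  set F := CoprodI.lift (fun i => (CoprodI.of (M := N)).comp (f i)) with hF
  rw [injective_iff_map_eq_one]
  intro x hx
  set w : CoprodI.Word M := CoprodI.Word.equiv x with hw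
  have hxw : x = w.prod := (CoprodI.Word.equiv.symm_apply_apply x).symm
  let w' : CoprodI.Word N :=
    { toList := w.toList.map (fun p => ⟨p.1, f p.1 p.2⟩)
      ne_one := by
        rintro l hl
        simp only [List.mem_map] at hl
        rcases hl with ⟨p, hp, rfl⟩
        exact fun h => w.ne_one p hp ((hf p.1) (by simpa using h))
      chain_ne := by
        refine List.isChain_map_of_isChain _ ?_ w.chain_ne
        intro a b h
        exact h }
  have hprod : F x = w'.prod := by
    rw [hxw]
    show F (List.prod _) = List.prod _
    rw [map_list_prod F, List.map_map, List.map_map]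
    congr 1
  have hw' : w' = CoprodI.Word.empty := by
    have : w'.prod = (CoprodI.Word.empty (M := N)).prod := by
      rw [← hprod, hx, CoprodI.Word.prod_empty]
    exact (CoprodI.Word.equiv (M := N)).symm.injective this
  have hnil : w.toList = [] := by
    have := congrArg CoprodI.Word.toList hw'
    simpa [w', CoprodI.Word.empty] using this
  rw [hxw]
  show List.prod _ = 1
  rw [hnil]
  simp

/-- `Multiplicative ℤ` is free on one generator. -/
noncomputable def multZEquivFreeGroupUnit : Multiplicative ℤ ≃* FreeGroup Unit :=
  MonoidHom.toMulEquiv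
    (zpowersHom (FreeGroup Unit) (FreeGroup.of Unit.unit))
    (FreeGroup.lift (fun _ => Multiplicative.ofAdd (1 : ℤ)))
    (by
      apply MonoidHom.ext_mint
      simp [zpowersHom_apply])
    (by
      apply FreeGroup.ext_hom
      rintro ⟨⟩
      simp [zpowersHom_apply])

/-- Congruence of binary free products. -/
noncomputable def coprodCongr {M N M' N' : Type} [Group M] [Group N] [Group M'] [Group N']
    (e₁ : M ≃* M') (e₂ : N ≃* N') : (M ∗ N) ≃* (M' ∗ N') :=
  MonoidHom.toMulEquiv
    (Coprod.map e₁.toMonoidHom e₂.toMonoidHom)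
    (Coprod.map e₁.symm.toMonoidHom e₂.symm.toMonoidHom)
    (by apply Coprod.hom_ext <;> ext x <;> simp)
    (by apply Coprod.hom_ext <;> ext x <;> simp)

@[simp] theorem coprodCongr_inl {M N M' N' : Type} [Group M] [Group N] [Group M'] [Group N']
    (e₁ : M ≃* M') (e₂ : N ≃* N') (x : M) :
    coprodCongr e₁ e₂ (Coprod.inl x) = Coprod.inl (e₁ x) := by
  simp [coprodCongr]

@[simp] theorem coprodCongr_inr {M N M' N' : Type} [Group M] [Group N] [Group M'] [Group N']
    (e₁ : M ≃* M') (e₂ : N ≃* N') (x : N) :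
    coprodCongr e₁ e₂ (Coprod.inr x) = Coprod.inr (e₂ x) := by
  simp [coprodCongr]

/-- The binary free product of free groups is free on the sum of the generators. -/
noncomputable def freeGroupSumEquiv (α β : Type) :
    (FreeGroup α ∗ FreeGroup β) ≃* FreeGroup (α ⊕ β) :=
  MonoidHom.toMulEquiv
    (Coprod.lift (FreeGroup.lift (fun a => FreeGroup.of (Sum.inl a)))
      (FreeGroup.lift (fun b => FreeGroup.of (Sum.inr b))))
    (FreeGroup.lift (Sum.elim (fun a => Coprod.inl (FreeGroup.of a))
      (fun b => Coprod.inr (FreeGroup.of b))))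
    (by
      apply Coprod.hom_ext <;> apply FreeGroup.ext_hom <;> intro a <;> simp)
    (by
      apply FreeGroup.ext_hom
      rintro (a | b) <;> simp)

/-- If `B` is free of rank `m` then `B ∗ ℤ` is free of rank `m + 1`. -/
noncomputable def freeRankSucc {B : Type} [Group B] {m : ℕ}
    (freeB : B ≃* FreeGroup (Fin m)) :
    (B ∗ Multiplicative ℤ) ≃* FreeGroup (Fin (m + 1)) :=
  (coprodCongr freeB multZEquivFreeGroupUnit).trans
    ((freeGroupSumEquiv (Fin m) Unit).trans
      (FreeGroup.freeGroupCongr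
        ((Equiv.sumCongr (Equiv.refl (Fin m)) (Equiv.ofUnique Unit (Fin 1))).trans
          finSumFinEquiv)))

section Bridge

variable (M N : Type) [Group M] [Group N]

/-- The `Bool`-indexed family for a binary coproduct. -/
abbrev boolFam : Bool → Type := fun b => cond b M N

instance : ∀ b, Group (boolFam M N b) := fun b => by cases b <;> dsimp [boolFam] <;> infer_instance

/-- Binary coproduct as indexed coproduct. -/
noncomputable def coprodEquivCoprodI : (M ∗ N) ≃* CoprodI (boolFam M N) :=
  MonoidHom.toMulEquiv
    (Coprod.lift (CoprodI.of (M := boolFam M N) (i := true))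
      (CoprodI.of (M := boolFam M N) (i := false)))
    (CoprodI.lift (fun b => Bool.rec (motive := fun b => boolFam M N b →* M ∗ N)
      Coprod.inr Coprod.inl b))
    (by
      apply Coprod.hom_ext
      · ext x
        simp only [MonoidHom.coe_comp, Function.comp_apply, Coprod.lift_apply_inl,
          MonoidHom.id_apply]
        exact CoprodI.lift_of (M := boolFam M N) (i := true) _ x
      · ext x
        simp only [MonoidHom.coe_comp, Function.comp_apply, Coprod.lift_apply_inr,
          MonoidHom.id_apply]
        exact CoprodI.lift_of (M := boolFam M N) (i := false) _ x)
    (by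
      apply CoprodI.ext_hom
      intro b
      cases b <;> ext x <;>
        simp only [MonoidHom.coe_comp, Function.comp_apply, MonoidHom.id_apply] <;>
        rw [CoprodI.lift_of]
      · exact Coprod.lift_apply_inr _ _ x
      · exact Coprod.lift_apply_inl _ _ x)

@[simp] theorem coprodEquivCoprodI_inl (x : M) :
    coprodEquivCoprodI M N (Coprod.inl x) = CoprodI.of (i := true) x := by
  simp [coprodEquivCoprodI]

@[simp] theorem coprodEquivCoprodI_inr (x : N) :
    coprodEquivCoprodI M N (Coprod.inr x) = CoprodI.of (i := false) x := by
  simp [coprodEquivCoprodI]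

variable {M N} {M' N' : Type} [Group M'] [Group N']

/-- A free product of injective group homomorphisms is injective. -/
theorem coprod_map_injective {f : M →* M'} {g : N →* N'}
    (hf : Function.Injective f) (hg : Function.Injective g) :
    Function.Injective (Coprod.map f g) := by
  classical
  let fb : ∀ b, boolFam M N b →* boolFam M' N' b :=
    fun b => Bool.rec (motive := fun b => boolFam M N b →* boolFam M' N' b) g f b
  have hfb : ∀ b, Function.Injective (fb b) := by
    intro b; cases b
    · exact hg
    · exact hf
  have key : (coprodEquivCoprodI M' N').toMonoidHom.comp (Coprod.map f g) =
      (CoprodI.lift (fun b => (CoprodI.of (M := boolFam M' N')).comp (fb b))).comp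
        (coprodEquivCoprodI M N).toMonoidHom := by
    apply Coprod.hom_ext
    · ext x
      simp only [MonoidHom.coe_comp, Function.comp_apply, MulEquiv.coe_toMonoidHom,
        Coprod.map_apply_inl, coprodEquivCoprodI_inl]
      exact (CoprodI.lift_of (M := boolFam M N) (i := true)
        (fun b => (CoprodI.of (M := boolFam M' N')).comp (fb b)) x).symm
    · ext x
      simp only [MonoidHom.coe_comp, Function.comp_apply, MulEquiv.coe_toMonoidHom,
        Coprod.map_apply_inr, coprodEquivCoprodI_inr]
      exact (CoprodI.lift_of (M := boolFam M N) (i := false)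
        (fun b => (CoprodI.of (M := boolFam M' N')).comp (fb b)) x).symm
  have : Function.Injective ((coprodEquivCoprodI M' N').toMonoidHom.comp (Coprod.map f g)) := by
    rw [key]
    exact ((coprodI_map_injective fb hfb).comp (coprodEquivCoprodI M N).injective)
  exact Function.Injective.of_comp this

end Bridge

/-! ### The rank-increasing step -/

section Step

variable {A : Type} [Group A] (B B' : Subgroup A) (φ : B ≃* B') (g : A)

/-- The two-element family for the pushout `A ∗_{B'} (B' ∗ ℤ)`. -/
abbrev StepFam : Bool → Type := fun b => cond b A ((B' : Type) ∗ Multiplicative ℤ)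

instance : ∀ b, Group (StepFam B' b) := fun b => by cases b <;> dsimp [StepFam] <;> infer_instance

/-- The base maps of the pushout. -/
def stepMaps : ∀ b : Bool, (B' : Type) →* StepFam B' b :=
  fun b => Bool.rec (motive := fun b => (B' : Type) →* StepFam B' b)
    Coprod.inl B'.subtype b

theorem stepMaps_injective : ∀ b, Function.Injective (stepMaps B' b) := by
  intro b
  cases b
  · exact Coprod.inl_injective
  · exact B'.subtype_injective

/-- The new base group `A₁ = A ∗_{B'} (B' ∗ ℤ)`. -/
abbrev StepA : Type := Monoid.PushoutI (stepMaps B')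

/-- The inclusion of `A` in `A₁`. -/
def ofT : A →* StepA B' := Monoid.PushoutI.of (φ := stepMaps B') true

/-- The inclusion of `B' ∗ ℤ` in `A₁`. -/
def ofF : ((B' : Type) ∗ Multiplicative ℤ) →* StepA B' :=
  Monoid.PushoutI.of (φ := stepMaps B') false

theorem ofT_injective : Function.Injective (ofT B') :=
  Monoid.PushoutI.of_injective (stepMaps_injective B') true

theorem ofF_injective : Function.Injective (ofF B') :=
  Monoid.PushoutI.of_injective (stepMaps_injective B') false

theorem ofF_inl (y : B') : ofF B' (Coprod.inl y) = ofT B' ↑y :=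
  (Monoid.PushoutI.of_apply_eq_base (stepMaps B') false y).trans
    (Monoid.PushoutI.of_apply_eq_base (stepMaps B') true y).symm

/-- The embedding `B ∗ ℤ → A` given by the hypothesis. -/
def LMap : ((B : Type) ∗ Multiplicative ℤ) →* A := Coprod.lift B.subtype (zpowersHom A g)

/-- The embedding `B ∗ ℤ → A₁` whose range is the new splitting subgroup. -/
def ψMap : ((B : Type) ∗ Multiplicative ℤ) →* StepA B' := (ofT B').comp (LMap B g)

theorem ψMap_injective (hg : Function.Injective (LMap B g)) :
    Function.Injective (ψMap B B' g) :=
  (ofT_injective B').comp hg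

/-- The new splitting subgroup `B₁ = ⟨B, g⟩`. -/
abbrev BOne : Subgroup (StepA B') := (ψMap B B' g).range

/-- The other side `B₁' = B' ∗ ℤ`. -/
abbrev BOne' : Subgroup (StepA B') := (ofF B').range

/-- The abstract isomorphism `B ∗ ℤ ≃ B' ∗ ℤ`. -/
noncomputable def χe : ((B : Type) ∗ Multiplicative ℤ) ≃* ((B' : Type) ∗ Multiplicative ℤ) :=
  coprodCongr φ (MulEquiv.refl _)

/-- The new splitting isomorphism `φ₁ : B₁ ≃ B₁'`. -/
noncomputable def φOne (hg : Function.Injective (LMap B g)) : BOne B B' g ≃* BOne' B' :=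
  ((MonoidHom.ofInjective (ψMap_injective B B' g hg)).symm.trans (χe B B' φ)).trans
    (MonoidHom.ofInjective (ofF_injective B'))

theorem mem_BOne (c : (B : Type) ∗ Multiplicative ℤ) : ψMap B B' g c ∈ BOne B B' g :=
  ⟨c, rfl⟩

theorem φOne_apply (hg : Function.Injective (LMap B g)) (x : BOne B B' g)
    (c : (B : Type) ∗ Multiplicative ℤ) (hc : (x : StepA B') = ψMap B B' g c) :
    (φOne B B' φ g hg x : StepA B') = ofF B' (χe B B' φ c) := by
  have h1 : (MonoidHom.ofInjective (ψMap_injective B B' g hg)).symm x = c := by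
    apply (MonoidHom.ofInjective (ψMap_injective B B' g hg)).symm_apply_eq.2
    apply Subtype.ext
    rw [hc]
    exact (MonoidHom.ofInjective_apply _).symm
  rw [φOne, MulEquiv.trans_apply, MulEquiv.trans_apply, h1]
  exact MonoidHom.ofInjective_apply _

/-- The new stable generator of `B₁'`. -/
def gOne : StepA B' := ofF B' (Coprod.inr (Multiplicative.ofAdd 1))

/-- Retraction of `A₁` onto `A ∗ ℤ`. -/
def ρMap : StepA B' →* ((A : Type) ∗ Multiplicative ℤ) :=
  Monoid.PushoutI.lift
    (fun b => Bool.rec (motive := fun b => StepFam B' b →* ((A : Type) ∗ Multiplicative ℤ))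
      (Coprod.lift (Coprod.inl.comp B'.subtype) Coprod.inr) Coprod.inl b)
    (Coprod.inl.comp B'.subtype)
    (by
      intro b
      cases b
      · exact Coprod.lift_comp_inl _ _
      · rfl)

set_option maxHeartbeats 1000000 in
theorem ρ_ofT (a : A) : ρMap B' (ofT B' a) = Coprod.inl a :=
  Monoid.PushoutI.lift_of
    (fun b => Bool.rec (motive := fun b => StepFam B' b →* ((A : Type) ∗ Multiplicative ℤ))
      (Coprod.lift (Coprod.inl.comp B'.subtype) Coprod.inr) Coprod.inl b)
    (Coprod.inl.comp B'.subtype) _ (i := true) a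

theorem ρ_ofF (y : (B' : Type) ∗ Multiplicative ℤ) :
    ρMap B' (ofF B' y) = Coprod.lift (Coprod.inl.comp B'.subtype) Coprod.inr y :=
  Monoid.PushoutI.lift_of
    (fun b => Bool.rec (motive := fun b => StepFam B' b →* ((A : Type) ∗ Multiplicative ℤ))
      (Coprod.lift (Coprod.inl.comp B'.subtype) Coprod.inr) Coprod.inl b)
    (Coprod.inl.comp B'.subtype) _ (i := false) y

theorem BOne_coe (hg : Function.Injective (LMap B g)) (x : BOne B B' g) :
    (x : StepA B') =
      ψMap B B' g ((MonoidHom.ofInjective (ψMap_injective B B' g hg)).symm x) := by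
  conv_lhs => rw [← (MonoidHom.ofInjective (ψMap_injective B B' g hg)).apply_symm_apply x]
  exact MonoidHom.ofInjective_apply _

/-- `B₁` together with `g₁` generates a free product `B₁ ∗ ℤ` in `A₁`. -/
theorem θ_injective (hg : Function.Injective (LMap B g)) :
    Function.Injective
      (Coprod.lift (BOne B B' g).subtype (zpowersHom (StepA B') (gOne B'))) := by
  set j : (BOne B B' g : Type) →* A :=
    (LMap B g).comp (MonoidHom.ofInjective (ψMap_injective B B' g hg)).symm.toMonoidHom with hj
  have hjinj : Function.Injective j :=
    hg.comp (MonoidHom.ofInjective (ψMap_injective B B' g hg)).symm.injective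
  have hcomp : (ρMap B').comp
      (Coprod.lift (BOne B B' g).subtype (zpowersHom (StepA B') (gOne B'))) =
      Coprod.map j (MonoidHom.id (Multiplicative ℤ)) := by
    apply Coprod.hom_ext
    · ext x
      simp only [MonoidHom.coe_comp, Function.comp_apply, Coprod.lift_apply_inl,
        Coprod.map_apply_inl, Subgroup.coe_subtype]
      rw [BOne_coe B B' g hg x]
      rw [show ψMap B B' g ((MonoidHom.ofInjective (ψMap_injective B B' g hg)).symm x) =
        ofT B' (LMap B g ((MonoidHom.ofInjective (ψMap_injective B B' g hg)).symm x)) from rfl]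
      rw [ρ_ofT]
      rfl
    · apply MonoidHom.ext_mint
      simp only [MonoidHom.coe_comp, Function.comp_apply, Coprod.lift_apply_inr,
        Coprod.map_apply_inr, zpowersHom_apply, toAdd_ofAdd, zpow_one, MonoidHom.id_apply]
      rw [gOne, ρ_ofF]
      simp
  have h2 : Function.Injective (⇑(ρMap B') ∘
      ⇑(Coprod.lift (BOne B B' g).subtype (zpowersHom (StepA B') (gOne B')))) := by
    rw [← MonoidHom.coe_comp, hcomp]
    exact coprod_map_injective hjinj (fun a b h => h)
  exact Function.Injective.of_comp h2

/-- The map from `A₁` back to `π = HNN(A, B, B', φ)`. -/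
def FMap : StepA B' →* HNNExtension A B B' φ :=
  Monoid.PushoutI.lift
    (fun b => Bool.rec (motive := fun b => StepFam B' b →* HNNExtension A B B' φ)
      (Coprod.lift (HNNExtension.of.comp B'.subtype)
        (zpowersHom _ (HNNExtension.t * HNNExtension.of g * HNNExtension.t⁻¹)))
      HNNExtension.of b)
    (HNNExtension.of.comp B'.subtype)
    (by
      intro b
      cases b
      · exact Coprod.lift_comp_inl _ _
      · rfl)

set_option maxHeartbeats 1000000 in
theorem F_ofT (a : A) : FMap B B' φ g (ofT B' a) = HNNExtension.of a :=
  Monoid.PushoutI.lift_of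
    (fun b => Bool.rec (motive := fun b => StepFam B' b →* HNNExtension A B B' φ)
      (Coprod.lift (HNNExtension.of.comp B'.subtype)
        (zpowersHom _ (HNNExtension.t * HNNExtension.of g * HNNExtension.t⁻¹)))
      HNNExtension.of b)
    (HNNExtension.of.comp B'.subtype) _ (i := true) a

theorem F_ofF (y : (B' : Type) ∗ Multiplicative ℤ) :
    FMap B B' φ g (ofF B' y) =
      Coprod.lift (HNNExtension.of.comp B'.subtype)
        (zpowersHom _ (HNNExtension.t * HNNExtension.of g * HNNExtension.t⁻¹)) y :=
  Monoid.PushoutI.lift_of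
    (fun b => Bool.rec (motive := fun b => StepFam B' b →* HNNExtension A B B' φ)
      (Coprod.lift (HNNExtension.of.comp B'.subtype)
        (zpowersHom _ (HNNExtension.t * HNNExtension.of g * HNNExtension.t⁻¹)))
      HNNExtension.of b)
    (HNNExtension.of.comp B'.subtype) _ (i := false) y

theorem conj_key :
    ((MulAut.conj (HNNExtension.t : HNNExtension A B B' φ)).toMonoidHom.comp
      ((FMap B B' φ g).comp (ψMap B B' g))) =
      ((FMap B B' φ g).comp (ofF B')).comp (χe B B' φ).toMonoidHom := by
  apply Coprod.hom_ext
  · ext b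
    simp only [MonoidHom.coe_comp, Function.comp_apply, MulEquiv.coe_toMonoidHom,
      MulAut.conj_apply, coprodCongr_inl, χe]
    rw [show ψMap B B' g (Coprod.inl b) = ofT B' (↑b : A) from by simp [ψMap, LMap]]
    rw [F_ofT, ofF_inl, F_ofT]
    have h := HNNExtension.t_mul_of (φ := φ) b
    rw [h]
    simp [mul_assoc]
  · apply MonoidHom.ext_mint
    simp only [MonoidHom.coe_comp, Function.comp_apply, MulEquiv.coe_toMonoidHom,
      MulAut.conj_apply, coprodCongr_inr, χe, MulEquiv.refl_apply]
    rw [show ψMap B B' g (Coprod.inr (Multiplicative.ofAdd 1)) = ofT B' g from by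
      simp [ψMap, LMap]]
    rw [F_ofT, F_ofF]
    simp

theorem t_mul_F (hg : Function.Injective (LMap B g)) (x : BOne B B' g) :
    HNNExtension.t * FMap B B' φ g ↑x =
      FMap B B' φ g ↑(φOne B B' φ g hg x) * HNNExtension.t := by
  obtain ⟨c, hc⟩ := x.2
  rw [φOne_apply B B' φ g hg x c hc.symm]
  have h := DFunLike.congr_fun (conj_key B B' φ g) c
  simp only [MonoidHom.coe_comp, Function.comp_apply, MulEquiv.coe_toMonoidHom,
    MulAut.conj_apply] at h
  rw [show ((x : StepA B')) = ψMap B B' g c from hc.symm, ← h]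
  simp [mul_assoc]

/-- The forward map `π → HNN(A₁, B₁, B₁', φ₁)`. -/
noncomputable def ΨMap (hg : Function.Injective (LMap B g)) :
    HNNExtension A B B' φ →*
      HNNExtension (StepA B') (BOne B B' g) (BOne' B') (φOne B B' φ g hg) :=
  HNNExtension.lift (HNNExtension.of.comp (ofT B')) HNNExtension.t
    (by
      intro a
      have mem : ofT B' ↑a ∈ BOne B B' g := ⟨Coprod.inl a, by simp [ψMap, LMap]⟩
      have h := HNNExtension.t_mul_of (φ := φOne B B' φ g hg) (⟨ofT B' ↑a, mem⟩ : BOne B B' g)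
      have hval : ((φOne B B' φ g hg ⟨ofT B' ↑a, mem⟩ : BOne' B') : StepA B') =
          ofT B' ↑(φ a) := by
        rw [φOne_apply B B' φ g hg _ (Coprod.inl a) (by simp [ψMap, LMap])]
        rw [show χe B B' φ (Coprod.inl a) = Coprod.inl (φ a) from coprodCongr_inl _ _ _]
        exact ofF_inl B' (φ a)
      simp only [MonoidHom.coe_comp, Function.comp_apply]
      rw [show (ofT B' ↑a) = ((⟨ofT B' ↑a, mem⟩ : BOne B B' g) : StepA B') from rfl, h, hval])

/-- The backward map `HNN(A₁, B₁, B₁', φ₁) → π`. -/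
noncomputable def ΦMap (hg : Function.Injective (LMap B g)) :
    HNNExtension (StepA B') (BOne B B' g) (BOne' B') (φOne B B' φ g hg) →*
      HNNExtension A B B' φ :=
  HNNExtension.lift (FMap B B' φ g) HNNExtension.t (t_mul_F B B' φ g hg)


theorem Φ_of (hg : Function.Injective (LMap B g)) (x : StepA B') :
    ΦMap B B' φ g hg (HNNExtension.of x) = FMap B B' φ g x := by
  simp [ΦMap]

theorem Ψ_of (hg : Function.Injective (LMap B g)) (a : A) :
    ΨMap B B' φ g hg (HNNExtension.of a) = HNNExtension.of (ofT B' a) := by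
  simp [ΨMap]

theorem Ψ_t (hg : Function.Injective (LMap B g)) :
    ΨMap B B' φ g hg HNNExtension.t = HNNExtension.t := by
  simp [ΨMap]

theorem Φ_t (hg : Function.Injective (LMap B g)) :
    ΦMap B B' φ g hg HNNExtension.t = HNNExtension.t := by
  simp [ΦMap]

/-- The rank-increasing isomorphism of HNN decompositions. -/
noncomputable def stepEquiv (hg : Function.Injective (LMap B g)) :
    HNNExtension A B B' φ ≃*
      HNNExtension (StepA B') (BOne B B' g) (BOne' B') (φOne B B' φ g hg) :=
  MonoidHom.toMulEquiv (ΨMap B B' φ g hg) (ΦMap B B' φ g hg)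
    (by
      apply HNNExtension.hom_ext
      · ext a
        simp [Ψ_of, Φ_of, F_ofT]
      · simp [Ψ_t, Φ_t])
    (by
      apply HNNExtension.hom_ext
      · apply Monoid.PushoutI.hom_ext_nonempty
        intro b
        cases b
        · apply Coprod.hom_ext
          · ext y
            show ΨMap B B' φ g hg (ΦMap B B' φ g hg
              (HNNExtension.of (ofF B' (Coprod.inl y)))) = HNNExtension.of (ofF B' (Coprod.inl y))
            rw [Φ_of, F_ofF]
            simp only [Coprod.lift_apply_inl, MonoidHom.coe_comp, Function.comp_apply,
              Subgroup.coe_subtype]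
            rw [Ψ_of, ofF_inl]
          · apply MonoidHom.ext_mint
            show ΨMap B B' φ g hg (ΦMap B B' φ g hg (HNNExtension.of
                (ofF B' (Coprod.inr (Multiplicative.ofAdd 1))))) =
              HNNExtension.of (ofF B' (Coprod.inr (Multiplicative.ofAdd 1)))
            rw [Φ_of, F_ofF]
            simp only [Coprod.lift_apply_inr, zpowersHom_apply, toAdd_ofAdd, zpow_one]
            simp only [map_mul, map_inv, Ψ_t, Ψ_of]
            have memg : ofT B' g ∈ BOne B B' g := ⟨Coprod.inr (Multiplicative.ofAdd 1), by
              simp [ψMap, LMap, zpowersHom_apply]⟩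
            have h := HNNExtension.t_mul_of (φ := φOne B B' φ g hg)
              (⟨ofT B' g, memg⟩ : BOne B B' g)
            have hval : ((φOne B B' φ g hg ⟨ofT B' g, memg⟩ : BOne' B') : StepA B') =
                ofF B' (Coprod.inr (Multiplicative.ofAdd 1)) := by
              rw [φOne_apply B B' φ g hg _ (Coprod.inr (Multiplicative.ofAdd 1)) (by
                simp [ψMap, LMap, zpowersHom_apply])]
              rw [show χe B B' φ (Coprod.inr (Multiplicative.ofAdd 1)) =
                Coprod.inr (Multiplicative.ofAdd 1) from by simp [χe]]
            rw [show (ofT B' g) = ((⟨ofT B' g, memg⟩ : BOne B B' g) : StepA B') from rfl, h, hval]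
            simp [mul_assoc]
        · ext a
          show ΨMap B B' φ g hg (ΦMap B B' φ g hg (HNNExtension.of (ofT B' a))) =
            HNNExtension.of (ofT B' a)
          rw [Φ_of, F_ofT, Ψ_of]
      · simp [Ψ_t, Φ_t])

theorem step_compat (hg : Function.Injective (LMap B g)) (x : HNNExtension A B B' φ) :
    canonicalEps B B' φ x =
      canonicalEps (BOne B B' g) (BOne' B') (φOne B B' φ g hg)
        (stepEquiv B B' φ g hg x) := by
  have h : (canonicalEps (BOne B B' g) (BOne' B') (φOne B B' φ g hg)).comp
      ((ΨMap B B' φ g hg)) = canonicalEps B B' φ := by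
    apply HNNExtension.hom_ext
    · ext a
      simp [canonicalEps, Ψ_of]
    · simp [canonicalEps, Ψ_t]
  have hx : stepEquiv B B' φ g hg x = ΨMap B B' φ g hg x := rfl
  rw [hx, ← h]
  rfl

end Step

/-- A `FreeSplitting` together with the additional data of an element `g₁` of the base
group generating a free product with `B₁`. -/
structure GoodSplit (π : Type) [Group π] (ε : π →* Multiplicative ℤ) (m : ℕ) where
  A₁ : Type
  [instGroupA₁ : Group A₁]
  B₁ : Subgroup A₁
  B₁' : Subgroup A₁
  freeB₁ : B₁ ≃* FreeGroup (Fin m)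
  φ₁ : B₁ ≃* B₁'
  g₁ : A₁
  hg₁ : Function.Injective (Coprod.lift B₁.subtype (zpowersHom A₁ g₁) :
    (B₁ ∗ Multiplicative ℤ) →* A₁)
  f : π ≃* HNNExtension A₁ B₁ B₁' φ₁
  compat : ∀ x : π, ε x = canonicalEps B₁ B₁' φ₁ (f x)

attribute [instance] GoodSplit.instGroupA₁

/-- Forget the extra data. -/
noncomputable def GoodSplit.toFreeSplitting {π : Type} [Group π] {ε : π →* Multiplicative ℤ}
    {m : ℕ} (S : GoodSplit π ε m) : FreeSplitting π ε m where
  A₁ := S.A₁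
  B₁ := S.B₁
  B₁' := S.B₁'
  freeB₁ := S.freeB₁
  φ₁ := S.φ₁
  f := S.f
  compat := S.compat

/-- Transport a `GoodSplit` along a compatible isomorphism. -/
noncomputable def GoodSplit.transport {π π' : Type} [Group π] [Group π']
    {ε : π →* Multiplicative ℤ} {ε' : π' →* Multiplicative ℤ} {m : ℕ}
    (e : π ≃* π') (hε : ∀ x, ε x = ε' (e x)) (S : GoodSplit π' ε' m) : GoodSplit π ε m where
  A₁ := S.A₁
  B₁ := S.B₁
  B₁' := S.B₁'
  freeB₁ := S.freeB₁
  φ₁ := S.φ₁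
  g₁ := S.g₁
  hg₁ := S.hg₁
  f := e.trans S.f
  compat := fun x => (hε x).trans (S.compat (e x))

/-- The rank-increasing step, packaged. -/
noncomputable def stepGoodSplit {A : Type} [Group A] (B B' : Subgroup A) (φ : B ≃* B')
    (g : A) {m : ℕ} (freeB : B ≃* FreeGroup (Fin m))
    (hg : Function.Injective (LMap B g)) :
    GoodSplit (HNNExtension A B B' φ) (canonicalEps B B' φ) (m + 1) where
  A₁ := StepA B'
  B₁ := BOne B B' g
  B₁' := BOne' B'
  freeB₁ := (MonoidHom.ofInjective (ψMap_injective B B' g hg)).symm.trans (freeRankSucc freeB)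
  φ₁ := φOne B B' φ g hg
  g₁ := gOne B'
  hg₁ := θ_injective B B' g hg
  f := stepEquiv B B' φ g hg
  compat := step_compat B B' φ g hg

/-- Increasing the rank of a `GoodSplit` by one. -/
noncomputable def GoodSplit.succ {π : Type} [Group π] {ε : π →* Multiplicative ℤ}
    {m : ℕ} (S : GoodSplit π ε m) : GoodSplit π ε (m + 1) :=
  GoodSplit.transport S.f S.compat
    (stepGoodSplit S.B₁ S.B₁' S.φ₁ S.g₁ S.freeB₁ S.hg₁)

end SplitAux

/-- if `(π, ε₀)` splits over a free group `B` of rank `n` with base `A`,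
and some `g ∈ A` generates together with `B` a free product `B ∗ ⟨g⟩` inside `A`, then
`(π, ε₀)` splits over free groups of every rank `k > n`. -/
theorem splits_over_all_larger_free_ranks
    {A : Type} [Group A] (B B' : Subgroup A) (φ : B ≃* B') (n : ℕ)
    (hBfree : Nonempty (B ≃* FreeGroup (Fin n)))
    (g : A)
    (hg : Function.Injective (Coprod.lift B.subtype (zpowersHom A g) :
      (B ∗ Multiplicative ℤ) →* A)) :
    ∀ k : ℕ, n < k →
      Nonempty (FreeSplitting (HNNExtension A B B' φ) (canonicalEps B B' φ) k) := by
  obtain ⟨freeB⟩ := hBfree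
  have base : SplitAux.GoodSplit (HNNExtension A B B' φ) (canonicalEps B B' φ) n :=
    { A₁ := A, B₁ := B, B₁' := B', freeB₁ := freeB, φ₁ := φ, g₁ := g, hg₁ := hg,
      f := MulEquiv.refl _, compat := fun x => rfl }
  have key : ∀ j : ℕ, Nonempty (SplitAux.GoodSplit (HNNExtension A B B' φ)
      (canonicalEps B B' φ) (n + j)) := by
    intro j
    induction j with
    | zero => exact ⟨base⟩
    | succ j ih => exact ih.map SplitAux.GoodSplit.succ
  intro k hk
  obtain ⟨S⟩ := key (k - n)
  have hnk : n + (k - n) = k := by omega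
  rw [hnk] at S
  exact ⟨S.toFreeSplitting⟩
end

section
/- The one-relator group ⟨x, y, z | (y⁻¹x)² z y⁻¹ z⟩ (the presented group on three generators x, y, z with the single relator y⁻¹xy⁻¹xzy⁻¹z) is isomorphic to the free group of rank 2, FreeGroup (Fin 2). -/
namespace DBG5

abbrev rels : Set (FreeGroup (Fin 3)) :=
  {(FreeGroup.of 1)⁻¹ * FreeGroup.of 0 * (FreeGroup.of 1)⁻¹ * FreeGroup.of 0 *
      FreeGroup.of 2 * (FreeGroup.of 1)⁻¹ * FreeGroup.of 2}

abbrev P := PresentedGroup rels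

def fwdMap : Fin 3 → FreeGroup (Fin 2)
  | 0 => FreeGroup.of 1 * FreeGroup.of 0 * FreeGroup.of 0 * FreeGroup.of 1 * FreeGroup.of 0
  | 1 => FreeGroup.of 1 * FreeGroup.of 0 * FreeGroup.of 0 * FreeGroup.of 1
  | 2 => FreeGroup.of 1

def fwd : P →* FreeGroup (Fin 2) :=
  PresentedGroup.toGroup (f := fwdMap) (by
    rintro r hr
    simp only [rels, Set.mem_singleton_iff] at hr
    subst hr
    simp only [map_mul, map_inv, FreeGroup.lift_apply_of]
    show (fwdMap 1)⁻¹ * fwdMap 0 * (fwdMap 1)⁻¹ * fwdMap 0 * fwdMap 2 * (fwdMap 1)⁻¹ *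
      fwdMap 2 = 1
    simp only [fwdMap]
    group)

def bwdMap : Fin 2 → P
  | 0 => (PresentedGroup.of 1)⁻¹ * PresentedGroup.of 0
  | 1 => PresentedGroup.of 2

def bwd : FreeGroup (Fin 2) →* P := FreeGroup.lift bwdMap

lemma relP : ((PresentedGroup.of 1)⁻¹ * PresentedGroup.of 0 * (PresentedGroup.of 1)⁻¹ *
    PresentedGroup.of 0 * PresentedGroup.of 2 * (PresentedGroup.of 1)⁻¹ *
    PresentedGroup.of 2 : P) = 1 :=
  (QuotientGroup.eq_one_iff _).2 (Subgroup.subset_normalClosure rfl)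

lemma left0 : bwd (fwd (PresentedGroup.of 0)) = (PresentedGroup.of 0 : P) := by
  have hx := relP
  set x := (PresentedGroup.of 0 : P)
  set y := (PresentedGroup.of 1 : P)
  set z := (PresentedGroup.of 2 : P)
  rw [fwd, PresentedGroup.toGroup.of]
  show bwd (fwdMap 0) = x
  simp only [fwdMap, bwd, map_mul, FreeGroup.lift_apply_of]
  show z * (y⁻¹ * x) * (y⁻¹ * x) * z * (y⁻¹ * x) = x
  rw [← mul_inv_eq_one]
  have key : z * (y⁻¹ * x) * (y⁻¹ * x) * z * (y⁻¹ * x) * x⁻¹ =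
      z * (y⁻¹ * x * y⁻¹ * x * z * y⁻¹ * z) * z⁻¹ := by group
  rw [key, hx]; group

lemma left1 : bwd (fwd (PresentedGroup.of 1)) = (PresentedGroup.of 1 : P) := by
  have hx := relP
  set x := (PresentedGroup.of 0 : P)
  set y := (PresentedGroup.of 1 : P)
  set z := (PresentedGroup.of 2 : P)
  rw [fwd, PresentedGroup.toGroup.of]
  show bwd (fwdMap 1) = y
  simp only [fwdMap, bwd, map_mul, FreeGroup.lift_apply_of]
  show z * (y⁻¹ * x) * (y⁻¹ * x) * z = y
  rw [← mul_inv_eq_one]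
  have key : z * (y⁻¹ * x) * (y⁻¹ * x) * z * y⁻¹ =
      z * (y⁻¹ * x * y⁻¹ * x * z * y⁻¹ * z) * z⁻¹ := by group
  rw [key, hx]; group

lemma left2 : bwd (fwd (PresentedGroup.of 2)) = (PresentedGroup.of 2 : P) := by
  rw [fwd, PresentedGroup.toGroup.of]
  show bwd (fwdMap 2) = PresentedGroup.of 2
  simp only [fwdMap, bwd, FreeGroup.lift_apply_of]
  rfl

lemma left : bwd.comp fwd = MonoidHom.id P := by
  apply PresentedGroup.ext
  intro i
  fin_cases i
  · exact left0
  · exact left1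
  · exact left2

lemma right : fwd.comp bwd = MonoidHom.id (FreeGroup (Fin 2)) := by
  apply FreeGroup.ext_hom
  intro i
  fin_cases i
  · show fwd (bwd (FreeGroup.of 0)) = FreeGroup.of 0
    rw [bwd, FreeGroup.lift_apply_of]
    show fwd ((PresentedGroup.of 1)⁻¹ * PresentedGroup.of 0) = FreeGroup.of 0
    rw [map_mul, map_inv, fwd, PresentedGroup.toGroup.of, PresentedGroup.toGroup.of]
    show (fwdMap 1)⁻¹ * fwdMap 0 = FreeGroup.of 0
    simp only [fwdMap]; group
  · show fwd (bwd (FreeGroup.of 1)) = FreeGroup.of 1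
    rw [bwd, FreeGroup.lift_apply_of]
    show fwd (PresentedGroup.of 2) = FreeGroup.of 1
    rw [fwd, PresentedGroup.toGroup.of]
    rfl

end DBG5

/-- the one-relator group `⟨x, y, z | (y⁻¹x)² z y⁻¹ z⟩` is isomorphic to the
free group of rank 2. (Here `x = of 0`, `y = of 1`, `z = of 2`.) -/
theorem doubleBaseGroup_is_free_of_rank_two :
    Nonempty
      (PresentedGroup
        ({(FreeGroup.of 1)⁻¹ * FreeGroup.of 0 * (FreeGroup.of 1)⁻¹ * FreeGroup.of 0 *
            FreeGroup.of 2 * (FreeGroup.of 1)⁻¹ * FreeGroup.of 2} :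
          Set (FreeGroup (Fin 3))) ≃* FreeGroup (Fin 2)) := by
  exact ⟨DBG5.fwd.toMulEquiv DBG5.bwd DBG5.left DBG5.right⟩
end

section
/- The presented group G = ⟨x, y, z | x⁻²z² = y³⟩ (three generators x, y, z with the single relator x⁻¹x⁻¹zzy⁻¹y⁻¹y⁻¹) is not a free group: there is no type S such that G is isomorphic to FreeGroup S. -/
set_option maxRecDepth 20000

/-- Homs out of a presented group correspond to functions killing the relators. -/
noncomputable def presentedHomEquiv {α : Type} {G : Type} [Group G] (rels : Set (FreeGroup α)) :
    (PresentedGroup rels →* G) ≃ {f : α → G // ∀ r ∈ rels, FreeGroup.lift f r = 1} where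
  toFun φ := ⟨fun x => φ (PresentedGroup.of x), fun r hr => by
    have h1 : FreeGroup.lift (fun x => φ (PresentedGroup.of x))
        = φ.comp (PresentedGroup.mk rels) := by
      ext x
      simp [PresentedGroup.of]
    have h2 : PresentedGroup.mk rels r = 1 :=
      (QuotientGroup.eq_one_iff r).mpr (Subgroup.subset_normalClosure hr)
    rw [h1, MonoidHom.comp_apply, h2, map_one]⟩
  invFun f := PresentedGroup.toGroup f.2
  left_inv φ := PresentedGroup.ext fun x => PresentedGroup.toGroup.of _
  right_inv f := Subtype.ext <| funext fun x => PresentedGroup.toGroup.of f.2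

theorem card_presented_hom (G : Type) [Group G] :
    Nat.card (PresentedGroup
        ({(FreeGroup.of 0)⁻¹ * (FreeGroup.of 0)⁻¹ * FreeGroup.of 2 * FreeGroup.of 2 *
            (FreeGroup.of 1)⁻¹ * (FreeGroup.of 1)⁻¹ * (FreeGroup.of 1)⁻¹} :
          Set (FreeGroup (Fin 3))) →* G)
      = Nat.card {f : Fin 3 → G //
          (f 0)⁻¹ * (f 0)⁻¹ * f 2 * f 2 * (f 1)⁻¹ * (f 1)⁻¹ * (f 1)⁻¹ = 1} := by
  refine Nat.card_congr ((presentedHomEquiv _).trans (Equiv.subtypeEquivRight fun f => ?_))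
  simp

/-- the presented group `⟨x, y, z | x⁻²z² = y³⟩` (with the single relator
`x⁻¹x⁻¹zzy⁻¹y⁻¹y⁻¹`, where `x = of 0`, `y = of 1`, `z = of 2`) is not a free group. -/
theorem tripleBaseGroup_not_free :
    ¬ ∃ S : Type,
        Nonempty
          (PresentedGroup
            ({(FreeGroup.of 0)⁻¹ * (FreeGroup.of 0)⁻¹ * FreeGroup.of 2 * FreeGroup.of 2 *
                (FreeGroup.of 1)⁻¹ * (FreeGroup.of 1)⁻¹ * (FreeGroup.of 1)⁻¹} :
              Set (FreeGroup (Fin 3))) ≃* FreeGroup S) := by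
  rintro ⟨S, ⟨e⟩⟩
  have key : ∀ (G : Type) [Group G],
      Nat.card {f : Fin 3 → G //
          (f 0)⁻¹ * (f 0)⁻¹ * f 2 * f 2 * (f 1)⁻¹ * (f 1)⁻¹ * (f 1)⁻¹ = 1}
        = Nat.card (S → G) := by
    intro G _
    have e1 : (FreeGroup S →* G) ≃
        (PresentedGroup
          ({(FreeGroup.of 0)⁻¹ * (FreeGroup.of 0)⁻¹ * FreeGroup.of 2 * FreeGroup.of 2 *
              (FreeGroup.of 1)⁻¹ * (FreeGroup.of 1)⁻¹ * (FreeGroup.of 1)⁻¹} :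
            Set (FreeGroup (Fin 3))) →* G) :=
      { toFun := fun φ => φ.comp e.toMonoidHom
        invFun := fun φ => φ.comp e.symm.toMonoidHom
        left_inv := fun φ => MonoidHom.ext fun x => by simp
        right_inv := fun φ => MonoidHom.ext fun x => by simp }
    rw [← card_presented_hom, ← Nat.card_congr e1,
      ← Nat.card_congr (FreeGroup.lift (α := S) (β := G))]
  have c2 : Nat.card (S → Multiplicative (ZMod 2)) = 4 := by
    rw [← key, Nat.card_eq_fintype_card]
    decide
  have hfin : Finite S := by
    by_contra h
    have : Infinite S := not_finite_iff_infinite.mp h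
    rw [Nat.card_eq_zero_of_infinite] at c2
    exact (by norm_num : (0 : ℕ) ≠ 4) c2
  have h2 : Nat.card (Multiplicative (ZMod 2)) = 2 := by
    rw [Nat.card_eq_fintype_card]; rfl
  have hs : Nat.card S = 2 := by
    have hf := Nat.card_fun (α := S) (β := Multiplicative (ZMod 2))
    rw [c2, h2] at hf
    exact (Nat.pow_right_injective (le_refl 2) (show (2:ℕ) ^ 2 = 2 ^ Nat.card S by rw [← hf])).symm
  have c3 : Nat.card (S → Equiv.Perm (Fin 3)) = 54 := by
    rw [← key, Nat.card_eq_fintype_card]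
    decide
  rw [Nat.card_fun, hs, Nat.card_eq_fintype_card] at c3
  norm_num [Fintype.card_perm, Nat.factorial] at c3
end

section
/- The presented group on six generators a₀, b₀, a₁, b₁, a₂, b₂ with the four relators a₁b₀⁻¹, b₁⁻¹a₁b₁⁻¹((b₀⁻¹a₀)²)⁻¹, a₂b₁⁻¹, b₂⁻¹a₂b₂⁻¹((b₁⁻¹a₁)²)⁻¹ (i.e., the group ⟨a₀,b₀,a₁,b₁,a₂,b₂ | a₁ = b₀, b₁⁻¹a₁b₁⁻¹ = (b₀⁻¹a₀)², a₂ = b₁, b₂⁻¹a₂b₂⁻¹ = (b₁⁻¹a₁)²⟩) is isomorphic to the presented group ⟨x, y, z | x⁻²z² = y³⟩. -/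
namespace Amalgam52Aux

abbrev rels6 : Set (FreeGroup (Fin 6)) :=
  ({FreeGroup.of 2 * (FreeGroup.of 1)⁻¹,
    (FreeGroup.of 3)⁻¹ * FreeGroup.of 2 * (FreeGroup.of 3)⁻¹ *
      (((FreeGroup.of 1)⁻¹ * FreeGroup.of 0) ^ 2)⁻¹,
    FreeGroup.of 4 * (FreeGroup.of 3)⁻¹,
    (FreeGroup.of 5)⁻¹ * FreeGroup.of 4 * (FreeGroup.of 5)⁻¹ *
      (((FreeGroup.of 3)⁻¹ * FreeGroup.of 2) ^ 2)⁻¹} : Set (FreeGroup (Fin 6)))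

abbrev rels3 : Set (FreeGroup (Fin 3)) :=
  ({(FreeGroup.of 0)⁻¹ * (FreeGroup.of 0)⁻¹ * FreeGroup.of 2 * FreeGroup.of 2 *
      (FreeGroup.of 1)⁻¹ * (FreeGroup.of 1)⁻¹ * (FreeGroup.of 1)⁻¹} : Set (FreeGroup (Fin 3)))

lemma rel_one {α : Type*} (rels : Set (FreeGroup α)) {r : FreeGroup α} (h : r ∈ rels) :
    PresentedGroup.mk rels r = 1 :=
  (QuotientGroup.eq_one_iff _).mpr (Subgroup.subset_normalClosure h)

lemma mk_of {α : Type*} (rels : Set (FreeGroup α)) (x : α) :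
    PresentedGroup.mk rels (FreeGroup.of x) = PresentedGroup.of x := rfl

local notation "X" => (PresentedGroup.of 0 : PresentedGroup rels3)
local notation "Y" => (PresentedGroup.of 1 : PresentedGroup rels3)
local notation "Z" => (PresentedGroup.of 2 : PresentedGroup rels3)

local notation "A0" => (PresentedGroup.of 0 : PresentedGroup rels6)
local notation "B0" => (PresentedGroup.of 1 : PresentedGroup rels6)
local notation "A1" => (PresentedGroup.of 2 : PresentedGroup rels6)
local notation "B1" => (PresentedGroup.of 3 : PresentedGroup rels6)
local notation "A2" => (PresentedGroup.of 4 : PresentedGroup rels6)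
local notation "B2" => (PresentedGroup.of 5 : PresentedGroup rels6)

def f6 : Fin 6 → PresentedGroup rels3 :=
  ![Y⁻¹ * Y⁻¹ * X⁻¹,
    Y⁻¹ * Y⁻¹ * X⁻¹ * X⁻¹,
    Y⁻¹ * Y⁻¹ * X⁻¹ * X⁻¹,
    Y⁻¹ * X⁻¹ * X⁻¹,
    Y⁻¹ * X⁻¹ * X⁻¹,
    Z * Y⁻¹ * X⁻¹ * X⁻¹]

def g3 : Fin 3 → PresentedGroup rels6 :=
  ![B0⁻¹ * A0,
    (B0⁻¹ * A0)⁻¹ * (B0⁻¹ * A0)⁻¹ * B1⁻¹,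
    B2 * B1⁻¹]

@[simp] lemma f6_0 : f6 0 = Y⁻¹ * Y⁻¹ * X⁻¹ := rfl
@[simp] lemma f6_1 : f6 1 = Y⁻¹ * Y⁻¹ * X⁻¹ * X⁻¹ := rfl
@[simp] lemma f6_2 : f6 2 = Y⁻¹ * Y⁻¹ * X⁻¹ * X⁻¹ := rfl
@[simp] lemma f6_3 : f6 3 = Y⁻¹ * X⁻¹ * X⁻¹ := rfl
@[simp] lemma f6_4 : f6 4 = Y⁻¹ * X⁻¹ * X⁻¹ := rfl
@[simp] lemma f6_5 : f6 5 = Z * Y⁻¹ * X⁻¹ * X⁻¹ := rfl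

@[simp] lemma g3_0 : g3 0 = B0⁻¹ * A0 := rfl
@[simp] lemma g3_1 : g3 1 = (B0⁻¹ * A0)⁻¹ * (B0⁻¹ * A0)⁻¹ * B1⁻¹ := rfl
@[simp] lemma g3_2 : g3 2 = B2 * B1⁻¹ := rfl

/-- the relation in the 3-generator group -/
lemma hT : X⁻¹ * X⁻¹ * Z * Z * Y⁻¹ * Y⁻¹ * Y⁻¹ = 1 := by
  have h := rel_one rels3 (Set.mem_singleton _)
  simp only [map_mul, map_inv, mk_of] at h
  exact h

lemma hZZ : Z * Z = X * X * Y * Y * Y := by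
  calc Z * Z = (X * X) * (X⁻¹ * X⁻¹ * Z * Z * Y⁻¹ * Y⁻¹ * Y⁻¹) * (Y * Y * Y) := by group
  _ = (X * X) * 1 * (Y * Y * Y) := by rw [hT]
  _ = X * X * Y * Y * Y := by group

lemma hZZinv : Z⁻¹ * Z⁻¹ = Y⁻¹ * Y⁻¹ * Y⁻¹ * X⁻¹ * X⁻¹ := by
  calc Z⁻¹ * Z⁻¹ = (Z * Z)⁻¹ := by group
  _ = (X * X * Y * Y * Y)⁻¹ := by rw [hZZ]
  _ = Y⁻¹ * Y⁻¹ * Y⁻¹ * X⁻¹ * X⁻¹ := by group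

lemma hf : ∀ r ∈ rels6, FreeGroup.lift f6 r = 1 := by
  intro r hr
  simp only [rels6, Set.mem_insert_iff, Set.mem_singleton_iff] at hr
  rcases hr with rfl | rfl | rfl | rfl
  · simp only [map_mul, map_inv, FreeGroup.lift_apply_of, f6_1, f6_2]
    group <;> simp only [pow_two, mul_assoc, zpow_neg, zpow_ofNat]
  · simp only [map_mul, map_inv, map_pow, pow_two, FreeGroup.lift_apply_of, f6_0, f6_1, f6_2, f6_3]
    group <;> simp only [pow_two, mul_assoc, zpow_neg, zpow_ofNat]
  · simp only [map_mul, map_inv, FreeGroup.lift_apply_of, f6_3, f6_4]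
    group <;> simp only [pow_two, mul_assoc, zpow_neg, zpow_ofNat]
  · simp only [map_mul, map_inv, map_pow, pow_two, FreeGroup.lift_apply_of, f6_2, f6_3, f6_4, f6_5]
    have key : (X * X * Y) * (Z⁻¹ * Z⁻¹) * (X * X * Y * Y * X⁻¹ * X⁻¹) = 1 := by
      rw [hZZinv]; group <;> simp only [pow_two, mul_assoc, zpow_neg, zpow_ofNat]
    refine Eq.trans ?_ key
    group <;> simp only [pow_two, mul_assoc, zpow_neg, zpow_ofNat]

-- relations in the 6-generator group
lemma e1 : A1 = B0 := by
  have h := rel_one rels6 (Set.mem_insert _ _)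
  simp only [map_mul, map_inv, mk_of] at h
  rwa [mul_inv_eq_one] at h

lemma e3 : A2 = B1 := by
  have h := rel_one rels6
    (Set.mem_insert_of_mem _ (Set.mem_insert_of_mem _ (Set.mem_insert _ _)))
  simp only [map_mul, map_inv, mk_of] at h
  rwa [mul_inv_eq_one] at h

lemma e2 : B1⁻¹ * B0 * B1⁻¹ = (B0⁻¹ * A0) * (B0⁻¹ * A0) := by
  have h := rel_one rels6 (Set.mem_insert_of_mem _ (Set.mem_insert _ _))
  simp only [map_mul, map_inv, map_pow, pow_two, mk_of] at h
  rw [mul_inv_eq_one] at h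
  rwa [e1] at h

lemma e4 : B2⁻¹ * B1 * B2⁻¹ = (B1⁻¹ * B0) * (B1⁻¹ * B0) := by
  have h := rel_one rels6
    (Set.mem_insert_of_mem _ (Set.mem_insert_of_mem _
      (Set.mem_insert_of_mem _ (Set.mem_singleton _))))
  simp only [map_mul, map_inv, map_pow, pow_two, mk_of] at h
  rw [mul_inv_eq_one] at h
  rwa [e1, e3] at h

lemma hcb : B2 * B1⁻¹ * B2 = ((B1⁻¹ * B0) * (B1⁻¹ * B0))⁻¹ := by
  rw [← e4]; group <;> simp only [pow_two, mul_assoc, zpow_neg, zpow_ofNat]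

lemma hub : B1⁻¹ * B0 = ((B0⁻¹ * A0) * (B0⁻¹ * A0)) * B1 := by
  rw [← e2]; group <;> simp only [pow_two, mul_assoc, zpow_neg, zpow_ofNat]

lemma eb' : B1 * ((B0⁻¹ * A0) * (B0⁻¹ * A0)) * B1 = B0 := by
  rw [← e2]; group <;> simp only [pow_two, mul_assoc, zpow_neg, zpow_ofNat]

lemma hg : ∀ r ∈ rels3, FreeGroup.lift g3 r = 1 := by
  intro r hr
  simp only [rels3, Set.mem_singleton_iff] at hr
  subst hr
  simp only [map_mul, map_inv, FreeGroup.lift_apply_of, g3_0, g3_1, g3_2]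
  have key : ((B0⁻¹ * A0)⁻¹ * (B0⁻¹ * A0)⁻¹) * (B2 * B1⁻¹ * B2) *
      (((B0⁻¹ * A0) * (B0⁻¹ * A0)) * B1 * (((B0⁻¹ * A0) * (B0⁻¹ * A0)) * B1) *
        ((B0⁻¹ * A0) * (B0⁻¹ * A0))) = 1 := by
    rw [hcb, hub]; group <;> simp only [pow_two, mul_assoc, zpow_neg, zpow_ofNat]
  refine Eq.trans ?_ key
  group <;> simp only [pow_two, mul_assoc, zpow_neg, zpow_ofNat]

noncomputable def F : PresentedGroup rels6 →* PresentedGroup rels3 := PresentedGroup.toGroup hf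
noncomputable def G : PresentedGroup rels3 →* PresentedGroup rels6 := PresentedGroup.toGroup hg

lemma key0 : (B1 * ((B0⁻¹ * A0) * (B0⁻¹ * A0)) * B1) * (B0⁻¹ * A0) = A0 := by
  rw [eb']; group <;> simp only [pow_two, mul_assoc, zpow_neg, zpow_ofNat]

lemma r0 : G (F (PresentedGroup.of (0 : Fin 6))) = PresentedGroup.of (0 : Fin 6) := by
  show G (F A0) = A0
  simp only [F, G, PresentedGroup.toGroup.of, f6_0, map_mul, map_inv, g3_0, g3_1]
  refine Eq.trans ?_ key0
  group <;> simp only [pow_two, mul_assoc, zpow_neg, zpow_ofNat]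

lemma r1 : G (F (PresentedGroup.of (1 : Fin 6))) = PresentedGroup.of (1 : Fin 6) := by
  show G (F B0) = B0
  simp only [F, G, PresentedGroup.toGroup.of, f6_1, map_mul, map_inv, g3_0, g3_1]
  refine Eq.trans ?_ eb'
  group <;> simp only [pow_two, mul_assoc, zpow_neg, zpow_ofNat]

lemma r2 : G (F (PresentedGroup.of (2 : Fin 6))) = PresentedGroup.of (2 : Fin 6) := by
  show G (F A1) = A1
  simp only [F, G, PresentedGroup.toGroup.of, f6_2, map_mul, map_inv, g3_0, g3_1]
  refine Eq.trans ?_ (eb'.trans e1.symm)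
  group <;> simp only [pow_two, mul_assoc, zpow_neg, zpow_ofNat]

lemma r3 : G (F (PresentedGroup.of (3 : Fin 6))) = PresentedGroup.of (3 : Fin 6) := by
  show G (F B1) = B1
  simp only [F, G, PresentedGroup.toGroup.of, f6_3, map_mul, map_inv, g3_0, g3_1]
  group <;> simp only [pow_two, mul_assoc, zpow_neg, zpow_ofNat]

lemma r4 : G (F (PresentedGroup.of (4 : Fin 6))) = PresentedGroup.of (4 : Fin 6) := by
  show G (F A2) = A2
  simp only [F, G, PresentedGroup.toGroup.of, f6_4, map_mul, map_inv, g3_0, g3_1]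
  refine Eq.trans ?_ e3.symm
  group <;> simp only [pow_two, mul_assoc, zpow_neg, zpow_ofNat]

lemma r5 : G (F (PresentedGroup.of (5 : Fin 6))) = PresentedGroup.of (5 : Fin 6) := by
  show G (F B2) = B2
  simp only [F, G, PresentedGroup.toGroup.of, f6_5, map_mul, map_inv, g3_0, g3_1, g3_2]
  group <;> simp only [pow_two, mul_assoc, zpow_neg, zpow_ofNat]

lemma s0 : F (G (PresentedGroup.of (0 : Fin 3))) = PresentedGroup.of (0 : Fin 3) := by
  show F (G X) = X
  simp only [F, G, PresentedGroup.toGroup.of, g3_0, map_mul, map_inv, f6_0, f6_1]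
  group <;> simp only [pow_two, mul_assoc, zpow_neg, zpow_ofNat]

lemma s1 : F (G (PresentedGroup.of (1 : Fin 3))) = PresentedGroup.of (1 : Fin 3) := by
  show F (G Y) = Y
  simp only [F, G, PresentedGroup.toGroup.of, g3_1, map_mul, map_inv, f6_0, f6_1, f6_3]
  group <;> simp only [pow_two, mul_assoc, zpow_neg, zpow_ofNat]

lemma s2 : F (G (PresentedGroup.of (2 : Fin 3))) = PresentedGroup.of (2 : Fin 3) := by
  show F (G Z) = Z
  simp only [F, G, PresentedGroup.toGroup.of, g3_2, map_mul, map_inv, f6_3, f6_5]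
  group <;> simp only [pow_two, mul_assoc, zpow_neg, zpow_ofNat]

noncomputable def equiv : PresentedGroup rels6 ≃* PresentedGroup rels3 :=
  MonoidHom.toMulEquiv F G
    (by
      refine PresentedGroup.ext fun x => ?_
      fin_cases x
      · exact r0
      · exact r1
      · exact r2
      · exact r3
      · exact r4
      · exact r5)
    (by
      refine PresentedGroup.ext fun x => ?_
      fin_cases x
      · exact s0
      · exact s1
      · exact s2)

end Amalgam52Aux

/-- the presented group
`⟨a₀,b₀,a₁,b₁,a₂,b₂ | a₁ = b₀, b₁⁻¹a₁b₁⁻¹ = (b₀⁻¹a₀)², a₂ = b₁, b₂⁻¹a₂b₂⁻¹ = (b₁⁻¹a₁)²⟩`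
(with `a₀ = of 0`, `b₀ = of 1`, `a₁ = of 2`, `b₁ = of 3`, `a₂ = of 4`, `b₂ = of 5`)
is isomorphic to the presented group `⟨x, y, z | x⁻²z² = y³⟩`. -/
theorem amalgam_iso_one_relator_group :
    Nonempty
      (PresentedGroup
        ({FreeGroup.of 2 * (FreeGroup.of 1)⁻¹,
          (FreeGroup.of 3)⁻¹ * FreeGroup.of 2 * (FreeGroup.of 3)⁻¹ *
            (((FreeGroup.of 1)⁻¹ * FreeGroup.of 0) ^ 2)⁻¹,
          FreeGroup.of 4 * (FreeGroup.of 3)⁻¹,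
          (FreeGroup.of 5)⁻¹ * FreeGroup.of 4 * (FreeGroup.of 5)⁻¹ *
            (((FreeGroup.of 3)⁻¹ * FreeGroup.of 2) ^ 2)⁻¹} :
          Set (FreeGroup (Fin 6))) ≃*
      PresentedGroup
        ({(FreeGroup.of 0)⁻¹ * (FreeGroup.of 0)⁻¹ * FreeGroup.of 2 * FreeGroup.of 2 *
            (FreeGroup.of 1)⁻¹ * (FreeGroup.of 1)⁻¹ * (FreeGroup.of 1)⁻¹} :
          Set (FreeGroup (Fin 3)))) := by
  exact ⟨Amalgam52Aux.equiv⟩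
end

section
/- In the free group F = FreeGroup (Fin 2) with free generators a, b, the element a⁻²b² is not a member of any free basis of F; equivalently, there is no automorphism ψ of FreeGroup (Fin 2) with ψ(a) = a⁻²b². -/
/-- in `FreeGroup (Fin 2)` with generators `a = of 0`, `b = of 1`, the element
`a⁻²b²` is not part of any free basis: no automorphism sends `a` to `a⁻²b²`. -/
theorem not_basis_element :
    ¬ ∃ ψ : FreeGroup (Fin 2) ≃* FreeGroup (Fin 2),
        ψ (FreeGroup.of 0) =
          (FreeGroup.of 0)⁻¹ * (FreeGroup.of 0)⁻¹ * FreeGroup.of 1 * FreeGroup.of 1 := by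
  rintro ⟨ψ, hψ⟩
  -- map to (ℤ/2)² (written multiplicatively)
  let g1 : Multiplicative (ZMod 2 × ZMod 2) := Multiplicative.ofAdd (1, 0)
  let g2 : Multiplicative (ZMod 2 × ZMod 2) := Multiplicative.ofAdd (0, 1)
  let π : FreeGroup (Fin 2) →* Multiplicative (ZMod 2 × ZMod 2) :=
    FreeGroup.lift ![g1, g2]
  have hπ0 : π (FreeGroup.of 0) = g1 := FreeGroup.lift_apply_of
  have hπ1 : π (FreeGroup.of 1) = g2 := FreeGroup.lift_apply_of
  let φ := π.comp ψ.toMonoidHom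
  have hφ0 : φ (FreeGroup.of 0) = 1 := by
    simp only [φ, MonoidHom.comp_apply, MulEquiv.coe_toMonoidHom, hψ,
      map_mul, map_inv, hπ0, hπ1]
    decide
  have hsq : ∀ h : Multiplicative (ZMod 2 × ZMod 2), h * h = 1 := by decide
  have hinv : ∀ h : Multiplicative (ZMod 2 × ZMod 2), h⁻¹ = h := by decide
  set g := φ (FreeGroup.of 1) with hg
  have key : ∀ x, φ x = 1 ∨ φ x = g := by
    intro x
    induction x with
    | C1 => left; simp
    | of i =>
      fin_cases i
      · left; exact hφ0
      · right; rfl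
    | inv_of i ih =>
      rw [map_inv, hinv]; exact ih
    | mul x y ihx ihy =>
      rw [map_mul]
      rcases ihx with h1 | h1 <;> rcases ihy with h2 | h2 <;>
        rw [h1, h2] <;> simp [hsq]
  have hπsurj : Function.Surjective π := by
    intro y
    refine ⟨(FreeGroup.of 0) ^ ((Multiplicative.toAdd y).1.val) *
      (FreeGroup.of 1) ^ ((Multiplicative.toAdd y).2.val), ?_⟩
    rw [map_mul, map_pow, map_pow, hπ0, hπ1]
    show Multiplicative.ofAdd ((Multiplicative.toAdd y).1.val • ((1 : ZMod 2), (0 : ZMod 2))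
      + (Multiplicative.toAdd y).2.val • ((0 : ZMod 2), (1 : ZMod 2))) = y
    simp [Prod.smul_mk, Prod.mk_add_mk, nsmul_eq_mul, ZMod.natCast_val, ZMod.cast_id]
  have hφsurj : Function.Surjective φ := by
    intro y
    obtain ⟨x, hx⟩ := hπsurj y
    exact ⟨ψ.symm x, by simp [φ, hx]⟩
  by_cases hcase : g = g1
  · obtain ⟨x, hx⟩ := hφsurj g2
    rcases key x with h | h <;> rw [hx] at h <;> [skip; rw [hcase] at h] <;>
      exact absurd h (by decide)
  · obtain ⟨x, hx⟩ := hφsurj g1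
    rcases key x with h | h
    · rw [hx] at h; exact absurd h (by decide)
    · rw [hx] at h; exact hcase h.symm
end

section
/- The homomorphism FreeGroup (Fin 3) → FreeGroup (Fin 2) determined on the three free generators by g₀ ↦ a, g₁ ↦ b⁻¹ab⁻¹, g₂ ↦ b⁻²ab⁻² is injective; that is, the elements a, b⁻¹ab⁻¹, b⁻²ab⁻² freely generate a rank-3 subgroup of the free group on a, b. -/
namespace RankThreeAux

open FreeGroup List

lemma head_eq_of_prefix {P L : List (Fin 2 × Bool)} (h : P <+: L) (hP : P ≠ []) :
    L.head? = P.head? := by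
  rcases h with ⟨r, rfl⟩
  cases P with
  | nil => exact absurd rfl hP
  | cons a l => simp

lemma pat_head (n : ℕ) (c d : Fin 2 × Bool) :
    (List.replicate n c ++ [d]).head? = some (if 0 < n then c else d) := by
  cases n <;> simp [List.replicate_succ]

lemma no_pat_prefix (s t : Bool) (n : ℕ) (L : List (Fin 2 × Bool))
    (hL : L.head? = some ((1 : Fin 2), s)) :
    ¬ (List.replicate n ((1 : Fin 2), !s) ++ [((0 : Fin 2), !t)] <+: L) := by
  intro hc
  have hne : (List.replicate n ((1 : Fin 2), !s) ++ [((0 : Fin 2), !t)]) ≠ [] := by simp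
  have heq := head_eq_of_prefix hc hne
  rw [hL, pat_head] at heq
  cases n with
  | zero =>
    simp only [Nat.lt_irrefl, if_false, Option.some.injEq, Prod.ext_iff] at heq
    exact absurd heq.1 (by decide)
  | succ n => simp [Prod.ext_iff] at heq

/-- prepending a non-cancelling letter -/
lemma cons_toWord (c : Fin 2 × Bool) (u : FreeGroup (Fin 2))
    (h : u.toWord.head? ≠ some (c.1, !c.2)) :
    (FreeGroup.mk [c] * u).toWord = c :: u.toWord := by
  conv_lhs => rw [← mk_toWord (x := u), mul_mk]
  rw [List.singleton_append, toWord_mk, reduce.cons, reduce_toWord]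
  rcases hw : u.toWord with _ | ⟨hd, tl⟩
  · rfl
  · rw [hw] at h
    simp only [head?_cons, ne_eq, Option.some.injEq] at h
    have hcond : ¬ (c.1 = hd.1 ∧ c.2 = !hd.2) := by
      rintro ⟨h1, h2⟩
      exact h (Prod.ext h1.symm (by simp [h2]))
    simp [hcond]

/-- multiplying a word whose head is not `(1, !s)` by `mk (replicate n (1, s))` -/
lemma repl_mul_toWord (s : Bool) (n : ℕ) (v : FreeGroup (Fin 2))
    (h : v.toWord.head? ≠ some (1, !s)) :
    (FreeGroup.mk (List.replicate n ((1 : Fin 2), s)) * v).toWord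
      = List.replicate n ((1 : Fin 2), s) ++ v.toWord := by
  induction n generalizing v with
  | zero => simp [← one_eq_mk]
  | succ n ih =>
    have h1 : (FreeGroup.mk [((1 : Fin 2), s)] * v).toWord = ((1 : Fin 2), s) :: v.toWord :=
      cons_toWord _ _ h
    have h2 : ((FreeGroup.mk [((1 : Fin 2), s)] * v)).toWord.head? ≠ some ((1 : Fin 2), !s) := by
      rw [h1]; simp
    have hsplit : FreeGroup.mk (List.replicate (n+1) ((1 : Fin 2), s)) * v
        = FreeGroup.mk (List.replicate n ((1 : Fin 2), s)) *
          (FreeGroup.mk [((1 : Fin 2), s)] * v) := by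
      rw [← mul_assoc, mul_mk, ← List.replicate_succ']
    rw [hsplit, ih _ h2, h1, List.replicate_succ', List.append_assoc]
    rfl

/-- head after multiplying by a `b`-power -/
lemma head_repl_mul (s t : Bool) (n : ℕ) (v : FreeGroup (Fin 2))
    (h : ¬ (List.replicate n ((1 : Fin 2), !s) ++ [((0 : Fin 2), !t)] <+: v.toWord)) :
    (FreeGroup.mk (List.replicate n ((1 : Fin 2), s)) * v).toWord.head?
      ≠ some ((0 : Fin 2), !t) := by
  induction n generalizing v with
  | zero =>
    rw [List.replicate_zero, ← one_eq_mk, one_mul]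
    simp only [List.replicate_zero, List.nil_append] at h
    intro hc
    apply h
    rcases hw : v.toWord with _ | ⟨hd, tl⟩
    · rw [hw] at hc; simp at hc
    · rw [hw] at hc
      simp only [head?_cons, Option.some.injEq] at hc
      exact ⟨tl, by rw [hc]; rfl⟩
  | succ n ih =>
    set v' := FreeGroup.mk [((1 : Fin 2), s)] * v with hv'
    have hsplit : FreeGroup.mk (List.replicate (n+1) ((1 : Fin 2), s)) * v
        = FreeGroup.mk (List.replicate n ((1 : Fin 2), s)) * v' := by
      rw [hv', ← mul_assoc, mul_mk, ← List.replicate_succ']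
    have hv'w : v'.toWord = reduce (((1 : Fin 2), s) :: v.toWord) := by
      rw [hv']
      conv_lhs => rw [← mk_toWord (x := v), mul_mk]
      rw [List.singleton_append, toWord_mk]
    rw [reduce.cons, reduce_toWord] at hv'w
    rw [hsplit]
    apply ih
    rcases hw : v.toWord with _ | ⟨hd, tl⟩
    · rw [hw] at hv'w
      simp only at hv'w
      rw [hv'w]
      exact no_pat_prefix s t n _ rfl
    · rw [hw] at hv'w
      simp only at hv'w
      by_cases hcan : ((1 : Fin 2), s).1 = hd.1 ∧ ((1 : Fin 2), s).2 = !hd.2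
      · have hhd : hd = ((1 : Fin 2), !s) := by
          obtain ⟨h1, h2⟩ := hcan
          exact Prod.ext h1.symm (by simp at h2 ⊢; simp [h2])
        rw [if_pos hcan] at hv'w
        rw [hv'w]
        intro hc
        apply h
        rw [hw, hhd, List.replicate_succ, List.cons_append]
        exact List.cons_prefix_cons.mpr ⟨rfl, hc⟩
      · rw [if_neg hcan] at hv'w
        rw [hv'w]
        exact no_pat_prefix s t n _ rfl

/-- KEY lemma: multiplying by `b^{-n} a b^{-n}` (or its mirror image) creates the
expected prefix provided the cancelling prefix is absent. -/
lemma key (s t : Bool) (n : ℕ) (w : FreeGroup (Fin 2))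
    (h : ¬ (List.replicate n ((1 : Fin 2), !s) ++ [((0 : Fin 2), !t)] <+: w.toWord)) :
    List.replicate n ((1 : Fin 2), s) ++ [((0 : Fin 2), t)] <+:
      (FreeGroup.mk (List.replicate n ((1 : Fin 2), s)) * FreeGroup.mk [((0 : Fin 2), t)]
        * FreeGroup.mk (List.replicate n ((1 : Fin 2), s)) * w).toWord := by
  have hu := head_repl_mul s t n w h
  have h1 : (FreeGroup.mk [((0 : Fin 2), t)] *
      (FreeGroup.mk (List.replicate n ((1 : Fin 2), s)) * w)).toWord
      = ((0 : Fin 2), t) :: (FreeGroup.mk (List.replicate n ((1 : Fin 2), s)) * w).toWord := by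
    apply cons_toWord
    simpa using hu
  have h2 := repl_mul_toWord s n
      (FreeGroup.mk [((0 : Fin 2), t)] * (FreeGroup.mk (List.replicate n ((1 : Fin 2), s)) * w))
      (by rw [h1]; simp)
  rw [mul_assoc, mul_assoc, h2, h1]
  exact ⟨(FreeGroup.mk (List.replicate n ((1 : Fin 2), s)) * w).toWord, by simp⟩

lemma pat_prefix_unique : ∀ (n : ℕ) {m : ℕ} {s t s' t' : Bool} {L : List (Fin 2 × Bool)},
    (List.replicate n ((1:Fin 2), s) ++ [((0:Fin 2), t)] <+: L) →
    (List.replicate m ((1:Fin 2), s') ++ [((0:Fin 2), t')] <+: L) → n = m ∧ t = t' := by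
  intro n
  induction n with
  | zero =>
    intro m s t s' t' L h1 h2
    simp only [List.replicate_zero, List.nil_append] at h1
    rcases h1 with ⟨r, rfl⟩
    cases m with
    | zero =>
      simp only [List.replicate_zero, List.nil_append, List.singleton_append] at h2
      rw [List.cons_prefix_cons] at h2
      exact ⟨rfl, (Prod.ext_iff.mp h2.1).2.symm⟩
    | succ m =>
      rw [List.replicate_succ, List.cons_append, List.singleton_append,
        List.cons_prefix_cons] at h2
      have : ((1:Fin 2), s') = ((0:Fin 2), t) := h2.1
      have h10 : (1:Fin 2) = (0:Fin 2) := congrArg Prod.fst this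
      exact absurd h10 (by decide)
  | succ n ih =>
    intro m s t s' t' L h1 h2
    rw [List.replicate_succ, List.cons_append] at h1
    rcases h1 with ⟨r, rfl⟩
    cases m with
    | zero =>
      simp only [List.replicate_zero, List.nil_append] at h2
      simp only [List.cons_append] at h2
      rw [List.cons_prefix_cons] at h2
      have : ((0:Fin 2), t') = ((1:Fin 2), s) := h2.1
      have h10 : (0:Fin 2) = (1:Fin 2) := congrArg Prod.fst this
      exact absurd h10 (by decide)
    | succ m =>
      simp only [List.cons_append] at h2
      rw [List.replicate_succ, List.cons_append, List.cons_prefix_cons] at h2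
      have := ih (m := m) (s := s) (t := t) (s' := s') (t' := t')
        (L := List.replicate n ((1:Fin 2), s) ++ [((0:Fin 2), t)] ++ r)
        (List.prefix_append _ _) h2.2
      exact ⟨by omega, this.2⟩

lemma inv_form (n : ℕ) :
    (FreeGroup.mk (List.replicate n ((1:Fin 2), false)) * FreeGroup.mk [((0:Fin 2), true)]
      * FreeGroup.mk (List.replicate n ((1:Fin 2), false)))⁻¹
    = FreeGroup.mk (List.replicate n ((1:Fin 2), true)) * FreeGroup.mk [((0:Fin 2), false)]
      * FreeGroup.mk (List.replicate n ((1:Fin 2), true)) := by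
  have h1 : (FreeGroup.mk (List.replicate n ((1:Fin 2), false)))⁻¹
      = FreeGroup.mk (List.replicate n ((1:Fin 2), true)) := by
    rw [inv_mk]
    congr 1
    simp [FreeGroup.invRev, List.map_replicate]
  have h2 : (FreeGroup.mk [((0:Fin 2), true)])⁻¹ = FreeGroup.mk [((0:Fin 2), false)] := rfl
  rw [mul_inv_rev, mul_inv_rev, h1, h2, mul_assoc]

end RankThreeAux

open RankThreeAux in
/-- in `FreeGroup (Fin 2)` with `a = of 0`, `b = of 1`, the elements
`a`, `b⁻¹ab⁻¹`, `b⁻²ab⁻²` freely generate a rank-3 subgroup: the induced homomorphism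
from `FreeGroup (Fin 3)` is injective. -/
theorem rank_three_free_subgroup :
    Function.Injective
      (FreeGroup.lift (fun i : Fin 3 =>
        if i = 0 then FreeGroup.of 0
        else if i = 1 then
          (FreeGroup.of 1)⁻¹ * FreeGroup.of 0 * (FreeGroup.of 1)⁻¹
        else
          (FreeGroup.of 1)⁻¹ * (FreeGroup.of 1)⁻¹ * FreeGroup.of 0 *
            (FreeGroup.of 1)⁻¹ * (FreeGroup.of 1)⁻¹) :
        FreeGroup (Fin 3) →* FreeGroup (Fin 2)) := by
  have hfun : (fun i : Fin 3 =>
        if i = 0 then FreeGroup.of 0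
        else if i = 1 then
          (FreeGroup.of 1)⁻¹ * FreeGroup.of 0 * (FreeGroup.of 1)⁻¹
        else
          (FreeGroup.of 1)⁻¹ * (FreeGroup.of 1)⁻¹ * FreeGroup.of 0 *
            (FreeGroup.of 1)⁻¹ * (FreeGroup.of 1)⁻¹)
      = (fun i : Fin 3 =>
          FreeGroup.mk (List.replicate (i : ℕ) ((1:Fin 2), false))
            * FreeGroup.mk [((0:Fin 2), true)]
            * FreeGroup.mk (List.replicate (i : ℕ) ((1:Fin 2), false))) := by
    funext i
    fin_cases i <;> rfl
  rw [hfun]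
  apply FreeGroup.injective_lift_of_ping_pong (α := FreeGroup (Fin 2))
    (X := fun i : Fin 3 =>
      {w : FreeGroup (Fin 2) |
        List.replicate (i : ℕ) ((1:Fin 2), false) ++ [((0:Fin 2), true)] <+: w.toWord})
    (Y := fun i : Fin 3 =>
      {w : FreeGroup (Fin 2) |
        List.replicate (i : ℕ) ((1:Fin 2), true) ++ [((0:Fin 2), false)] <+: w.toWord})
  -- nonempty
  · intro i
    refine ⟨FreeGroup.mk (List.replicate (i : ℕ) ((1:Fin 2), false))
      * FreeGroup.mk [((0:Fin 2), true)], ?_⟩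
    have : (FreeGroup.mk [((0:Fin 2), true)] : FreeGroup (Fin 2)).toWord
        = [((0:Fin 2), true)] := rfl
    simp only [Set.mem_setOf_eq, repl_mul_toWord false (i : ℕ) _ (by rw [this]; simp), this]
    exact List.prefix_rfl
  -- X pairwise disjoint
  · intro i j hij
    rw [Function.onFun, Set.disjoint_left]
    intro w hwi hwj
    exact hij (Fin.val_injective (pat_prefix_unique _ hwi hwj).1)
  -- Y pairwise disjoint
  · intro i j hij
    rw [Function.onFun, Set.disjoint_left]
    intro w hwi hwj
    exact hij (Fin.val_injective (pat_prefix_unique _ hwi hwj).1)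
  -- X disjoint Y
  · intro i j
    rw [Set.disjoint_left]
    intro w hwi hwj
    simpa using (pat_prefix_unique _ hwi hwj).2
  -- ping
  · intro i v hv
    rw [Set.mem_smul_set] at hv
    obtain ⟨w, hw, rfl⟩ := hv
    rw [smul_eq_mul]
    simp only [Set.mem_compl_iff, Set.mem_setOf_eq] at hw
    exact key false true (i : ℕ) w (by simpa using hw)
  -- pong
  · intro i v hv
    rw [Set.mem_smul_set] at hv
    obtain ⟨w, hw, rfl⟩ := hv
    rw [Pi.inv_apply, smul_eq_mul, inv_form]
    simp only [Set.mem_compl_iff, Set.mem_setOf_eq] at hw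
    exact key true false (i : ℕ) w (by simpa using hw)
end

section
/- The homomorphism FreeGroup (Fin 3) → FreeGroup (Fin 3) determined on the three free generators by g₀ ↦ b, g₁ ↦ b⁻¹ab⁻¹a, g₂ ↦ c is injective, where a, b, c are the free generators of the target; that is, the elements b, b⁻¹ab⁻¹a, c freely generate a rank-3 subgroup of the free group on a, b, c. -/
open FreeGroup

variable {α : Type*} [DecidableEq α]

private lemma my_reduce_cons {g : α} {bb : Bool} {L : List (α × Bool)}
    (hL : FreeGroup.reduce L = L) (h : L.head? ≠ some (g, !bb)) :
    FreeGroup.reduce ((g, bb) :: L) = (g, bb) :: L := by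
  rw [FreeGroup.reduce.cons, hL]
  cases L with
  | nil => rfl
  | cons hd tl =>
    simp only
    rw [if_neg]
    rintro ⟨h1, h2⟩
    exact h (by cases hd; simp_all)

private lemma single_mul_toWord {g : α} {bb : Bool} {w : FreeGroup α}
    (h : w.toWord.head? ≠ some (g, !bb)) :
    (FreeGroup.mk [(g, bb)] * w).toWord = (g, bb) :: w.toWord := by
  conv_lhs => rw [← FreeGroup.mk_toWord (x := w), FreeGroup.mul_mk]
  rw [show [(g, bb)] ++ w.toWord = (g, bb) :: w.toWord from rfl, FreeGroup.toWord_mk]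
  exact my_reduce_cons (FreeGroup.reduce_toWord w) h

private lemma of_mul_head {g : α} {w : FreeGroup α}
    (h : w.toWord.head? ≠ some (g, false)) :
    (FreeGroup.of g * w).toWord.head? = some (g, true) := by
  have : FreeGroup.of g = FreeGroup.mk [(g, true)] := rfl
  rw [this, single_mul_toWord (by simpa using h)]
  rfl

private lemma inv_of_mul_head {g : α} {w : FreeGroup α}
    (h : w.toWord.head? ≠ some (g, true)) :
    ((FreeGroup.of g)⁻¹ * w).toWord.head? = some (g, false) := by
  have : (FreeGroup.of g)⁻¹ = FreeGroup.mk [(g, false)] := by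
    rw [show FreeGroup.of g = FreeGroup.mk [(g, true)] from rfl, FreeGroup.inv_mk]
    rfl
  rw [this, single_mul_toWord (by simpa using h)]
  rfl

/-- first letter selector -/
private def sig : Fin 3 → Fin 3 := ![1, 0, 2]

private def a0 : Fin 3 → FreeGroup (Fin 3) := fun i =>
  if i = 0 then FreeGroup.of 1
  else if i = 1 then FreeGroup.of 0 * FreeGroup.of 0
  else FreeGroup.of 2

private def Xs : Fin 3 → Set (FreeGroup (Fin 3)) := fun i =>
  {w | w.toWord.head? = some (sig i, true)}

private def Ys : Fin 3 → Set (FreeGroup (Fin 3)) := fun i =>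
  {w | w.toWord.head? = some (sig i, false)}

private lemma f0_injective : Function.Injective (FreeGroup.lift a0) := by
  apply FreeGroup.injective_lift_of_ping_pong a0 Xs Ys
  · intro i
    exact ⟨FreeGroup.of (sig i), by simp [Xs, FreeGroup.toWord_of]⟩
  · intro i j hij
    simp only [Function.onFun]
    rw [Set.disjoint_left]
    intro w hwi hwj
    simp only [Xs, Set.mem_setOf_eq] at hwi hwj
    rw [hwi] at hwj
    have : sig i = sig j := by simpa using hwj
    exact hij (by revert this; fin_cases i <;> fin_cases j <;> decide)
  · intro i j hij
    simp only [Function.onFun]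
    rw [Set.disjoint_left]
    intro w hwi hwj
    simp only [Ys, Set.mem_setOf_eq] at hwi hwj
    rw [hwi] at hwj
    have : sig i = sig j := by simpa using hwj
    exact hij (by revert this; fin_cases i <;> fin_cases j <;> decide)
  · intro i j
    rw [Set.disjoint_left]
    intro w hwi hwj
    simp only [Xs, Ys, Set.mem_setOf_eq] at hwi hwj
    rw [hwi] at hwj
    simp at hwj
  · intro i w hw
    rw [Set.mem_smul_set] at hw
    obtain ⟨v, hv, rfl⟩ := hw
    simp only [Set.mem_compl_iff, Ys, Set.mem_setOf_eq] at hv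
    show (a0 i • v) ∈ Xs i
    simp only [Xs, Set.mem_setOf_eq, smul_eq_mul]
    fin_cases i
    · exact of_mul_head hv
    · show ((FreeGroup.of 0 * FreeGroup.of 0) * v).toWord.head? = some ((0 : Fin 3), true)
      have hv' : v.toWord.head? ≠ some ((0 : Fin 3), false) := hv
      rw [mul_assoc]
      apply of_mul_head
      rw [of_mul_head hv']
      simp
    · exact of_mul_head hv
  · intro i w hw
    rw [Set.mem_smul_set] at hw
    obtain ⟨v, hv, rfl⟩ := hw
    simp only [Set.mem_compl_iff, Xs, Set.mem_setOf_eq] at hv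
    show ((a0 i)⁻¹ • v) ∈ Ys i
    simp only [Ys, Set.mem_setOf_eq, smul_eq_mul]
    fin_cases i
    · exact inv_of_mul_head hv
    · show (((FreeGroup.of 0 : FreeGroup (Fin 3)) * FreeGroup.of 0)⁻¹ * v).toWord.head?
        = some ((0 : Fin 3), false)
      have hv' : v.toWord.head? ≠ some ((0 : Fin 3), true) := hv
      rw [mul_inv_rev, mul_assoc]
      apply inv_of_mul_head
      rw [inv_of_mul_head hv']
      simp
    · exact inv_of_mul_head hv

private def gam : FreeGroup (Fin 3) →* FreeGroup (Fin 3) :=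
  FreeGroup.lift (fun i => if i = 0 then (FreeGroup.of 1)⁻¹ * FreeGroup.of 0 else FreeGroup.of i)

private def del : FreeGroup (Fin 3) →* FreeGroup (Fin 3) :=
  FreeGroup.lift (fun i => if i = 0 then FreeGroup.of 1 * FreeGroup.of 0 else FreeGroup.of i)

private lemma gam_injective : Function.Injective gam := by
  have h : del.comp gam = MonoidHom.id _ := by
    ext i
    fin_cases i <;> simp [gam, del]
  intro x y hxy
  have := congrArg del hxy
  simpa [← MonoidHom.comp_apply, h] using this

/-- in `FreeGroup (Fin 3)` with `a = of 0`, `b = of 1`, `c = of 2`, the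
elements `b`, `b⁻¹ab⁻¹a`, `c` freely generate a rank-3 subgroup: the induced
homomorphism from `FreeGroup (Fin 3)` is injective. -/
theorem rank_three_free_subgroup' :
    Function.Injective
      (FreeGroup.lift (fun i : Fin 3 =>
        if i = 0 then FreeGroup.of 1
        else if i = 1 then
          (FreeGroup.of 1)⁻¹ * FreeGroup.of 0 * (FreeGroup.of 1)⁻¹ * FreeGroup.of 0
        else FreeGroup.of 2) :
        FreeGroup (Fin 3) →* FreeGroup (Fin 3)) := by
  have hfac : (FreeGroup.lift (fun i : Fin 3 =>
        if i = 0 then FreeGroup.of 1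
        else if i = 1 then
          (FreeGroup.of 1)⁻¹ * FreeGroup.of 0 * (FreeGroup.of 1)⁻¹ * FreeGroup.of 0
        else FreeGroup.of 2) :
        FreeGroup (Fin 3) →* FreeGroup (Fin 3)) = gam.comp (FreeGroup.lift a0) := by
    ext i
    fin_cases i <;> simp [gam, a0, mul_assoc]
  rw [hfac]
  exact gam_injective.comp f0_injective
end

section
/- The homomorphism FreeGroup (Fin 2) → FreeGroup (Fin 2) determined on the two free generators by g₀ ↦ b, g₁ ↦ (b⁻¹a)² is injective; that is, the elements b and (b⁻¹a)² freely generate a rank-2 subgroup of the free group on a, b. -/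
namespace RankTwoAux

open FreeGroup

variable {α : Type*} [DecidableEq α]

lemma mk_singleton_mul_toWord (x : α × Bool) (w : FreeGroup α) :
    (FreeGroup.mk [x] * w).toWord =
      if w.toWord.head? = some (x.1, !x.2) then w.toWord.tail
      else x :: w.toWord := by
  conv_lhs => rw [← FreeGroup.mk_toWord (x := w), FreeGroup.mul_mk]
  rw [FreeGroup.toWord_mk]
  rcases hL : w.toWord with _ | ⟨hd, tl⟩
  · simp [FreeGroup.reduce]
  · have hred : FreeGroup.reduce (hd :: tl) = hd :: tl := by
      rw [← hL, FreeGroup.reduce_toWord]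
    have lhs : FreeGroup.reduce ([x] ++ hd :: tl) =
        if x.1 = hd.1 ∧ x.2 = !hd.2 then tl else x :: hd :: tl := by
      show FreeGroup.reduce (x :: hd :: tl) = _
      rw [FreeGroup.reduce.cons, hred]
    rw [lhs]
    simp only [List.head?_cons, List.tail_cons]
    obtain ⟨x1, x2⟩ := x
    obtain ⟨h1, h2⟩ := hd
    have hcond : ((x1, x2).1 = (h1, h2).1 ∧ (x1, x2).2 = !(h1, h2).2) ↔
        (some (h1, h2) = some ((x1, x2).1, !(x1, x2).2)) := by
      simp only [Option.some.injEq, Prod.mk.injEq]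
      cases x2 <;> cases h2 <;> simp [eq_comm]
    by_cases h : (x1, x2).1 = (h1, h2).1 ∧ (x1, x2).2 = !(h1, h2).2
    · rw [if_pos h]; exact (if_pos (hcond.mp h)).symm
    · rw [if_neg h]; exact (if_neg (fun hc => h (hcond.mpr hc))).symm

lemma of_mul_toWord (x : α) (w : FreeGroup α) :
    (FreeGroup.of x * w).toWord =
      if w.toWord.head? = some (x, false) then w.toWord.tail
      else (x, true) :: w.toWord := by
  rw [show FreeGroup.of x = FreeGroup.mk [(x, true)] from rfl]
  simpa using mk_singleton_mul_toWord (x, true) w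

lemma inv_of_mul_toWord (x : α) (w : FreeGroup α) :
    ((FreeGroup.of x)⁻¹ * w).toWord =
      if w.toWord.head? = some (x, true) then w.toWord.tail
      else (x, false) :: w.toWord := by
  have : (FreeGroup.of x)⁻¹ = FreeGroup.mk [(x, false)] := by
    rw [show FreeGroup.of x = FreeGroup.mk [(x, true)] from rfl, FreeGroup.inv_mk]
    simp [FreeGroup.invRev]
  rw [this]
  simpa using mk_singleton_mul_toWord (x, false) w

end RankTwoAux

namespace RankTwoAux

lemma head?_cons_of_eq {β : Type*} {L : List β} {u : β} (h : L.head? = some u) :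
    ∃ t, L = u :: t := by
  cases L <;> simp_all

lemma take_two_eq {β : Type*} {L : List β} {u v : β} (h : L.take 2 = [u, v]) :
    ∃ t, L = u :: v :: t := by
  rcases L with _ | ⟨p, _ | ⟨q, t⟩⟩ <;> simp_all

abbrev A : Fin 2 × Bool := ((0 : Fin 2), true)
abbrev A' : Fin 2 × Bool := ((0 : Fin 2), false)
abbrev B : Fin 2 × Bool := ((1 : Fin 2), true)
abbrev B' : Fin 2 × Bool := ((1 : Fin 2), false)

def X0 : Set (FreeGroup (Fin 2)) :=
  {w | w.toWord.head? = some A ∨ w.toWord.head? = some B}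
def Y0 : Set (FreeGroup (Fin 2)) :=
  {w | w.toWord.head? = some B' ∧ w.toWord.take 2 ≠ [B', A]}
def X1 : Set (FreeGroup (Fin 2)) :=
  {w | w.toWord.take 2 = [B', A]}
def Y1 : Set (FreeGroup (Fin 2)) :=
  {w | w.toWord.take 2 = [A', B]}

lemma dX0X1 : Disjoint X0 X1 := by
  rw [Set.disjoint_left]
  intro w h1 h2
  obtain ⟨t, ht⟩ := take_two_eq h2
  rcases h1 with h | h <;> simp_all

lemma dY0Y1 : Disjoint Y0 Y1 := by
  rw [Set.disjoint_left]
  intro w h1 h2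
  obtain ⟨t, ht⟩ := take_two_eq h2
  simp_all [Y0]

lemma dX0Y0 : Disjoint X0 Y0 := by
  rw [Set.disjoint_left]
  intro w h1 h2
  have h2a := h2.1
  rcases h1 with h | h <;> rw [h] at h2a <;> exact absurd h2a (by decide)

lemma dX0Y1 : Disjoint X0 Y1 := by
  rw [Set.disjoint_left]
  intro w h1 h2
  obtain ⟨t, ht⟩ := take_two_eq h2
  rcases h1 with h | h <;> simp_all

lemma dX1Y0 : Disjoint X1 Y0 := by
  rw [Set.disjoint_left]
  intro w h1 h2
  exact h2.2 h1

lemma dX1Y1 : Disjoint X1 Y1 := by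
  rw [Set.disjoint_left]
  intro w h1 h2
  have e1 : w.toWord.take 2 = [B', A] := h1
  have e2 : w.toWord.take 2 = [A', B] := h2
  rw [e1] at e2
  exact absurd e2 (by decide)

lemma stepX0 : ∀ w : FreeGroup (Fin 2), w ∉ Y0 → FreeGroup.of (1 : Fin 2) * w ∈ X0 := by
  intro w hw
  simp only [Y0, Set.mem_setOf_eq, not_and, not_not] at hw
  by_cases h : w.toWord.head? = some B'
  · obtain ⟨t, ht⟩ := take_two_eq (hw h)
    show _ ∨ _
    left
    rw [of_mul_toWord, if_pos h, ht]
    rfl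
  · show _ ∨ _
    right
    rw [of_mul_toWord, if_neg h]
    rfl

lemma stepY0 : ∀ w : FreeGroup (Fin 2), w ∉ X0 → (FreeGroup.of (1 : Fin 2))⁻¹ * w ∈ Y0 := by
  intro w hw
  simp only [X0, Set.mem_setOf_eq, not_or] at hw
  show _ ∧ _
  rw [inv_of_mul_toWord, if_neg hw.2]
  refine ⟨rfl, ?_⟩
  rcases hL : w.toWord with _ | ⟨p, t⟩
  · simp
  · have hp : p ≠ A := by
      intro hc
      exact hw.1 (by rw [hL, hc]; rfl)
    simp [hp]

lemma stepX1 : ∀ w : FreeGroup (Fin 2),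
    w ∉ Y1 → ((FreeGroup.of 1)⁻¹ * FreeGroup.of 0 : FreeGroup (Fin 2)) ^ 2 * w ∈ X1 := by
  intro w hw
  simp only [Y1, Set.mem_setOf_eq] at hw
  have hexp : ((FreeGroup.of 1)⁻¹ * FreeGroup.of 0 : FreeGroup (Fin 2)) ^ 2 * w =
      (FreeGroup.of 1)⁻¹ * (FreeGroup.of 0 * ((FreeGroup.of 1)⁻¹ * (FreeGroup.of 0 * w))) := by
    rw [pow_two]
    simp only [mul_assoc]
  show _ = _
  rw [hexp]
  by_cases h : w.toWord.head? = some A'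
  · obtain ⟨t, ht⟩ := head?_cons_of_eq h
    have hthead : t.head? ≠ some B := by
      intro hc
      obtain ⟨t', rfl⟩ := head?_cons_of_eq hc
      exact hw (by simp [ht])
    have hu1 : (FreeGroup.of 0 * w).toWord = t := by
      rw [of_mul_toWord, if_pos h, ht]
      rfl
    have hu2 : ((FreeGroup.of 1)⁻¹ * (FreeGroup.of 0 * w)).toWord = B' :: t := by
      rw [inv_of_mul_toWord, hu1, if_neg hthead]
    have hu3 : (FreeGroup.of 0 * ((FreeGroup.of 1)⁻¹ * (FreeGroup.of 0 * w))).toWord =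
        A :: B' :: t := by
      rw [of_mul_toWord, hu2, if_neg (by simp)]
    rw [inv_of_mul_toWord, hu3, if_neg (by simp)]
    rfl
  · have hu1 : (FreeGroup.of 0 * w).toWord = A :: w.toWord := by
      rw [of_mul_toWord, if_neg h]
    have hu2 : ((FreeGroup.of 1)⁻¹ * (FreeGroup.of 0 * w)).toWord = B' :: A :: w.toWord := by
      rw [inv_of_mul_toWord, hu1, if_neg (by simp)]
    have hu3 : (FreeGroup.of 0 * ((FreeGroup.of 1)⁻¹ * (FreeGroup.of 0 * w))).toWord =
        A :: B' :: A :: w.toWord := by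
      rw [of_mul_toWord, hu2, if_neg (by simp)]
    rw [inv_of_mul_toWord, hu3, if_neg (by simp)]
    rfl

lemma stepY1 : ∀ w : FreeGroup (Fin 2),
    w ∉ X1 → (((FreeGroup.of 1)⁻¹ * FreeGroup.of 0 : FreeGroup (Fin 2)) ^ 2)⁻¹ * w ∈ Y1 := by
  intro w hw
  simp only [X1, Set.mem_setOf_eq] at hw
  have hexp : (((FreeGroup.of 1)⁻¹ * FreeGroup.of 0 : FreeGroup (Fin 2)) ^ 2)⁻¹ * w =
      (FreeGroup.of 0)⁻¹ * (FreeGroup.of 1 * ((FreeGroup.of 0)⁻¹ * (FreeGroup.of 1 * w))) := by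
    rw [pow_two, mul_inv_rev, mul_inv_rev, inv_inv]
    simp only [mul_assoc]
  show _ = _
  rw [hexp]
  by_cases h : w.toWord.head? = some B'
  · obtain ⟨t, ht⟩ := head?_cons_of_eq h
    have hthead : t.head? ≠ some A := by
      intro hc
      obtain ⟨t', rfl⟩ := head?_cons_of_eq hc
      exact hw (by simp [ht])
    have hu1 : (FreeGroup.of 1 * w).toWord = t := by
      rw [of_mul_toWord, if_pos h, ht]
      rfl
    have hu2 : ((FreeGroup.of 0)⁻¹ * (FreeGroup.of 1 * w)).toWord = A' :: t := by
      rw [inv_of_mul_toWord, hu1, if_neg hthead]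
    have hu3 : (FreeGroup.of 1 * ((FreeGroup.of 0)⁻¹ * (FreeGroup.of 1 * w))).toWord =
        B :: A' :: t := by
      rw [of_mul_toWord, hu2, if_neg (by simp)]
    rw [inv_of_mul_toWord, hu3, if_neg (by simp)]
    rfl
  · have hu1 : (FreeGroup.of 1 * w).toWord = B :: w.toWord := by
      rw [of_mul_toWord, if_neg h]
    have hu2 : ((FreeGroup.of 0)⁻¹ * (FreeGroup.of 1 * w)).toWord = A' :: B :: w.toWord := by
      rw [inv_of_mul_toWord, hu1, if_neg (by simp)]
    have hu3 : (FreeGroup.of 1 * ((FreeGroup.of 0)⁻¹ * (FreeGroup.of 1 * w))).toWord =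
        B :: A' :: B :: w.toWord := by
      rw [of_mul_toWord, hu2, if_neg (by simp)]
    rw [inv_of_mul_toWord, hu3, if_neg (by simp)]
    rfl

lemma X0_nonempty : X0.Nonempty :=
  ⟨FreeGroup.of 0, Or.inl (by rw [FreeGroup.toWord_of]; rfl)⟩

lemma X1_nonempty : X1.Nonempty := by
  refine ⟨(FreeGroup.of 1)⁻¹ * FreeGroup.of 0, ?_⟩
  show _ = _
  rw [inv_of_mul_toWord, FreeGroup.toWord_of, if_neg (by simp)]
  rfl

end RankTwoAux

open RankTwoAux in
/-- in `FreeGroup (Fin 2)` with `a = of 0`, `b = of 1`, the elements `b`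
and `(b⁻¹a)²` freely generate a rank-2 subgroup: the induced homomorphism from
`FreeGroup (Fin 2)` is injective. -/
theorem rank_two_free_subgroup :
    Function.Injective
      (FreeGroup.lift (fun i : Fin 2 =>
        if i = 0 then FreeGroup.of 1
        else ((FreeGroup.of 1)⁻¹ * FreeGroup.of 0) ^ 2) :
        FreeGroup (Fin 2) →* FreeGroup (Fin 2)) := by
  classical
  apply FreeGroup.injective_lift_of_ping_pong _ ![X0, X1] ![Y0, Y1]
  · intro i
    fin_cases i
    · exact X0_nonempty
    · exact X1_nonempty
  · intro i j hij
    fin_cases i <;> fin_cases j <;> simp_all [Function.onFun]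
    · exact dX0X1
    · exact dX0X1.symm
  · intro i j hij
    fin_cases i <;> fin_cases j <;> simp_all [Function.onFun]
    · exact dY0Y1
    · exact dY0Y1.symm
  · intro i j
    fin_cases i <;> fin_cases j <;> simp only [Matrix.cons_val_zero, Matrix.cons_val_one,
      Matrix.head_cons]
    · exact dX0Y0
    · exact dX0Y1
    · exact dX1Y0
    · exact dX1Y1
  · intro i
    fin_cases i <;>
      (intro z hz; rw [Set.mem_smul_set] at hz; obtain ⟨w, hw, rfl⟩ := hz; rw [smul_eq_mul])
    · show FreeGroup.of 1 * w ∈ X0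
      exact stepX0 w hw
    · show ((FreeGroup.of 1)⁻¹ * FreeGroup.of 0) ^ 2 * w ∈ X1
      exact stepX1 w hw
  · intro i
    fin_cases i <;>
      (intro z hz; rw [Set.mem_smul_set] at hz; obtain ⟨w, hw, rfl⟩ := hz;
        rw [Pi.inv_apply, smul_eq_mul])
    · show (FreeGroup.of (1 : Fin 2))⁻¹ * w ∈ Y0
      exact stepY0 w hw
    · show (((FreeGroup.of 1)⁻¹ * FreeGroup.of 0) ^ 2)⁻¹ * w ∈ Y1
      exact stepY1 w hw
end

section
/- Let n ≥ 1, let z be a nontrivial element of FreeGroup (Fin n), and let l be a natural number. Consider F = FreeGroup (Option (Fin n)) with g = of none, and let ι : FreeGroup (Fin n) → F be the embedding sending the i-th generator to of (some i). Then the homomorphism FreeGroup (Fin n ⊕ Fin l) → F determined on generators by inl i ↦ of (some i) and inr j ↦ g^(j+1) · ι(z) · g^(−(j+1)) is injective; that is, the generators x₁,…,xₙ together with the conjugates gⁱ z g⁻ⁱ (1 ≤ i ≤ l) freely generate a free subgroup of rank n + l of the free group on x₁,…,xₙ, g. -/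
set_option linter.unusedSectionVars false
open Pointwise

namespace PingAux
variable {β : Type*} [DecidableEq β]

/-- the "no cancellation" relation between adjacent letters -/
def R : (β × Bool) → (β × Bool) → Prop := fun a b => ¬(a.1 = b.1 ∧ a.2 = !b.2)

lemma R_of_ne {a b : β × Bool} (h : a.1 ≠ b.1) : R a b := fun hc => h hc.1

lemma chain'_reduce (L : List (β × Bool)) : List.IsChain R (FreeGroup.reduce L) := by
  induction L with
  | nil => simp
  | cons x L ih =>
    rw [FreeGroup.reduce.cons]
    cases r : FreeGroup.reduce L with
    | nil => simp
    | cons hd tl =>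
      rw [r] at ih
      by_cases h : x.1 = hd.1 ∧ x.2 = !hd.2
      · simpa [h] using ih.tail
      · simp only [if_neg h, List.isChain_cons_cons]
        exact ⟨h, ih⟩

lemma reduce_eq_self {L : List (β × Bool)} (h : List.IsChain R L) :
    FreeGroup.reduce L = L := by
  induction L with
  | nil => simp
  | cons x L ih =>
    rw [FreeGroup.reduce.cons, ih h.tail]
    cases L with
    | nil => simp
    | cons hd tl =>
      have hR : R x hd := List.isChain_cons_cons.1 h |>.1
      simp only [R] at hR
      simp [hR]

lemma chain'_toWord (x : FreeGroup β) : List.IsChain R x.toWord := by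
  rw [← FreeGroup.reduce_toWord]; exact chain'_reduce _

lemma toWord_mk {L : List (β × Bool)} (h : List.IsChain R L) :
    (FreeGroup.mk L).toWord = L := by
  rw [FreeGroup.toWord_mk, reduce_eq_self h]

end PingAux

namespace TF
open PingAux FreeGroup
variable {β : Type*} [DecidableEq β]

lemma chain'_flatten_replicate {L : List (β × Bool)} (h : List.IsChain R L) (hne : L ≠ [])
    (hcyc : R (L.getLast hne) (L.head hne)) (m : ℕ) :
    List.IsChain R (List.flatten (List.replicate m L)) ∧
      (m ≠ 0 → (List.flatten (List.replicate m L)).head? = L.head?) := by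
  induction m with
  | zero => simp
  | succ m ih =>
    rw [List.replicate_succ, List.flatten_cons]
    constructor
    · refine List.isChain_append.2 ⟨h, ih.1, ?_⟩
      intro x hx y hy
      rcases m with _ | m
      · simp at hy
      · rw [ih.2 (by omega)] at hy
        rw [List.getLast?_eq_getLast hne] at hx
        rw [List.head?_eq_head hne] at hy
        obtain rfl := Option.some_injective _ hx.symm
        obtain rfl := Option.some_injective _ hy.symm
        exact hcyc
    · intro _
      rw [List.head?_append_of_ne_nil _ hne]

lemma mk_flatten_replicate (L : List (β × Bool)) (m : ℕ) :
    FreeGroup.mk (List.flatten (List.replicate m L)) = (FreeGroup.mk L) ^ m := by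
  induction m with
  | zero => simp [FreeGroup.one_eq_mk]
  | succ m ih => rw [List.replicate_succ, List.flatten_cons, ← FreeGroup.mul_mk, ih, pow_succ']

lemma pow_ne_one_aux : ∀ N : ℕ, ∀ z : FreeGroup β, z.toWord.length ≤ N → z ≠ 1 →
    ∀ m : ℕ, m ≠ 0 → z ^ m ≠ 1 := by
  intro N
  induction N with
  | zero =>
    intro z hlen hz
    exact absurd (FreeGroup.toWord_eq_nil_iff.1 (List.length_eq_zero_iff.1 (Nat.le_zero.1 hlen))) hz
  | succ N ih =>
    intro z hlen hz m hm
    have hne : z.toWord ≠ [] := fun h => hz (FreeGroup.toWord_eq_nil_iff.1 h)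
    by_cases hcyc : R (z.toWord.getLast hne) (z.toWord.head hne)
    · intro heq
      have h1 : z ^ m = FreeGroup.mk (List.flatten (List.replicate m z.toWord)) := by
        rw [mk_flatten_replicate, FreeGroup.mk_toWord]
      have h2 := PingAux.toWord_mk (chain'_flatten_replicate (chain'_toWord z) hne hcyc m).1
      rw [heq] at h1
      rw [← h1, FreeGroup.toWord_one] at h2
      have h3 := congrArg List.length h2
      have h4 := List.length_pos_iff.2 hne
      simp only [List.length_nil, List.length_flatten, List.map_replicate,
        List.sum_replicate, smul_eq_mul] at h3
      rcases m with _ | m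
      · exact hm rfl
      · nlinarith
    · have hc : (z.toWord.getLast hne).1 = (z.toWord.head hne).1 ∧
          (z.toWord.getLast hne).2 = !(z.toWord.head hne).2 := not_not.1 hcyc
      set L := z.toWord with hL
      obtain ⟨hd, T, hT⟩ : ∃ hd T, L = hd :: T := List.exists_cons_of_ne_nil hne
      have hTne : T ≠ [] := by
        rintro rfl
        have : L.getLast hne = L.head hne := by simp [hT]
        rw [this] at hc
        simp [← hL, hT] at hc
      obtain ⟨mid, lst, hmid⟩ : ∃ mid lst, T = mid ++ [lst] := by
        rcases List.eq_nil_or_concat T with h | ⟨mid, lst, h⟩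
        · exact absurd h hTne
        · exact ⟨mid, lst, by simpa using h⟩
      have hLdec : L = [hd] ++ mid ++ [lst] := by simp [hT, hmid]
      have hhd : L.head hne = hd := by simp [hT]
      have hlst : L.getLast hne = lst := by
        have h5 : L.getLast? = some lst := by rw [hLdec]; rw [List.getLast?_concat]
        rw [List.getLast?_eq_getLast hne] at h5
        exact Option.some_injective _ h5
      rw [hhd, hlst] at hc
      have hlst2 : lst = (hd.1, !hd.2) := Prod.ext hc.1 hc.2
      -- z = c * w * c⁻¹
      have hzdec : z = FreeGroup.mk [hd] * FreeGroup.mk mid * (FreeGroup.mk [hd])⁻¹ := by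
        conv_lhs => rw [← FreeGroup.mk_toWord (x := z), ← hL, hLdec]
        rw [← FreeGroup.mul_mk, ← FreeGroup.mul_mk]
        congr 1
        rw [FreeGroup.inv_mk]
        congr 1
        simp [FreeGroup.invRev, hlst2]
      have hw : FreeGroup.mk mid ≠ 1 := by
        intro h1
        rw [h1, mul_one, mul_inv_cancel] at hzdec
        exact hz hzdec
      have hmidw : (FreeGroup.mk mid).toWord = mid :=
        PingAux.toWord_mk ((chain'_toWord z).infix ⟨[hd], [lst], by rw [← hLdec, hL]⟩)
      have hmidlen : (FreeGroup.mk mid).toWord.length ≤ N := by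
        rw [hmidw]
        have := congrArg List.length hLdec
        simp at this
        omega
      have := ih _ hmidlen hw m hm
      intro heq
      rw [hzdec, conj_pow, conj_eq_one_iff] at heq
      exact this heq

lemma zpow_ne_one {z : FreeGroup β} (hz : z ≠ 1) {k : ℤ} (hk : k ≠ 0) : z ^ k ≠ 1 := by
  have h := pow_ne_one_aux z.toWord.length z le_rfl hz k.natAbs (by omega)
  intro heq
  apply h
  rcases Int.natAbs_eq k with he | he
  · rw [← zpow_natCast, ← he, heq]
  · rw [← zpow_natCast, ← neg_neg (k.natAbs : ℤ), ← he, zpow_neg, heq, inv_one]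

end TF


namespace PingAux
variable {β : Type*} [DecidableEq β]

/-- word of an integer power of a generator -/
lemma zpow_of_eq_mk (t : β) (m : ℤ) :
    (FreeGroup.of t) ^ m = FreeGroup.mk (List.replicate m.natAbs (t, decide (0 ≤ m))) := by
  have hp : ∀ c : ℕ, (FreeGroup.of t) ^ c = FreeGroup.mk (List.replicate c (t, true)) := by
    intro c
    rw [← FreeGroup.mk_toWord (x := FreeGroup.of t ^ c), FreeGroup.toWord_of_pow]
  rcases le_or_gt 0 m with hm | hm
  · obtain ⟨c, rfl⟩ := Int.eq_ofNat_of_zero_le hm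
    rw [zpow_natCast, hp]
    simp
  · obtain ⟨c, rfl⟩ : ∃ c : ℕ, m = -c := ⟨m.natAbs, by omega⟩
    rw [zpow_neg, zpow_natCast, hp, FreeGroup.inv_mk]
    have : decide (0 ≤ -(c:ℤ)) = false := by
      simp only [decide_eq_false_iff_not, not_le]; exact_mod_cast hm
    rw [this]
    congr 1
    simp [FreeGroup.invRev]

lemma pow_of_eq_mk (t : β) (c : ℕ) :
    (FreeGroup.of t) ^ c = FreeGroup.mk (List.replicate c (t, true)) := by
  rw [← FreeGroup.mk_toWord (x := FreeGroup.of t ^ c), FreeGroup.toWord_of_pow]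

lemma replicate_append_inj {γ : Type*} {x : γ} : ∀ {c c' : ℕ} {a a' : γ} {r r' : List γ},
    a ≠ x → a' ≠ x →
    List.replicate c x ++ a :: r = List.replicate c' x ++ a' :: r' → c = c' := by
  intro c
  induction c with
  | zero =>
    intro c' a a' r r' ha ha' h
    cases c' with
    | zero => rfl
    | succ c' =>
      rw [List.replicate_succ] at h
      simp only [List.replicate_zero, List.nil_append, List.cons_append, List.cons.injEq] at h
      exact absurd h.1 ha
  | succ c ih =>
    intro c' a a' r r' ha ha' h
    cases c' with
    | zero =>
      rw [List.replicate_succ] at h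
      simp only [List.replicate_zero, List.nil_append, List.cons_append, List.cons.injEq] at h
      exact absurd h.1.symm ha'
    | succ c' =>
      rw [List.replicate_succ, List.replicate_succ] at h
      simp only [List.cons_append, List.cons.injEq] at h
      rw [ih ha ha' h.2]

lemma map_toWord {γ : Type*} [DecidableEq γ] {f : β → γ} (hf : Function.Injective f)
    (x : FreeGroup β) :
    (FreeGroup.map f x).toWord = x.toWord.map (fun p => (f p.1, p.2)) := by
  conv_lhs => rw [← FreeGroup.mk_toWord (x := x)]
  rw [FreeGroup.map.mk]
  apply toWord_mk
  rw [List.isChain_map]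
  apply (chain'_toWord x).imp
  intro a b hab hc
  exact hab ⟨hf hc.1, hc.2⟩

end PingAux

section Main

variable (n : ℕ)

/-- The groups in the free product decomposition. -/
def HH : Option ℕ → Type
  | none => FreeGroup (Fin n)
  | some _ => Multiplicative ℤ

instance : (o : Option ℕ) → Group (HH n o)
  | none => inferInstanceAs (Group (FreeGroup (Fin n)))
  | some _ => inferInstanceAs (Group (Multiplicative ℤ))

variable (z : FreeGroup (Fin n))

/-- The homomorphisms into the target free group. -/
def ff : (o : Option ℕ) → HH n o →* FreeGroup (Option (Fin n))
  | none => FreeGroup.map (fun i : Fin n => (some i : Option (Fin n)))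
  | some j =>
      zpowersHom _ (FreeGroup.of (none : Option (Fin n)) ^ ((j : ℤ) + 1) *
        FreeGroup.map (fun i : Fin n => (some i : Option (Fin n))) z *
        FreeGroup.of (none : Option (Fin n)) ^ (-((j : ℤ) + 1)))

/-- counting function for the ping pong sets -/
def cnt : Option ℕ → ℕ
  | none => 0
  | some j => j + 1

lemma cnt_inj : Function.Injective (cnt) := by
  rintro (_ | a) (_ | b) h <;> simp [cnt] at h ⊢ <;> omega

/-- The ping pong sets -/
def XX : Option ℕ → Set (FreeGroup (Option (Fin n))) := fun o =>
  {u | ∃ a rest, u.toWord =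
    List.replicate (cnt o) ((none : Option (Fin n)), true) ++ a :: rest ∧ a.1.isSome}

lemma XX_nonempty (hn : 1 ≤ n) (o : Option ℕ) : (XX n o).Nonempty := by
  refine ⟨FreeGroup.mk (List.replicate (cnt o) ((none : Option (Fin n)), true) ++
    [((some ⟨0, hn⟩ : Option (Fin n)), true)]),
    ⟨((some ⟨0, hn⟩ : Option (Fin n)), true), [], ?_, rfl⟩⟩
  rw [PingAux.toWord_mk]
  apply List.isChain_append.2
  refine ⟨List.isChain_replicate_of_rel _ (by simp [PingAux.R]), by simp, ?_⟩
  intro x hx y hy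
  rw [List.getLast?_replicate] at hx
  simp only [List.head?_cons, Option.mem_def, Option.some.injEq] at hy
  subst hy
  by_cases hc : cnt o = 0
  · simp [hc] at hx
  · simp only [if_neg hc, Option.mem_def, Option.some.injEq] at hx
    subst hx
    exact PingAux.R_of_ne (by simp)

lemma XX_disjoint : Pairwise (Function.onFun Disjoint (XX n)) := by
  intro i j hij
  rw [Function.onFun, Set.disjoint_left]
  rintro u ⟨a, r, hu1, ha⟩ ⟨a', r', hu2, ha'⟩
  refine hij (cnt_inj (PingAux.replicate_append_inj ?_ ?_ (hu1.symm.trans hu2)))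
  · intro hx; rw [hx] at ha; simp at ha
  · intro hx; rw [hx] at ha'; simp at ha'

section PP

open PingAux FreeGroup

lemma some_letters {w : FreeGroup (Fin n)} {q : Option (Fin n) × Bool}
    (hq : q ∈ w.toWord.map (fun p => ((some p.1 : Option (Fin n)), p.2))) : q.1.isSome := by
  obtain ⟨p, _, rfl⟩ := List.mem_map.1 hq
  rfl

lemma XX_pp (hn : 1 ≤ n) (hz : z ≠ 1) :
    Pairwise fun i j => ∀ h : HH n i, h ≠ 1 → ff n z i h • XX n j ⊆ XX n i := by
  have hζ : Function.Injective (fun i : Fin n => (some i : Option (Fin n))) :=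
    fun a b h => Option.some_injective _ h
  intro i j hij hh hh1 y hy
  obtain ⟨u, ⟨a, rest, hu, ha⟩, rfl⟩ := hy
  show ff n z i hh • u ∈ XX n i
  rw [smul_eq_mul]
  have hvchain : List.IsChain R (a :: rest) :=
    (chain'_toWord u).suffix ⟨_, hu.symm⟩
  have hu' : u = FreeGroup.of (none : Option (Fin n)) ^ (cnt j) * FreeGroup.mk (a :: rest) := by
    rw [pow_of_eq_mk, FreeGroup.mul_mk, ← hu, FreeGroup.mk_toWord]
  have hane : a.1 ≠ none := fun hx => by simp [hx] at ha
  cases i with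
  | none =>
    -- here `hh : FreeGroup (Fin n)` and `ff n z none = map some`
    cases j with
    | none => exact absurd rfl hij
    | some jj =>
      have hWne : hh.toWord ≠ [] := fun hnil => hh1 (FreeGroup.toWord_eq_nil_iff.1 hnil)
      obtain ⟨p, pr, hp⟩ := List.exists_cons_of_ne_nil hWne
      set W : List (Option (Fin n) × Bool) :=
        hh.toWord.map (fun p => ((some p.1 : Option (Fin n)), p.2)) with hWdef
      have hWchain : List.IsChain R W := by
        rw [hWdef, List.isChain_map]
        refine (chain'_toWord hh).imp ?_
        intro x y hxy hc
        exact hxy ⟨hζ hc.1, hc.2⟩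
      have key : ff n z none hh * u =
          FreeGroup.mk (W ++ (List.replicate (cnt (some jj)) ((none : Option (Fin n)), true)
            ++ a :: rest)) := by
        show FreeGroup.map _ hh * u = _
        rw [hu', ← FreeGroup.mk_toWord (x := FreeGroup.map _ hh),
          map_toWord hζ (x := (hh : FreeGroup (Fin n))), pow_of_eq_mk, FreeGroup.mul_mk, FreeGroup.mul_mk]
      have hbig : List.IsChain R (W ++ (List.replicate (cnt (some jj))
          ((none : Option (Fin n)), true) ++ a :: rest)) := by
        refine List.isChain_append.2 ⟨hWchain, ?_, ?_⟩
        · rw [← hu]; exact chain'_toWord u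
        · intro x hx y hy
          have hxs : x.1.isSome := some_letters n (List.mem_of_mem_getLast? hx)
          rw [List.head?_append_of_ne_nil _ (by simp [cnt]), List.head?_replicate,
            if_neg (by simp [cnt] : ¬cnt (some jj) = 0)] at hy
          simp only [Option.mem_def, Option.some.injEq] at hy
          subst hy
          exact R_of_ne (by rw [Option.isSome_iff_ne_none] at hxs; simpa using hxs)
      refine ⟨((some p.1 : Option (Fin n)), p.2), pr.map (fun p => ((some p.1 : Option (Fin n)), p.2)) ++
        (List.replicate (cnt (some jj)) ((none : Option (Fin n)), true) ++ a :: rest), ?_, rfl⟩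
      rw [key, toWord_mk hbig, hWdef, hp]
      simp [cnt]
  | some ji =>
    -- `hh : Multiplicative ℤ`
    change Multiplicative ℤ at hh
    set k : ℤ := Multiplicative.toAdd hh with hkdef
    have hk : k ≠ 0 := by
      intro h0
      apply hh1
      rw [← ofAdd_toAdd hh, ← hkdef, h0, ofAdd_zero]
      rfl
    have hzk : z ^ k ≠ 1 := TF.zpow_ne_one hz hk
    set Zk : List (Option (Fin n) × Bool) :=
      (z ^ k).toWord.map (fun p => ((some p.1 : Option (Fin n)), p.2)) with hZkdef
    have hZkne : Zk ≠ [] := by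
      rw [hZkdef]
      simp only [ne_eq, List.map_eq_nil_iff]
      exact fun hnil => hzk (FreeGroup.toWord_eq_nil_iff.1 hnil)
    obtain ⟨q, qr, hq⟩ := List.exists_cons_of_ne_nil hZkne
    have hZkchain : List.IsChain R Zk := by
      rw [hZkdef, List.isChain_map]
      refine (chain'_toWord (z ^ k)).imp ?_
      intro x y hxy hc
      exact hxy ⟨hζ hc.1, hc.2⟩
    set m : ℤ := -((ji : ℤ) + 1) + (cnt j : ℤ) with hmdef
    have hm : m ≠ 0 := by
      intro h0
      rw [hmdef] at h0
      have hceq : cnt (some ji) = cnt j := by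
        show ji + 1 = cnt j
        omega
      exact hij (cnt_inj hceq)
    have hff : ff n z (some ji) hh =
        FreeGroup.of (none : Option (Fin n)) ^ ((ji : ℤ) + 1) *
          FreeGroup.map (fun i : Fin n => (some i : Option (Fin n))) (z ^ k) *
          FreeGroup.of (none : Option (Fin n)) ^ (-((ji : ℤ) + 1)) := by
      show zpowersHom _ _ hh = _
      rw [zpowersHom_apply, ← hkdef, zpow_neg, conj_zpow, map_zpow, ← zpow_neg]
    have key : ff n z (some ji) hh * u =
        FreeGroup.mk (List.replicate (ji + 1) ((none : Option (Fin n)), true) ++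
          (Zk ++ (List.replicate m.natAbs ((none : Option (Fin n)), decide (0 ≤ m)) ++
            a :: rest))) := by
      rw [hff, hu', mul_assoc, mul_assoc, ← mul_assoc
        (FreeGroup.of (none : Option (Fin n)) ^ (-((ji : ℤ) + 1)))]
      rw [show (FreeGroup.of (none : Option (Fin n)) ^ (-((ji : ℤ) + 1)) *
          FreeGroup.of (none : Option (Fin n)) ^ (cnt j)) =
          FreeGroup.of (none : Option (Fin n)) ^ m by
        rw [hmdef, zpow_add, zpow_natCast]]
      rw [show FreeGroup.of (none : Option (Fin n)) ^ ((ji : ℤ) + 1) =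
          FreeGroup.of (none : Option (Fin n)) ^ (ji + 1) by
        rw [← zpow_natCast]; norm_num]
      rw [pow_of_eq_mk, zpow_of_eq_mk,
        ← FreeGroup.mk_toWord (x := FreeGroup.map _ (z ^ k)), map_toWord hζ, ← hZkdef,
        FreeGroup.mul_mk, FreeGroup.mul_mk, FreeGroup.mul_mk]
    have hbig : List.IsChain R (List.replicate (ji + 1) ((none : Option (Fin n)), true) ++
        (Zk ++ (List.replicate m.natAbs ((none : Option (Fin n)), decide (0 ≤ m)) ++
          a :: rest))) := by
      refine List.isChain_append.2 ⟨List.isChain_replicate_of_rel _ (by simp [R]), ?_, ?_⟩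
      · refine List.isChain_append.2 ⟨hZkchain, ?_, ?_⟩
        · refine List.isChain_append.2
            ⟨List.isChain_replicate_of_rel _ (by simp [R]), hvchain, ?_⟩
          · intro x hx y hy
            rw [List.getLast?_replicate] at hx
            by_cases hc : m.natAbs = 0
            · simp [hc] at hx
            · simp only [if_neg hc, Option.mem_def, Option.some.injEq] at hx
              subst hx
              simp only [List.head?_cons, Option.mem_def, Option.some.injEq] at hy
              subst hy
              exact fun hc' => hane hc'.1.symm
        · intro x hx y hy
          rw [hZkdef] at hx
          have hxs : x.1.isSome := some_letters n (List.mem_of_mem_getLast? hx)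
          have hmne : m.natAbs ≠ 0 := fun h0 => hm (by omega)
          rw [List.head?_append_of_ne_nil _
            (by simpa using hmne), List.head?_replicate, if_neg hmne] at hy
          simp only [Option.mem_def, Option.some.injEq] at hy
          subst hy
          exact R_of_ne (by rw [Option.isSome_iff_ne_none] at hxs; simpa using hxs)
      · intro x hx y hy
        rw [List.getLast?_replicate, if_neg (Nat.succ_ne_zero ji)] at hx
        simp only [Option.mem_def, Option.some.injEq] at hx
        subst hx
        rw [List.head?_append_of_ne_nil _ hZkne, hq, List.head?_cons] at hy
        simp only [Option.mem_def, Option.some.injEq] at hy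
        subst hy
        have hqZk : q ∈ Zk := hq ▸ List.mem_cons_self
        rw [hZkdef] at hqZk
        have := some_letters n hqZk
        exact fun hc' => by rw [← hc'.1] at this; simp at this
    refine ⟨q, qr ++ (List.replicate m.natAbs ((none : Option (Fin n)), decide (0 ≤ m)) ++
      a :: rest), ?_, by
        have hqZk : q ∈ Zk := hq ▸ List.mem_cons_self
        rw [hZkdef] at hqZk
        exact some_letters n hqZk⟩
    rw [key, toWord_mk hbig, hq]
    simp [cnt]

end PP

end Main

/-- let `n ≥ 1`, let `z ≠ 1` in `FreeGroup (Fin n)` and `l : ℕ`. In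
`F = FreeGroup (Option (Fin n))` with `g = of none` and the embedding
`ι : FreeGroup (Fin n) → F` induced by `some`, the generators `of (some i)` together with
the conjugates `gʲ⁺¹ (ι z) g⁻⁽ʲ⁺¹⁾` for `0 ≤ j < l` freely generate a free subgroup of
rank `n + l`: the induced homomorphism from `FreeGroup (Fin n ⊕ Fin l)` is injective. -/
theorem free_subgroup_of_rank_add (n : ℕ) (hn : 1 ≤ n)
    (z : FreeGroup (Fin n)) (hz : z ≠ 1) (l : ℕ) :
    Function.Injective
      (FreeGroup.lift (fun x : Fin n ⊕ Fin l =>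
        match x with
        | Sum.inl i => FreeGroup.of (some i)
        | Sum.inr j =>
            FreeGroup.of (none : Option (Fin n)) ^ ((j : ℤ) + 1) *
              FreeGroup.map (fun i : Fin n => (some i : Option (Fin n))) z *
              FreeGroup.of (none : Option (Fin n)) ^ (-((j : ℤ) + 1))) :
        FreeGroup (Fin n ⊕ Fin l) →* FreeGroup (Option (Fin n))) := by
  classical
  set Φ : FreeGroup (Fin n ⊕ Fin l) →* Monoid.CoprodI (HH n) :=
    FreeGroup.lift (fun x : Fin n ⊕ Fin l =>
      match x with
      | Sum.inl i => Monoid.CoprodI.of (M := HH n) (i := none) (FreeGroup.of i)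
      | Sum.inr j =>
          Monoid.CoprodI.of (M := HH n) (i := some (j : ℕ)) (Multiplicative.ofAdd (1 : ℤ))) with hΦ
  set Ψ : Monoid.CoprodI (HH n) →* FreeGroup (Fin n ⊕ Fin l) :=
    Monoid.CoprodI.lift (fun o => match o with
      | none => FreeGroup.map (Sum.inl : Fin n → Fin n ⊕ Fin l)
      | some j =>
          zpowersHom _ (if h : j < l then FreeGroup.of (Sum.inr (⟨j, h⟩ : Fin l)) else 1)) with hΨ
  have hid : Ψ.comp Φ = MonoidHom.id _ := by
    apply FreeGroup.ext_hom
    rintro (i | j)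
    · simp only [hΦ, hΨ, MonoidHom.comp_apply, FreeGroup.lift_apply_of, Monoid.CoprodI.lift_of,
        MonoidHom.id_apply]
      exact FreeGroup.map.of
    · simp only [hΦ, hΨ, MonoidHom.comp_apply, FreeGroup.lift_apply_of, Monoid.CoprodI.lift_of,
        MonoidHom.id_apply, j.isLt, dif_pos, Fin.eta]
      erw [Monoid.CoprodI.lift_of]
      dsimp only
      rw [dif_pos j.isLt]
      show (zpowersHom (FreeGroup (Fin n ⊕ Fin l))) (FreeGroup.of (Sum.inr j))
          (Multiplicative.ofAdd (1 : ℤ)) = FreeGroup.of (Sum.inr j)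
      rw [zpowersHom_apply, toAdd_ofAdd, zpow_one]
  have hinj1 : Function.Injective Φ := by
    intro a b hab
    have h2 : (Ψ.comp Φ) a = (Ψ.comp Φ) b := by simp [MonoidHom.comp_apply, hab]
    rwa [hid, MonoidHom.id_apply, MonoidHom.id_apply] at h2
  have hcard : (3 : Cardinal) ≤ Cardinal.mk (Option ℕ) := by
    have h1 : ((3 : ℕ) : Cardinal) < Cardinal.aleph0 := Cardinal.nat_lt_aleph0 3
    have h2 : Cardinal.aleph0 ≤ Cardinal.mk (Option ℕ) := Cardinal.infinite_iff.mp inferInstance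
    exact le_trans (le_of_lt (by exact_mod_cast h1)) h2
  have hinj2 : Function.Injective (Monoid.CoprodI.lift (ff n z)) :=
    Monoid.CoprodI.lift_injective_of_ping_pong (ff n z) (Or.inl hcard) (XX n)
      (XX_nonempty n hn) (XX_disjoint n) (XX_pp n z hn hz)
  have hmain : (FreeGroup.lift (fun x : Fin n ⊕ Fin l =>
      match x with
      | Sum.inl i => FreeGroup.of (some i)
      | Sum.inr j =>
          FreeGroup.of (none : Option (Fin n)) ^ ((j : ℤ) + 1) *
            FreeGroup.map (fun i : Fin n => (some i : Option (Fin n))) z *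
            FreeGroup.of (none : Option (Fin n)) ^ (-((j : ℤ) + 1))) :
      FreeGroup (Fin n ⊕ Fin l) →* FreeGroup (Option (Fin n))) =
      (Monoid.CoprodI.lift (ff n z)).comp Φ := by
    apply FreeGroup.ext_hom
    rintro (i | j)
    · simp only [hΦ, MonoidHom.comp_apply, FreeGroup.lift_apply_of, Monoid.CoprodI.lift_of, ff]
      exact FreeGroup.map.of.symm
    · simp only [hΦ, MonoidHom.comp_apply, FreeGroup.lift_apply_of, Monoid.CoprodI.lift_of, ff]
      show _ = (zpowersHom (FreeGroup (Option (Fin n))))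
          (FreeGroup.of (none : Option (Fin n)) ^ ((j : ℤ) + 1) *
            FreeGroup.map (fun i : Fin n => (some i : Option (Fin n))) z *
            FreeGroup.of (none : Option (Fin n)) ^ (-((j : ℤ) + 1)))
          (Multiplicative.ofAdd (1 : ℤ))
      rw [zpowersHom_apply, toAdd_ofAdd, zpow_one]
  rw [hmain]
  exact hinj2.comp hinj1
end

section
/- Let k, r be natural numbers and let X, Y be k × k matrices over ℂ such that the number of indices i for which the i-th row of Y is nonzero is at most r. Then the determinant of the matrix X + t·Y over the polynomial ring ℂ[t] (i.e., of the matrix whose (i,j) entry is the polynomial X i j + t · Y i j) is a polynomial of degree at most r. -/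
set_option maxHeartbeats 1000000


open Polynomial

/-- if `X, Y` are `k × k` complex matrices and at most `r` rows of `Y` are
nonzero, then `det (X + t·Y)`, a polynomial in `t`, has degree at most `r`. -/
theorem det_add_X_smul_degree_le (k r : ℕ) (X Y : Matrix (Fin k) (Fin k) ℂ)
    (hY : {i : Fin k | Y i ≠ 0}.ncard ≤ r) :
    (Matrix.det (fun i j => C (X i j) + Polynomial.X * C (Y i j))).degree ≤ (r : WithBot ℕ) := by
  classical
  set f : Fin k → ℕ := fun i => if Y i ≠ 0 then 1 else 0 with hf
  have hsum : (∑ i, f i) ≤ r := by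
    have h1 : (∑ i, f i) = (Finset.univ.filter fun i => Y i ≠ 0).card := by
      rw [Finset.card_filter]
      exact Finset.sum_congr rfl fun i _ => by simp only [hf]; congr
    have h2 : {i : Fin k | Y i ≠ 0}.ncard = (Finset.univ.filter fun i => Y i ≠ 0).card := by
      rw [Set.ncard_eq_toFinset_card']
      congr 1
      ext i
      simp
    omega
  rw [Matrix.det_apply (M := fun i j => C (X i j) + Polynomial.X * C (Y i j))]
  refine (Polynomial.degree_sum_le _ _).trans ?_
  refine Finset.sup_le fun σ _ => ?_
  have hs : ((Equiv.Perm.sign σ) • ∏ i, (C (X (σ i) i) + Polynomial.X * C (Y (σ i) i))).degree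
      = (∏ i, (C (X (σ i) i) + Polynomial.X * C (Y (σ i) i))).degree := by
    rcases Int.units_eq_one_or (Equiv.Perm.sign σ) with h | h <;>
      simp [h, Units.smul_def, Polynomial.degree_neg]
  rw [hs]
  refine le_trans (Polynomial.degree_prod_le _ _) ?_
  have hterm : ∀ i : Fin k,
      (C (X (σ i) i) + Polynomial.X * C (Y (σ i) i)).degree ≤ (f (σ i) : WithBot ℕ) := by
    intro i
    by_cases h : Y (σ i) = 0
    · simp [hf, h, Polynomial.degree_C_le]
    · refine le_trans (Polynomial.degree_add_le _ _) ?_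
      simp only [hf, h, if_pos, ne_eq, not_false_iff, Nat.cast_one]
      refine max_le (le_trans Polynomial.degree_C_le (by norm_num)) ?_
      refine le_trans (Polynomial.degree_mul_le _ _) ?_
      calc Polynomial.X.degree + (C (Y (σ i) i)).degree ≤ 1 + 0 := by
            exact add_le_add Polynomial.degree_X_le Polynomial.degree_C_le
        _ = 1 := by norm_num
  calc (∑ i, (C (X (σ i) i) + Polynomial.X * C (Y (σ i) i)).degree)
      ≤ ∑ i, (f (σ i) : WithBot ℕ) := Finset.sum_le_sum (f := fun i => (C (X (σ i) i) + Polynomial.X * C (Y (σ i) i)).degree) fun i _ => hterm i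
    _ = ((∑ i, f (σ i) : ℕ) : WithBot ℕ) := by push_cast; rfl
    _ = ((∑ i, f i : ℕ) : WithBot ℕ) := by
        rw [Equiv.sum_comp σ f]
    _ ≤ (r : WithBot ℕ) := by exact_mod_cast hsum
end
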